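/- arXiv:2003.09537 — 12 statements merged into one kernel-verified Lean document; each statement's English description precedes it below -/
import Mathlib

section
/- For every join query hypergraph G = (V, E) with |V| = n, every N ≥ 1 and every Δ with 1 ≤ Δ ≤ n, we have CvNum(G, N, Δ) ≤ PrjBnd(G, N, n − Δ + 1). -/
/-- The join output of a join query instance: tuples `t : V → ℕ` whose restriction to
every hyperedge `e ∈ E` belongs to the relation `R e`. -/
def JoinOutput {V : Type*} (E : Finset (Finset V))
    (R : (e : Finset V) → Finset ({v // v ∈ e} → ℕ)) : Set (V → ℕ) :=
  {t | ∀ e ∈ E, (fun v : {v // v ∈ e} => t v.1) ∈ R e}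

/-- The minimum cardinality (in `ℕ∞`) of a join cover of `J` at radius `Δ - 1`. -/
noncomputable def minCoverCard {V : Type*} [Fintype V] (Δ : ℕ) (J : Set (V → ℕ)) : ℕ∞ :=
  ⨅ (C : Set (V → ℕ)) (_ : C ⊆ J ∧ ∀ t ∈ J, ∃ c ∈ C, hammingDist t c < Δ), C.encard

/-- `CvNum G N Δ`: the supremum over all families of relations of size at most `N`
of the minimum cardinality of a join cover of the join output. -/
noncomputable def CvNum {V : Type*} [Fintype V] (E : Finset (Finset V))
    (N Δ : ℕ) : ℕ∞ :=
  ⨆ (R : (e : Finset V) → Finset ({v // v ∈ e} → ℕ)) (_ : ∀ e ∈ E, (R e).card ≤ N),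
    minCoverCard Δ (JoinOutput E R)

/-- The projected join on `S`: tuples `t : S → ℕ` whose restriction to `e ∩ S` lies in
the projection `π_{e ∩ S}(R e)` for every `e ∈ E`. -/
def ProjJoin {V : Type*} (E : Finset (Finset V))
    (R : (e : Finset V) → Finset ({v // v ∈ e} → ℕ)) (S : Finset V) :
    Set ({v // v ∈ S} → ℕ) :=
  {t | ∀ e ∈ E, ∃ r ∈ R e, ∀ (v : V) (hve : v ∈ e) (hvS : v ∈ S), t ⟨v, hvS⟩ = r ⟨v, hve⟩}

/-- `PrjBnd G N s`: the minimum over all `S ⊆ V` with `|S| = s` of the supremum over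
all families of relations of size at most `N` of the cardinality of the projected
join on `S`. -/
noncomputable def PrjBnd {V : Type*} [Fintype V] (E : Finset (Finset V))
    (N s : ℕ) : ℕ∞ :=
  ⨅ (S : Finset V) (_ : S.card = s),
    ⨆ (R : (e : Finset V) → Finset ({v // v ∈ e} → ℕ)) (_ : ∀ e ∈ E, (R e).card ≤ N),
      (ProjJoin E R S).encard

/-- For every join query hypergraph `G = (V, E)` with `|V| = n`,
every `N ≥ 1` and every `1 ≤ Δ ≤ n`, `CvNum(G, N, Δ) ≤ PrjBnd(G, N, n - Δ + 1)`. -/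
theorem cvNum_le_prjBnd {V : Type*} [Fintype V] [DecidableEq V]
    (E : Finset (Finset V)) (hE : ∀ v : V, ∃ e ∈ E, v ∈ e)
    (n N Δ : ℕ) (hn : Fintype.card V = n)
    (hN : 1 ≤ N) (hΔ1 : 1 ≤ Δ) (hΔn : Δ ≤ n) :
    CvNum E N Δ ≤ PrjBnd E N (n - Δ + 1) := by
  classical
  refine le_iInf₂ fun S hS => ?_
  refine iSup₂_le fun R hR => ?_
  refine le_trans ?_ (le_iSup₂_of_le R hR le_rfl)
  set J := JoinOutput E R with hJ
  set proj : (V → ℕ) → ({v // v ∈ S} → ℕ) := fun t v => t v.1 with hproj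
  set g : ({v // v ∈ S} → ℕ) → (V → ℕ) := Function.invFunOn proj J with hg
  set C : Set (V → ℕ) := g '' (proj '' J) with hC
  have hCsub : C ⊆ J := by
    rintro _ ⟨p, ⟨t, ht, rfl⟩, rfl⟩
    exact Function.invFunOn_mem ⟨t, ht, rfl⟩
  have hcover : ∀ t ∈ J, ∃ c ∈ C, hammingDist t c < Δ := by
    intro t ht
    refine ⟨g (proj t), ⟨proj t, ⟨t, ht, rfl⟩, rfl⟩, ?_⟩
    have hpeq : proj (g (proj t)) = proj t := Function.invFunOn_eq ⟨t, ht, rfl⟩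
    have hagree : ∀ v ∈ S, t v = g (proj t) v := by
      intro v hv
      have := congrFun hpeq ⟨v, hv⟩
      simpa [hproj] using this.symm
    have hsub : ({i | t i ≠ g (proj t) i} : Finset V) ⊆ Sᶜ := by
      intro v hv
      simp only [Finset.mem_filter, Finset.mem_compl]
      intro hvS
      have hne : t v ≠ g (proj t) v := by simpa using hv
      exact hne (hagree v hvS)
    have hcard : hammingDist t (g (proj t)) ≤ Sᶜ.card :=
      Finset.card_le_card hsub
    have : Sᶜ.card = Δ - 1 := by
      rw [Finset.card_compl, hn, hS]; omega
    omega
  calc minCoverCard Δ J ≤ C.encard := by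
        refine iInf₂_le C ⟨hCsub, hcover⟩
    _ ≤ (proj '' J).encard := Set.encard_image_le _ _
    _ ≤ (ProjJoin E R S).encard := by
        refine Set.encard_mono ?_
        rintro _ ⟨t, ht, rfl⟩
        intro e he
        exact ⟨fun v => t v.1, ht e he, fun v hve hvS => rfl⟩
end

section
/- Let n, k be natural numbers with 1 ≤ k ≤ n, and let q : Fin n → ℕ be a strictly increasing sequence of prime numbers. Set M = ∏_{i < k} q i (the product of the k smallest of the primes). If m and m' are natural numbers with m < M, m' < M and m ≠ m', then the number of indices i ∈ Fin n with m ≡ m' (mod q i) is at most k − 1; equivalently, the Chinese Remainder Theorem encodings (m mod q i)_{i ∈ Fin n} and (m' mod q i)_{i ∈ Fin n} have Hamming distance at least n − k + 1. -/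
/-- Key lemma: if a positive `d` is divisible by `q i` for all `i` in a set `S`
of size `≥ k`, then `d ≥ ∏_{i<k} q i`. -/
lemma crt_aux (n k : ℕ) (hkn : k ≤ n) (q : Fin n → ℕ) (hmono : StrictMono q)
    (hprime : ∀ i, (q i).Prime) (S : Finset (Fin n)) (hS : k ≤ S.card)
    (d : ℕ) (hd : 0 < d) (hdvd : ∀ i ∈ S, q i ∣ d) :
    (∏ i : Fin k, q (Fin.castLE hkn i)) ≤ d := by
  obtain ⟨T, hTS, hTcard⟩ := Finset.exists_subset_card_eq hS
  -- the image of q over T : set of primes dividing d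
  have hinj : Set.InjOn q T := fun a _ b _ h => hmono.injective h
  have himdvd : (∏ p ∈ T.image q, p) ∣ d := by
    apply Finset.prod_primes_dvd
    · intro p hp
      obtain ⟨i, _, rfl⟩ := Finset.mem_image.mp hp
      exact (hprime i).prime
    · intro p hp
      obtain ⟨i, hi, rfl⟩ := Finset.mem_image.mp hp
      exact hdvd i (hTS hi)
  have himg : (∏ p ∈ T.image q, p) = ∏ i ∈ T, q i := Finset.prod_image hinj
  -- the enumeration of T
  have himage : Finset.univ.image (T.orderEmbOfFin hTcard) = T := by
    ext x
    simp only [Finset.mem_image, Finset.mem_univ, true_and]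
    constructor
    · rintro ⟨j, rfl⟩; exact T.orderEmbOfFin_mem hTcard j
    · intro hx
      have : x ∈ Set.range (T.orderEmbOfFin hTcard) := by
        rw [Finset.range_orderEmbOfFin]; exact hx
      obtain ⟨j, rfl⟩ := this
      exact ⟨j, rfl⟩
  have hTeq : ∏ i ∈ T, q i = ∏ j : Fin k, q (T.orderEmbOfFin hTcard j) := by
    have h2 := Finset.prod_image (s := (Finset.univ : Finset (Fin k)))
      (f := q) (g := fun j => T.orderEmbOfFin hTcard j)
      (fun a _ b _ h => (T.orderEmbOfFin hTcard).injective h)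
    rw [himage] at h2
    rw [← h2]
  have hval : ∀ j : ℕ, ∀ h : j < k, j ≤ (T.orderEmbOfFin hTcard ⟨j, h⟩ : ℕ) := by
    intro j
    induction j with
    | zero => intro h; exact Nat.zero_le _
    | succ j ih =>
      intro h
      have hj : j < k := Nat.lt_of_succ_lt h
      have hlt : T.orderEmbOfFin hTcard ⟨j, hj⟩ < T.orderEmbOfFin hTcard ⟨j + 1, h⟩ :=
        (T.orderEmbOfFin hTcard).strictMono (by simp [Fin.lt_def])
      have h1 := ih hj
      have h2 : (T.orderEmbOfFin hTcard ⟨j, hj⟩ : ℕ) < (T.orderEmbOfFin hTcard ⟨j + 1, h⟩ : ℕ) :=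
        hlt
      omega
  have hle : (∏ i : Fin k, q (Fin.castLE hkn i)) ≤ ∏ i ∈ T, q i := by
    rw [hTeq]
    apply Finset.prod_le_prod (fun _ _ => Nat.zero_le _)
    intro i _
    apply hmono.monotone
    have := hval i.1 i.2
    simpa [Fin.le_def] using this
  calc (∏ i : Fin k, q (Fin.castLE hkn i)) ≤ ∏ i ∈ T, q i := hle
    _ = ∏ p ∈ T.image q, p := himg.symm
    _ ≤ d := Nat.le_of_dvd hd himdvd

/-- CRT codes. Let `q : Fin n → ℕ` be a strictly increasing sequence of
primes, `1 ≤ k ≤ n` and `M = ∏_{i < k} q i`. If `m ≠ m'` are both `< M`, then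
`m ≡ m' (mod q i)` for at most `k - 1` indices `i`, i.e. the CRT encodings of `m`
and `m'` have Hamming distance at least `n - k + 1`. -/
theorem crtCode_distance (n k : ℕ) (hk1 : 1 ≤ k) (hkn : k ≤ n)
    (q : Fin n → ℕ) (hmono : StrictMono q) (hprime : ∀ i, (q i).Prime)
    (M : ℕ) (hM : M = ∏ i : Fin k, q (Fin.castLE hkn i))
    (m m' : ℕ) (hm : m < M) (hm' : m' < M) (hne : m ≠ m') :
    (Finset.univ.filter fun i : Fin n => m % q i = m' % q i).card ≤ k - 1 ∧
      n - k + 1 ≤ hammingDist (fun i : Fin n => m % q i) (fun i : Fin n => m' % q i) := by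
  -- WLOG reduce to m' < m via symmetry in the set
  set S := Finset.univ.filter fun i : Fin n => m % q i = m' % q i with hSdef
  have key : S.card ≤ k - 1 := by
    by_contra hcontra
    push_neg at hcontra
    have hScard : k ≤ S.card := by omega
    -- let a < b be the two values
    rcases Nat.lt_or_ge m m' with hlt | hge
    · have := crt_aux n k hkn q hmono hprime S hScard (m' - m) (by omega) ?_
      · omega
      · intro i hi
        have hmod : m % q i = m' % q i := (Finset.mem_filter.mp hi).2
        exact (Nat.modEq_iff_dvd' hlt.le).mp (show Nat.ModEq (q i) m m' from hmod)
    · have hlt : m' < m := by omega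
      have := crt_aux n k hkn q hmono hprime S hScard (m - m') (by omega) ?_
      · omega
      · intro i hi
        have hmod : m % q i = m' % q i := (Finset.mem_filter.mp hi).2
        exact (Nat.modEq_iff_dvd' hlt.le).mp (show Nat.ModEq (q i) m' m from hmod.symm)
  refine ⟨key, ?_⟩
  have hsplit : S.card + hammingDist (fun i : Fin n => m % q i) (fun i : Fin n => m' % q i) = n := by
    rw [hammingDist]
    have := Finset.card_filter_add_card_filter_not
      (s := (Finset.univ : Finset (Fin n)))
      (p := fun i : Fin n => m % q i = m' % q i)
    simpa using this
  omega
end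

section
/- Let G be a finite simple graph on vertex set V. Every extreme point y of the fractional matching polytope P(G) is half-integral, i.e., y v ∈ {0, 1/2, 1} for every v ∈ V. -/
/-- The fractional matching polytope of a simple graph `G`: the set of `y : V → ℝ`
with `0 ≤ y v ≤ 1` for all `v` and `y u + y v ≤ 1` whenever `u` and `v` are adjacent. -/
def fracMatchingPolytope {V : Type*} (G : SimpleGraph V) : Set (V → ℝ) :=
  {y | (∀ v, 0 ≤ y v) ∧ (∀ v, y v ≤ 1) ∧ ∀ u v, G.Adj u v → y u + y v ≤ 1}

/-- every extreme point of the fractional matching polytope of a finite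
simple graph is half-integral. -/
theorem fracMatching_extremePoint_halfIntegral {V : Type*} [Fintype V]
    (G : SimpleGraph V) (y : V → ℝ)
    (hy : y ∈ Set.extremePoints ℝ (fracMatchingPolytope G)) :
    ∀ v, y v = 0 ∨ y v = 1 / 2 ∨ y v = 1 := by
  classical
  obtain ⟨hyP, hext⟩ := hy
  obtain ⟨h0, h1, hE⟩ := hyP
  by_contra hbad
  push_neg at hbad
  obtain ⟨w, hw0, hwh, hw1⟩ := hbad
  set χ : V → ℝ := fun v =>
    if y v ∈ Set.Ioo (0:ℝ) (1/2) then -1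
    else if y v ∈ Set.Ioo (1/2:ℝ) 1 then 1 else 0 with hχdef
  have tri : ∀ v, (χ v = 0 ∧ (y v = 0 ∨ y v = 1/2 ∨ y v = 1)) ∨
      (χ v = -1 ∧ 0 < y v ∧ y v < 1/2) ∨ (χ v = 1 ∧ 1/2 < y v ∧ y v < 1) := by
    intro v
    by_cases hlo : y v ∈ Set.Ioo (0:ℝ) (1/2)
    · exact Or.inr (Or.inl ⟨by simp only [hχdef]; rw [if_pos hlo], hlo.1, hlo.2⟩)
    · by_cases hhi : y v ∈ Set.Ioo (1/2:ℝ) 1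
      · exact Or.inr (Or.inr ⟨by simp only [hχdef]; rw [if_neg hlo, if_pos hhi], hhi.1, hhi.2⟩)
      · refine Or.inl ⟨by simp only [hχdef]; rw [if_neg hlo, if_neg hhi], ?_⟩
        simp only [Set.mem_Ioo, not_and, not_lt] at hlo hhi
        have hv0 := h0 v
        have hv1 := h1 v
        rcases lt_trichotomy (y v) (1/2) with h | h | h
        · left
          rcases eq_or_lt_of_le hv0 with h' | h'
          · exact h'.symm
          · exact absurd (hlo h') (not_le.2 h)
        · exact Or.inr (Or.inl h)
        · right; right
          rcases eq_or_lt_of_le hv1 with h' | h'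
          · exact h'
          · exact absurd (hhi h) (not_le.2 h')
  have hχ1 : ∀ v, |χ v| ≤ 1 := by
    intro v; rcases tri v with ⟨h, _⟩ | ⟨h, _⟩ | ⟨h, _⟩ <;> rw [h] <;> norm_num
  have key : ∀ u v, y u + y v = 1 → χ u + χ v = 0 := by
    intro u v ht
    rcases tri u with ⟨hu, hu'⟩ | ⟨hu, hu1, hu2⟩ | ⟨hu, hu1, hu2⟩ <;>
      rcases tri v with ⟨hv, hv'⟩ | ⟨hv, hv1, hv2⟩ | ⟨hv, hv1, hv2⟩ <;>
      rw [hu, hv] <;>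
      (try norm_num) <;>
      (try rcases hu' with h | h | h) <;>
      (try rcases hv' with h' | h' | h') <;>
      linarith
  -- δ : slack in the box constraints, s : slack in the edge constraints
  set δ : V → ℝ := fun v => if χ v = 0 then 1 else min (y v) (1 - y v) with hδdef
  set s : V × V → ℝ := fun p =>
    if y p.1 + y p.2 < 1 then (1 - y p.1 - y p.2) / 2 else 1 with hsdef
  have hne : (Finset.univ : Finset V).Nonempty := ⟨w, Finset.mem_univ w⟩
  have hne2 : (Finset.univ : Finset (V × V)).Nonempty := ⟨(w, w), Finset.mem_univ _⟩
  set ε : ℝ := min (Finset.univ.inf' hne δ) (Finset.univ.inf' hne2 s) with hεdef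
  have hεpos : 0 < ε := by
    apply lt_min
    · rw [Finset.lt_inf'_iff]
      intro v _
      rcases tri v with ⟨h, _⟩ | ⟨h, h1', h2'⟩ | ⟨h, h1', h2'⟩
      · simp only [hδdef]; rw [if_pos h]; norm_num
      · simp only [hδdef]; rw [if_neg (by rw [h]; norm_num)]
        exact lt_min h1' (by linarith)
      · simp only [hδdef]; rw [if_neg (by rw [h]; norm_num)]
        exact lt_min (by linarith) (by linarith)
    · rw [Finset.lt_inf'_iff]
      intro p _
      by_cases hp : y p.1 + y p.2 < 1
      · simp only [hsdef]; rw [if_pos hp]; linarith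
      · simp only [hsdef]; rw [if_neg hp]; norm_num
  have hεδ : ∀ v, ε ≤ δ v := fun v =>
    le_trans (min_le_left _ _) (Finset.inf'_le _ (Finset.mem_univ v))
  have hεs : ∀ p : V × V, ε ≤ s p := fun p =>
    le_trans (min_le_right _ _) (Finset.inf'_le _ (Finset.mem_univ p))
  have hmem : ∀ c : ℝ, |c| ≤ ε → (fun v => y v + c * χ v) ∈ fracMatchingPolytope G := by
    intro c hc
    have hb : ∀ v, |c * χ v| ≤ ε := by
      intro v
      calc |c * χ v| = |c| * |χ v| := abs_mul _ _
        _ ≤ ε * 1 := mul_le_mul hc (hχ1 v) (abs_nonneg _) (le_trans (abs_nonneg c) hc)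
        _ = ε := mul_one ε
    refine ⟨?_, ?_, ?_⟩
    · intro v
      rcases tri v with ⟨h, _⟩ | ⟨h, _, _⟩ | ⟨h, _, _⟩
      · simp only [h, mul_zero, add_zero]; exact h0 v
      all_goals
        have hδv : δ v = min (y v) (1 - y v) := by
          simp only [hδdef]; rw [if_neg (by rw [h]; norm_num)]
      all_goals
        have h2 : |c * χ v| ≤ y v :=
          le_trans (hb v) (le_trans (hεδ v) (by rw [hδv]; exact min_le_left _ _))
      all_goals have h3 := (abs_le.1 h2).1
      all_goals simp only []; linarith
    · intro v
      rcases tri v with ⟨h, _⟩ | ⟨h, _, _⟩ | ⟨h, _, _⟩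
      · simp only [h, mul_zero, add_zero]; exact h1 v
      all_goals
        have hδv : δ v = min (y v) (1 - y v) := by
          simp only [hδdef]; rw [if_neg (by rw [h]; norm_num)]
      all_goals
        have h2 : |c * χ v| ≤ 1 - y v :=
          le_trans (hb v) (le_trans (hεδ v) (by rw [hδv]; exact min_le_right _ _))
      all_goals have h3 := (abs_le.1 h2).2
      all_goals simp only []; linarith
    · intro u v hadj
      simp only []
      by_cases hlt : y u + y v < 1
      · have hsv : s (u, v) = (1 - y u - y v) / 2 := by
          simp only [hsdef]; rw [if_pos hlt]
        have hε2 : ε ≤ (1 - y u - y v) / 2 := hsv ▸ hεs (u, v)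
        have h2 := (abs_le.1 (hb u)).2
        have h3 := (abs_le.1 (hb v)).2
        linarith
      · have ht : y u + y v = 1 := le_antisymm (hE u v hadj) (not_lt.1 hlt)
        have hk := key u v ht
        have : c * χ u + c * χ v = 0 := by rw [← mul_add, hk, mul_zero]
        linarith
  have hmem1 := hmem ε (by rw [abs_of_pos hεpos])
  have hmem2 := hmem (-ε) (by rw [abs_neg, abs_of_pos hεpos])
  have hop : y ∈ openSegment ℝ (fun v => y v + ε * χ v) (fun v => y v + (-ε) * χ v) := by
    refine ⟨1/2, 1/2, by norm_num, by norm_num, by norm_num, ?_⟩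
    funext v
    simp only [Pi.add_apply, Pi.smul_apply, smul_eq_mul]
    ring
  have hfix := hext hmem1 hmem2 hop
  have heq := congrFun hfix w
  replace heq : y w + ε * χ w = y w := heq
  have hzero : ε * χ w = 0 := by linarith
  rcases tri w with ⟨h, h'⟩ | ⟨h, _, _⟩ | ⟨h, _, _⟩
  · rcases h' with h' | h' | h' <;> [exact hw0 h'; exact hwh h'; exact hw1 h']
  · rw [h] at hzero; nlinarith
  · rw [h] at hzero; nlinarith
end

section
/- Let G be a finite simple graph on vertex set V. There exists y ∈ P(G) with y v ∈ {0, 1/2, 1} for every v ∈ V such that ∑_{v ∈ V} y v equals the maximum of ∑_{v ∈ V} z v over all z ∈ P(G); i.e., the fractional matching linear program max ∑_v y_v over P(G) has a half-integral optimal solution. -/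
private noncomputable def badSet {V : Type*} [Fintype V] (z : V → ℝ) : Finset V := by
  classical exact Finset.univ.filter (fun v => ¬ (z v = 0 ∨ z v = 1/2 ∨ z v = 1))

private lemma mem_badSet {V : Type*} [Fintype V] {z : V → ℝ} {v : V} :
    v ∈ badSet z ↔ ¬ (z v = 0 ∨ z v = 1/2 ∨ z v = 1) := by
  classical
  simp [badSet]

private lemma sum_shift {V : Type*} [Fintype V] (A C : Finset V) (hd : Disjoint A C)
    (δ : ℝ) (s : V → ℝ) (hA : ∀ v ∈ A, s v = δ) (hC : ∀ v ∈ C, s v = -δ)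
    (hz : ∀ v, v ∉ A → v ∉ C → s v = 0) :
    ∑ v, s v = (A.card : ℝ) * δ - (C.card : ℝ) * δ := by
  classical
  have h1 : ∑ v ∈ A ∪ C, s v = ∑ v, s v :=
    Finset.sum_subset (Finset.subset_univ _) (fun x _ hx =>
      hz x (fun h => hx (Finset.mem_union_left _ h)) (fun h => hx (Finset.mem_union_right _ h)))
  rw [← h1, Finset.sum_union hd, Finset.sum_congr rfl hA, Finset.sum_congr rfl hC,
    Finset.sum_const, Finset.sum_const, nsmul_eq_mul, nsmul_eq_mul]
  ring

private lemma reduce {V : Type*} [Fintype V] (G : SimpleGraph V) {z : V → ℝ}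
    (hz : z ∈ fracMatchingPolytope G) (hB : (badSet z).Nonempty) :
    ∃ z' ∈ fracMatchingPolytope G, ∑ v, z v ≤ ∑ v, z' v ∧
      (badSet z').card < (badSet z).card := by
  classical
  obtain ⟨h0, h1, he⟩ := hz
  set B := badSet z with hBdef
  have hgood : ∀ v, v ∉ B → z v = 0 ∨ z v = 1/2 ∨ z v = 1 := fun v hv => by
    by_contra h; exact hv (mem_badSet.2 h)
  have hbad : ∀ v ∈ B, z v ≠ 0 ∧ z v ≠ 1/2 ∧ z v ≠ 1 := fun v hv => by
    have h := mem_badSet.1 hv; push_neg at h; exact h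
  set A := B.filter (fun v => 1/2 < z v) with hAdef
  set C := B.filter (fun v => ¬ 1/2 < z v) with hCdef
  have hAC : Disjoint A C := by
    rw [Finset.disjoint_left]
    intro v hv hv'
    exact (Finset.mem_filter.1 hv').2 (Finset.mem_filter.1 hv).2
  have hCv : ∀ v ∈ C, z v < 1/2 := fun v hv => by
    have h2 := (Finset.mem_filter.1 hv).2
    have h3 := (hbad v (Finset.mem_filter.1 hv).1).2.1
    push_neg at h2
    exact lt_of_le_of_ne h2 h3
  have hAv : ∀ v ∈ A, 1/2 < z v := fun v hv => (Finset.mem_filter.1 hv).2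
  have hmemA : ∀ v ∈ B, 1/2 < z v → v ∈ A := fun v hv h => Finset.mem_filter.2 ⟨hv, h⟩
  have hmemC : ∀ v ∈ B, ¬ 1/2 < z v → v ∈ C := fun v hv h => Finset.mem_filter.2 ⟨hv, h⟩
  have hABC : ∀ v, v ∉ A → v ∉ C → v ∉ B := by
    intro v hvA hvC hvB
    by_cases h : 1/2 < z v
    · exact hvA (hmemA v hvB h)
    · exact hvC (hmemC v hvB h)
  by_cases hcase : C.card ≤ A.card
  · -- shift the big ones up, the small ones down
    have hδ : ∃ δ : ℝ, 0 < δ ∧ (∀ v ∈ A, δ ≤ 1 - z v) ∧ (∀ v ∈ C, δ ≤ z v) ∧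
        ∃ v₀ ∈ B, (1/2 < z v₀ → δ = 1 - z v₀) ∧ (¬ 1/2 < z v₀ → δ = z v₀) := by
      obtain ⟨v₀, hv₀B, hv₀⟩ :=
        Finset.exists_mem_eq_inf' hB (fun v => if 1/2 < z v then 1 - z v else z v)
      refine ⟨Finset.inf' B hB (fun v => if 1/2 < z v then 1 - z v else z v),
        ?_, ?_, ?_, v₀, hv₀B, ?_, ?_⟩
      · rw [Finset.lt_inf'_iff]
        intro v hv
        obtain ⟨hv0, hvh, hv1⟩ := hbad v hv
        by_cases h : 1/2 < z v
        · simp only [if_pos h]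
          have : z v < 1 := lt_of_le_of_ne (h1 v) hv1
          linarith
        · simp only [if_neg h]
          exact lt_of_le_of_ne (h0 v) (Ne.symm hv0)
      · intro v hv
        have h' := Finset.inf'_le (fun v => if 1/2 < z v then 1 - z v else z v)
          (Finset.mem_filter.1 hv).1
        simpa only [if_pos (hAv v hv)] using h'
      · intro v hv
        have h' := Finset.inf'_le (fun v => if 1/2 < z v then 1 - z v else z v)
          (Finset.mem_filter.1 hv).1
        simpa only [if_neg (Finset.mem_filter.1 hv).2] using h'
      · intro h
        rw [hv₀]
        simp only [if_pos h]
      · intro h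
        rw [hv₀]
        simp only [if_neg h]
    obtain ⟨δ, hδpos, hδA, hδC, v₀, hv₀B, hv₀lt, hv₀nlt⟩ := hδ
    set z' : V → ℝ := fun v =>
      if v ∈ B then (if 1/2 < z v then z v + δ else z v - δ) else z v with hz'def
    have hz'g : ∀ v, v ∉ B → z' v = z v := fun v hv => by
      rw [hz'def]; simp only [if_neg hv]
    have hz'A : ∀ v ∈ A, z' v = z v + δ := fun v hv => by
      rw [hz'def]
      simp only [if_pos (Finset.mem_filter.1 hv).1, if_pos (hAv v hv)]
    have hz'C : ∀ v ∈ C, z' v = z v - δ := fun v hv => by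
      rw [hz'def]
      simp only [if_pos (Finset.mem_filter.1 hv).1, if_neg (Finset.mem_filter.1 hv).2]
    have hb0 : ∀ v, 0 ≤ z' v := by
      intro v
      by_cases hv : v ∈ B
      · by_cases hlt : 1/2 < z v
        · rw [hz'A v (hmemA v hv hlt)]; have := h0 v; linarith
        · rw [hz'C v (hmemC v hv hlt)]
          have := hδC v (hmemC v hv hlt); linarith
      · rw [hz'g v hv]; exact h0 v
    have hb1 : ∀ v, z' v ≤ 1 := by
      intro v
      by_cases hv : v ∈ B
      · by_cases hlt : 1/2 < z v
        · rw [hz'A v (hmemA v hv hlt)]; have := hδA v (hmemA v hv hlt); linarith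
        · rw [hz'C v (hmemC v hv hlt)]; have := h1 v; linarith
      · rw [hz'g v hv]; exact h1 v
    have hle' : ∀ v, ¬ 1/2 < z v → z' v ≤ z v := by
      intro v hlt
      by_cases hv : v ∈ B
      · rw [hz'C v (hmemC v hv hlt)]; linarith
      · rw [hz'g v hv]
    have key1 : ∀ u v, G.Adj u v → 1/2 < z u → z' u + z' v ≤ 1 := by
      intro u v huv hu
      have hsum := he u v huv
      have hvlt : z v < 1/2 := by linarith
      have hvnlt : ¬ 1/2 < z v := by linarith
      by_cases hub : u ∈ B
      · have hz'u : z' u = z u + δ := hz'A u (hmemA u hub hu)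
        have hδu : δ ≤ 1 - z u := hδA u (hmemA u hub hu)
        by_cases hvb : v ∈ B
        · have hz'v : z' v = z v - δ := hz'C v (hmemC v hvb hvnlt)
          rw [hz'u, hz'v]; linarith
        · have hv0 : z v = 0 := by
            rcases hgood v hvb with h | h | h
            · exact h
            · linarith
            · linarith
          rw [hz'u, hz'g v hvb, hv0]; linarith
      · have hu1 : z u = 1 := by
          rcases hgood u hub with h | h | h
          · linarith
          · linarith
          · exact h
        have hv0 : z v = 0 := le_antisymm (by linarith) (h0 v)
        have hvb : v ∉ B := fun hvb => (hbad v hvb).1 hv0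
        rw [hz'g u hub, hz'g v hvb, hu1, hv0]; norm_num
    have key : ∀ u v, G.Adj u v → z' u + z' v ≤ 1 := by
      intro u v huv
      by_cases hu : 1/2 < z u
      · exact key1 u v huv hu
      · by_cases hv : 1/2 < z v
        · have := key1 v u huv.symm hv; linarith
        · have := hle' u hu; have := hle' v hv; have := he u v huv; linarith
    have hsum2 : ∑ v, z v ≤ ∑ v, z' v := by
      have h2 : ∑ v, (z' v - z v) = (A.card : ℝ) * δ - (C.card : ℝ) * δ := by
        refine sum_shift A C hAC δ _ ?_ ?_ ?_
        · intro v hv; rw [hz'A v hv]; ring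
        · intro v hv; rw [hz'C v hv]; ring
        · intro v hvA hvC; rw [hz'g v (hABC v hvA hvC)]; ring
      rw [Finset.sum_sub_distrib] at h2
      have hc : (C.card : ℝ) ≤ (A.card : ℝ) := Nat.cast_le.2 hcase
      nlinarith
    have hv₀good : z' v₀ = 0 ∨ z' v₀ = 1 := by
      by_cases hlt : 1/2 < z v₀
      · right
        rw [hz'A v₀ (hmemA v₀ hv₀B hlt), hv₀lt hlt]; ring
      · left
        rw [hz'C v₀ (hmemC v₀ hv₀B hlt), hv₀nlt hlt]; ring
    have hsub : badSet z' ⊆ B.erase v₀ := by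
      intro v hv
      have hvbad := mem_badSet.1 hv
      rw [Finset.mem_erase]
      constructor
      · rintro rfl
        rcases hv₀good with h | h
        · exact hvbad (Or.inl h)
        · exact hvbad (Or.inr (Or.inr h))
      · by_contra hvB
        exact hvbad (by rw [hz'g v hvB]; exact hgood v hvB)
    exact ⟨z', ⟨hb0, hb1, key⟩, hsum2,
      lt_of_le_of_lt (Finset.card_le_card hsub) (Finset.card_erase_lt_of_mem hv₀B)⟩
  · -- shift everything towards 1/2
    have hδ : ∃ δ : ℝ, 0 < δ ∧ (∀ v ∈ A, δ ≤ z v - 1/2) ∧ (∀ v ∈ C, δ ≤ 1/2 - z v) ∧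
        ∃ v₀ ∈ B, (1/2 < z v₀ → δ = z v₀ - 1/2) ∧ (¬ 1/2 < z v₀ → δ = 1/2 - z v₀) := by
      obtain ⟨v₀, hv₀B, hv₀⟩ :=
        Finset.exists_mem_eq_inf' hB (fun v => if 1/2 < z v then z v - 1/2 else 1/2 - z v)
      refine ⟨Finset.inf' B hB (fun v => if 1/2 < z v then z v - 1/2 else 1/2 - z v),
        ?_, ?_, ?_, v₀, hv₀B, ?_, ?_⟩
      · rw [Finset.lt_inf'_iff]
        intro v hv
        obtain ⟨hv0, hvh, hv1⟩ := hbad v hv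
        by_cases h : 1/2 < z v
        · simp only [if_pos h]; linarith
        · simp only [if_neg h]
          push_neg at h
          have : z v < 1/2 := lt_of_le_of_ne h hvh
          linarith
      · intro v hv
        have h' := Finset.inf'_le (fun v => if 1/2 < z v then z v - 1/2 else 1/2 - z v)
          (Finset.mem_filter.1 hv).1
        simpa only [if_pos (hAv v hv)] using h'
      · intro v hv
        have h' := Finset.inf'_le (fun v => if 1/2 < z v then z v - 1/2 else 1/2 - z v)
          (Finset.mem_filter.1 hv).1
        simpa only [if_neg (Finset.mem_filter.1 hv).2] using h'
      · intro h
        rw [hv₀]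
        simp only [if_pos h]
      · intro h
        rw [hv₀]
        simp only [if_neg h]
    obtain ⟨δ, hδpos, hδA, hδC, v₀, hv₀B, hv₀lt, hv₀nlt⟩ := hδ
    set z' : V → ℝ := fun v =>
      if v ∈ B then (if 1/2 < z v then z v - δ else z v + δ) else z v with hz'def
    have hz'g : ∀ v, v ∉ B → z' v = z v := fun v hv => by
      rw [hz'def]; simp only [if_neg hv]
    have hz'A : ∀ v ∈ A, z' v = z v - δ := fun v hv => by
      rw [hz'def]
      simp only [if_pos (Finset.mem_filter.1 hv).1, if_pos (hAv v hv)]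
    have hz'C : ∀ v ∈ C, z' v = z v + δ := fun v hv => by
      rw [hz'def]
      simp only [if_pos (Finset.mem_filter.1 hv).1, if_neg (Finset.mem_filter.1 hv).2]
    have hb0 : ∀ v, 0 ≤ z' v := by
      intro v
      by_cases hv : v ∈ B
      · by_cases hlt : 1/2 < z v
        · rw [hz'A v (hmemA v hv hlt)]; have := hδA v (hmemA v hv hlt); linarith
        · rw [hz'C v (hmemC v hv hlt)]; have := h0 v; linarith
      · rw [hz'g v hv]; exact h0 v
    have hb1 : ∀ v, z' v ≤ 1 := by
      intro v
      by_cases hv : v ∈ B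
      · by_cases hlt : 1/2 < z v
        · rw [hz'A v (hmemA v hv hlt)]; have := h1 v; linarith
        · rw [hz'C v (hmemC v hv hlt)]
          have := hδC v (hmemC v hv hlt); linarith
      · rw [hz'g v hv]; exact h1 v
    have hle' : ∀ v, ¬ 1/2 < z v → z' v ≤ 1/2 := by
      intro v hlt
      by_cases hv : v ∈ B
      · rw [hz'C v (hmemC v hv hlt)]
        have := hδC v (hmemC v hv hlt); linarith
      · rw [hz'g v hv]; push_neg at hlt; exact hlt
    have key1 : ∀ u v, G.Adj u v → 1/2 < z u → z' u + z' v ≤ 1 := by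
      intro u v huv hu
      have hsum := he u v huv
      have hvlt : z v < 1/2 := by linarith
      have hvnlt : ¬ 1/2 < z v := by linarith
      by_cases hub : u ∈ B
      · have hz'u : z' u = z u - δ := hz'A u (hmemA u hub hu)
        by_cases hvb : v ∈ B
        · have hz'v : z' v = z v + δ := hz'C v (hmemC v hvb hvnlt)
          rw [hz'u, hz'v]; linarith
        · have hv0 : z v = 0 := by
            rcases hgood v hvb with h | h | h
            · exact h
            · linarith
            · linarith
          rw [hz'u, hz'g v hvb, hv0]
          have := h1 u; linarith
      · have hu1 : z u = 1 := by
          rcases hgood u hub with h | h | h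
          · linarith
          · linarith
          · exact h
        have hv0 : z v = 0 := le_antisymm (by linarith) (h0 v)
        have hvb : v ∉ B := fun hvb => (hbad v hvb).1 hv0
        rw [hz'g u hub, hz'g v hvb, hu1, hv0]; norm_num
    have key : ∀ u v, G.Adj u v → z' u + z' v ≤ 1 := by
      intro u v huv
      by_cases hu : 1/2 < z u
      · exact key1 u v huv hu
      · by_cases hv : 1/2 < z v
        · have := key1 v u huv.symm hv; linarith
        · have := hle' u hu; have := hle' v hv; linarith
    have hsum2 : ∑ v, z v ≤ ∑ v, z' v := by
      have h2 : ∑ v, (z' v - z v) = (C.card : ℝ) * δ - (A.card : ℝ) * δ := by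
        refine sum_shift C A hAC.symm δ _ ?_ ?_ ?_
        · intro v hv; rw [hz'C v hv]; ring
        · intro v hv; rw [hz'A v hv]; ring
        · intro v hvC hvA; rw [hz'g v (hABC v hvA hvC)]; ring
      rw [Finset.sum_sub_distrib] at h2
      push_neg at hcase
      have hc : (A.card : ℝ) ≤ (C.card : ℝ) := Nat.cast_le.2 hcase.le
      nlinarith
    have hv₀good : z' v₀ = 1/2 := by
      by_cases hlt : 1/2 < z v₀
      · rw [hz'A v₀ (hmemA v₀ hv₀B hlt), hv₀lt hlt]; ring
      · rw [hz'C v₀ (hmemC v₀ hv₀B hlt), hv₀nlt hlt]; ring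
    have hsub : badSet z' ⊆ B.erase v₀ := by
      intro v hv
      have hvbad := mem_badSet.1 hv
      rw [Finset.mem_erase]
      constructor
      · rintro rfl
        exact hvbad (Or.inr (Or.inl hv₀good))
      · by_contra hvB
        exact hvbad (by rw [hz'g v hvB]; exact hgood v hvB)
    exact ⟨z', ⟨hb0, hb1, key⟩, hsum2,
      lt_of_le_of_lt (Finset.card_le_card hsub) (Finset.card_erase_lt_of_mem hv₀B)⟩

private lemma round_aux {V : Type*} [Fintype V] (G : SimpleGraph V) :
    ∀ (n : ℕ) (z : V → ℝ), z ∈ fracMatchingPolytope G → (badSet z).card ≤ n →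
      ∃ y ∈ fracMatchingPolytope G,
        (∀ v, y v = 0 ∨ y v = 1/2 ∨ y v = 1) ∧ ∑ v, z v ≤ ∑ v, y v := by
  intro n
  induction n with
  | zero =>
    intro z hz hc
    refine ⟨z, hz, fun v => ?_, le_refl _⟩
    by_contra h
    have hv : v ∈ badSet z := mem_badSet.2 h
    have := Finset.card_pos.2 ⟨v, hv⟩
    omega
  | succ n ih =>
    intro z hz hc
    by_cases hB : (badSet z).Nonempty
    · obtain ⟨z', hz', hsum, hlt⟩ := reduce G hz hB
      obtain ⟨y, hy, hhalf, hsum'⟩ := ih z' hz' (by omega)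
      exact ⟨y, hy, hhalf, le_trans hsum hsum'⟩
    · refine ⟨z, hz, fun v => ?_, le_refl _⟩
      by_contra h
      exact hB ⟨v, mem_badSet.2 h⟩

/-- the fractional matching linear program `max ∑ v, y v` over the
fractional matching polytope of a finite simple graph has a half-integral optimal
solution. -/
theorem fracMatching_halfIntegral_optimal {V : Type*} [Fintype V] (G : SimpleGraph V) :
    ∃ y ∈ fracMatchingPolytope G, (∀ v, y v = 0 ∨ y v = 1 / 2 ∨ y v = 1) ∧
      ∀ z ∈ fracMatchingPolytope G, ∑ v, z v ≤ ∑ v, y v := by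
  classical
  set S : Finset (V → ℝ) :=
    (Finset.univ : Finset (V → Fin 3)).image (fun f v => ((f v : ℕ) : ℝ) / 2) with hSdef
  set S' : Finset (V → ℝ) := S.filter (fun y => y ∈ fracMatchingPolytope G) with hS'def
  have h0S : (fun _ : V => (0 : ℝ)) ∈ S' := by
    refine Finset.mem_filter.2 ⟨?_, ?_⟩
    · exact Finset.mem_image.2 ⟨fun _ => (0 : Fin 3), Finset.mem_univ _, by
        funext v; norm_num⟩
    · exact ⟨fun v => le_refl 0, fun v => by norm_num, fun u v _ => by norm_num⟩
  obtain ⟨y, hyS', hmax⟩ := S'.exists_max_image (fun y => ∑ v, y v) ⟨_, h0S⟩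
  have hyS : y ∈ S := (Finset.mem_filter.1 hyS').1
  have hyP : y ∈ fracMatchingPolytope G := (Finset.mem_filter.1 hyS').2
  obtain ⟨f, -, hf⟩ := Finset.mem_image.1 hyS
  refine ⟨y, hyP, ?_, ?_⟩
  · intro v
    have hk : (f v : ℕ) = 0 ∨ (f v : ℕ) = 1 ∨ (f v : ℕ) = 2 := by
      have := (f v).isLt; omega
    have hyv : ((f v : ℕ) : ℝ) / 2 = y v := congrFun hf v
    rcases hk with h | h | h <;> rw [← hyv, h] <;> norm_num
  · intro z hz
    obtain ⟨y', hy'P, hy'half, hle⟩ := round_aux G (badSet z).card z hz le_rfl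
    have hy'S : y' ∈ S' := by
      refine Finset.mem_filter.2 ⟨?_, hy'P⟩
      refine Finset.mem_image.2 ⟨fun v => if y' v = 0 then (0 : Fin 3)
        else if y' v = 1/2 then 1 else 2, Finset.mem_univ _, ?_⟩
      funext v
      rcases hy'half v with h | h | h <;>
        norm_num [h, Fin.val_one, Fin.val_two]
    exact le_trans hle (hmax y' hy'S)
end

section
/- Let G be a finite simple graph on vertex set V and let y ∈ P(G) be half-integral and maximize ∑_{v ∈ V} y v over P(G). Then there exists an injective map f from the set Z = {v ∈ V : y v = 0} to the set O = {u ∈ V : y u = 1} such that for every v ∈ Z, the vertex v is adjacent to f v in G. In other words, every vertex with value 0 can be uniquely matched along an edge of G to a distinct vertex with value 1. -/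
/-- if `y` is a half-integral optimal solution of the fractional matching
LP on a finite simple graph `G`, then there is an injection from the vertices of value
`0` to the vertices of value `1` matching each `0`-vertex to an adjacent `1`-vertex. -/
theorem fracMatching_zero_matched_to_one {V : Type*} [Fintype V]
    (G : SimpleGraph V) (y : V → ℝ)
    (hy : y ∈ fracMatchingPolytope G)
    (hhalf : ∀ v, y v = 0 ∨ y v = 1 / 2 ∨ y v = 1)
    (hopt : ∀ z ∈ fracMatchingPolytope G, ∑ v, z v ≤ ∑ v, y v) :
    ∃ f : {v : V // y v = 0} → {u : V // y u = 1},
      Function.Injective f ∧ ∀ v, G.Adj v.1 (f v).1 := by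
  classical
  obtain ⟨hy0, hy1, hyadj⟩ := hy
  set t : {v : V // y v = 0} → Finset {u : V // y u = 1} :=
    fun v => Finset.univ.filter fun u => G.Adj v.1 u.1 with ht
  have hhall : ∀ s : Finset {v : V // y v = 0}, s.card ≤ (s.biUnion t).card := by
    intro s
    by_contra hlt
    push_neg at hlt
    set S : Finset V := s.image Subtype.val with hS
    set T : Finset V := (s.biUnion t).image Subtype.val with hT
    have hScard : S.card = s.card := Finset.card_image_of_injective _ Subtype.val_injective
    have hTcard : T.card = (s.biUnion t).card :=
      Finset.card_image_of_injective _ Subtype.val_injective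
    have hSmem : ∀ v ∈ S, y v = 0 := by
      intro v hv
      obtain ⟨a, _, rfl⟩ := Finset.mem_image.mp hv
      exact a.2
    have hTmem : ∀ v ∈ T, y v = 1 := by
      intro v hv
      obtain ⟨a, _, rfl⟩ := Finset.mem_image.mp hv
      exact a.2
    have hST : Disjoint S T := by
      rw [Finset.disjoint_left]
      intro v hvS hvT
      have h0 := hSmem v hvS
      have h1 := hTmem v hvT
      linarith
    have hadjT : ∀ u ∈ S, ∀ v, G.Adj u v → y v = 1 → v ∈ T := by
      intro u hu v hadj hv1
      obtain ⟨a, ha, rfl⟩ := Finset.mem_image.mp hu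
      refine Finset.mem_image.mpr ⟨⟨v, hv1⟩, ?_, rfl⟩
      exact Finset.mem_biUnion.mpr ⟨a, ha,
        Finset.mem_filter.mpr ⟨Finset.mem_univ _, hadj⟩⟩
    set z : V → ℝ := fun v => if v ∈ S ∪ T then 1/2 else y v with hz
    -- helper: if u is modified and v not, then the edge constraint holds
    have hmix : ∀ u v, G.Adj u v → u ∈ S ∪ T → v ∉ S ∪ T → (1:ℝ)/2 + y v ≤ 1 := by
      intro u v hadj hu hv
      rcases Finset.mem_union.mp hu with huS | huT
      · rcases hhalf v with h | h | h
        · linarith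
        · linarith
        · exact absurd (Finset.mem_union_right _ (hadjT u huS v hadj h)) hv
      · have h1 := hTmem u huT
        have h2 := hyadj u v hadj
        linarith
    have hzmem : z ∈ fracMatchingPolytope G := by
      refine ⟨?_, ?_, ?_⟩
      · intro v; simp only [hz]; split
        · norm_num
        · exact hy0 v
      · intro v; simp only [hz]; split
        · norm_num
        · exact hy1 v
      · intro u v hadj
        simp only [hz]
        by_cases hu : u ∈ S ∪ T <;> by_cases hv : v ∈ S ∪ T <;>
          simp only [hu, hv, if_pos, if_neg, if_true, if_false]
        · norm_num
        · exact hmix u v hadj hu hv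
        · have := hmix v u hadj.symm hv hu
          linarith
        · exact hyadj u v hadj
    have hsum : ∑ v, z v = ∑ v, y v + ((S.card : ℝ) - T.card) / 2 := by
      have h1 : ∑ v, (z v - y v) = ∑ v ∈ S ∪ T, (z v - y v) := by
        refine (Finset.sum_subset (Finset.subset_univ _) ?_).symm
        intro v _ hv
        simp only [hz, if_neg hv]
        ring
      have h2 : ∑ v ∈ S ∪ T, (z v - y v) = ((S.card : ℝ) - T.card) / 2 := by
        rw [Finset.sum_union hST]
        have hSsum : ∑ v ∈ S, (z v - y v) = (S.card : ℝ) * (1/2) := by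
          rw [Finset.sum_congr rfl fun v hv => ?_, Finset.sum_const, nsmul_eq_mul]
          simp only [hz, if_pos (Finset.mem_union_left _ hv), hSmem v hv]
          ring
        have hTsum : ∑ v ∈ T, (z v - y v) = (T.card : ℝ) * (-(1/2)) := by
          rw [Finset.sum_congr rfl fun v hv => ?_, Finset.sum_const, nsmul_eq_mul]
          simp only [hz, if_pos (Finset.mem_union_right _ hv), hTmem v hv]
          ring
        rw [hSsum, hTsum]; ring
      have := h1.trans h2
      rw [Finset.sum_sub_distrib] at this
      linarith
    have hle := hopt z hzmem
    have hcard : (T.card : ℝ) < S.card := by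
      rw [hScard, hTcard]
      exact_mod_cast hlt
    rw [hsum] at hle
    linarith
  obtain ⟨f, hinj, hf⟩ := (Finset.all_card_le_biUnion_card_iff_exists_injective t).mp hhall
  refine ⟨f, hinj, fun v => ?_⟩
  have := hf v
  rw [ht] at this
  simpa using (Finset.mem_filter.mp this).2
end

section
/- Let G be a finite simple graph on vertex set V and let y ∈ P(G) be half-integral and maximize ∑_{v ∈ V} y v over P(G). Let A = {v ∈ V : y v = 1/2} and let G[A] be the induced subgraph of G on A. Then the maximum of ∑_{v ∈ A} z v over all z ∈ P(G[A]) equals |A| / 2; that is, assigning 1/2 to every vertex of A is an optimal solution of the fractional matching linear program on G[A]. -/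
open scoped Classical

/-- if `y` is a half-integral optimal solution of the fractional matching
LP on a finite simple graph `G` and `A = {v | y v = 1/2}`, then the optimum of the
fractional matching LP on the induced subgraph `G[A]` equals `|A| / 2`. -/
theorem fracMatching_half_vertices_optimal {V : Type*} [Fintype V]
    (G : SimpleGraph V) (y : V → ℝ)
    (hy : y ∈ fracMatchingPolytope G)
    (hhalf : ∀ v, y v = 0 ∨ y v = 1 / 2 ∨ y v = 1)
    (hopt : ∀ z ∈ fracMatchingPolytope G, ∑ v, z v ≤ ∑ v, y v)
    (A : Set V) (hA : A = {v | y v = 1 / 2}) :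
    IsGreatest ((fun z : ↥A → ℝ => ∑ v, z v) '' fracMatchingPolytope (G.induce A))
      ((A.ncard : ℝ) / 2) := by
  have hyA : ∀ v ∈ A, y v = 1 / 2 := by
    intro v hv; rw [hA] at hv; exact hv
  have hmemiff : ∀ x : V, x ∈ A.toFinset ↔ x ∈ A := fun x => Set.mem_toFinset
  have hcard : (A.ncard : ℝ) = (A.toFinset.card : ℝ) := by
    rw [Set.ncard_eq_toFinset_card']
  -- sum of y over A
  have hsumyA : ∑ v ∈ A.toFinset, y v = (A.ncard : ℝ) / 2 := by
    rw [Finset.sum_congr rfl (fun v hv => hyA v (Set.mem_toFinset.mp hv)),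
      Finset.sum_const, nsmul_eq_mul, hcard]
    ring
  constructor
  · -- the constant 1/2 function is in the polytope and achieves the value
    refine ⟨fun _ => 1 / 2, ⟨fun v => by norm_num, fun v => by norm_num,
      fun u v _ => by norm_num⟩, ?_⟩
    show (∑ _v : ↥A, (1/2 : ℝ)) = (A.ncard : ℝ) / 2
    rw [Finset.sum_const, nsmul_eq_mul, hcard]
    rw [show (Finset.univ : Finset ↥A).card = A.toFinset.card by
      rw [Finset.card_univ, Set.toFinset_card]]
    ring
  · rintro r ⟨z, hz, rfl⟩
    obtain ⟨hz0, hz1, hzadj⟩ := hz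
    obtain ⟨hy0, hy1, hyadj⟩ := hy
    set z' : V → ℝ := fun v => if h : v ∈ A then z ⟨v, h⟩ else y v with hz'
    have hz'mem : z' ∈ fracMatchingPolytope G := by
      refine ⟨fun v => ?_, fun v => ?_, fun u v huv => ?_⟩
      · by_cases h : v ∈ A <;> simp [hz', h, hz0, hy0]
      · by_cases h : v ∈ A <;> simp [hz', h, hz1, hy1]
      · by_cases hu : u ∈ A <;> by_cases hv : v ∈ A
        · simp only [hz', dif_pos hu, dif_pos hv]
          exact hzadj ⟨u, hu⟩ ⟨v, hv⟩ huv
        · simp only [hz', dif_pos hu, dif_neg hv]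
          rcases hhalf v with h0 | hh | h1
          · rw [h0]; linarith [hz1 ⟨u, hu⟩]
          · exact absurd (hA ▸ hh) hv
          · exfalso; have := hyadj u v huv
            rw [hyA u hu, h1] at this; linarith
        · simp only [hz', dif_neg hu, dif_pos hv]
          rcases hhalf u with h0 | hh | h1
          · rw [h0]; linarith [hz1 ⟨v, hv⟩]
          · exact absurd (hA ▸ hh) hu
          · exfalso; have := hyadj u v huv
            rw [hyA v hv, h1] at this; linarith
        · simp only [hz', dif_neg hu, dif_neg hv]
          exact hyadj u v huv
    have hle := hopt z' hz'mem
    have hsplit : ∀ f : V → ℝ,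
        ∑ v, f v = ∑ v ∈ A.toFinset, f v + ∑ v ∈ A.toFinsetᶜ, f v := by
      intro f
      rw [← Finset.sum_add_sum_compl A.toFinset f]
    rw [hsplit z', hsplit y] at hle
    have hcompl : ∑ v ∈ A.toFinsetᶜ, z' v = ∑ v ∈ A.toFinsetᶜ, y v := by
      refine Finset.sum_congr rfl fun v hv => ?_
      have : v ∉ A := fun h => (Finset.mem_compl.mp hv) (Set.mem_toFinset.mpr h)
      simp [hz', this]
    have hAle : ∑ v ∈ A.toFinset, z' v ≤ ∑ v ∈ A.toFinset, y v := by
      linarith [hle, hcompl]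
    have hzsum : ∑ v : ↥A, z v = ∑ v ∈ A.toFinset, z' v := by
      rw [Finset.sum_subtype A.toFinset hmemiff z']
      refine Finset.sum_congr rfl fun v _ => ?_
      simp [hz', v.2]
    show ∑ v : ↥A, z v ≤ (A.ncard : ℝ) / 2
    rw [hzsum]
    rw [hsumyA] at hAle
    exact hAle
end

section
/- Let G be a finite simple graph on vertex set V and let y ∈ P(G) be half-integral and maximize ∑_{v ∈ V} y v over P(G). Let A = {v ∈ V : y v = 1/2} and B = V \ A. If M_c is a maximum matching of the induced subgraph G[A] and M_s is a maximum matching of the induced subgraph G[B], then M_c ∪ M_s is a maximum matching of G; in particular, the matching number of G equals the matching number of G[A] plus the matching number of G[B]. -/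
/-- `M` is a matching of the subgraph of `G` induced on `A`: a set of edges of `G`
with all endpoints in `A`, pairwise vertex-disjoint. -/
def IsMatchingOn {V : Type*} (G : SimpleGraph V) (A : Set V) (M : Finset (Sym2 V)) : Prop :=
  (∀ m ∈ M, m ∈ G.edgeSet ∧ ∀ v ∈ m, v ∈ A) ∧
    ∀ m ∈ M, ∀ m' ∈ M, m ≠ m' → ∀ v : V, v ∈ m → v ∉ m'

private lemma edge_exists' {V : Type*} {G : SimpleGraph V} {m : Sym2 V}
    (h : m ∈ G.edgeSet) : ∃ u v, G.Adj u v ∧ m = s(u, v) := by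
  induction m using Sym2.ind with
  | _ u v => exact ⟨u, v, G.mem_edgeSet.mp h, rfl⟩

/-- if `y` is a half-integral optimal fractional matching of `G`,
`A = {v | y v = 1/2}` and `B = V \ A`, then the union of a maximum matching of `G[A]`
and a maximum matching of `G[B]` is a maximum matching of `G`; in particular the
matching number of `G` is the sum of the matching numbers of `G[A]` and `G[B]`. -/
theorem fracMatching_split_max_matching {V : Type*} [Fintype V] [DecidableEq V]
    (G : SimpleGraph V) (y : V → ℝ)
    (hy : y ∈ fracMatchingPolytope G)
    (hhalf : ∀ v, y v = 0 ∨ y v = 1 / 2 ∨ y v = 1)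
    (hopt : ∀ z ∈ fracMatchingPolytope G, ∑ v, z v ≤ ∑ v, y v)
    (A : Set V) (hA : A = {v | y v = 1 / 2})
    (Mc Ms : Finset (Sym2 V))
    (hMc : IsMatchingOn G A Mc)
    (hMcMax : ∀ M', IsMatchingOn G A M' → M'.card ≤ Mc.card)
    (hMs : IsMatchingOn G Aᶜ Ms)
    (hMsMax : ∀ M', IsMatchingOn G Aᶜ M' → M'.card ≤ Ms.card) :
    (IsMatchingOn G Set.univ (Mc ∪ Ms) ∧
      ∀ M', IsMatchingOn G Set.univ M' → M'.card ≤ (Mc ∪ Ms).card) ∧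
      (Mc ∪ Ms).card = Mc.card + Ms.card := by
  classical
  obtain ⟨hy0, hy1, hyadj⟩ := hy
  have hAmem : ∀ v, v ∈ A ↔ y v = 1 / 2 := by intro v; rw [hA]; rfl
  -- Mc and Ms are disjoint
  have hdisj : Disjoint Mc Ms := by
    rw [Finset.disjoint_left]
    intro m hmc hms
    obtain ⟨hedge, hsub⟩ := hMc.1 m hmc
    obtain ⟨u, v, huv, rfl⟩ := edge_exists' hedge
    have hu : u ∈ A := hsub u (Sym2.mem_mk_left u v)
    exact (hMs.1 _ hms).2 u (Sym2.mem_mk_left u v) hu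
  have hcard : (Mc ∪ Ms).card = Mc.card + Ms.card := Finset.card_union_of_disjoint hdisj
  -- Mc ∪ Ms is a matching on univ
  have hunion : IsMatchingOn G Set.univ (Mc ∪ Ms) := by
    constructor
    · intro m hm
      rcases Finset.mem_union.mp hm with h | h
      · exact ⟨(hMc.1 m h).1, fun v _ => trivial⟩
      · exact ⟨(hMs.1 m h).1, fun v _ => trivial⟩
    · intro m hm m' hm' hne v hv hv'
      rcases Finset.mem_union.mp hm with h | h <;> rcases Finset.mem_union.mp hm' with h' | h'
      · exact hMc.2 m h m' h' hne v hv hv'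
      · exact ((hMs.1 m' h').2 v hv') ((hMc.1 m h).2 v hv)
      · exact ((hMs.1 m h).2 v hv) ((hMc.1 m' h').2 v hv')
      · exact hMs.2 m h m' h' hne v hv hv'
  -- the set of zero vertices
  set Z : Finset V := Finset.univ.filter (fun v => y v = 0) with hZdef
  set NC : V → Finset V := fun v => Finset.univ.filter (fun c => G.Adj v c ∧ y c = 1) with hNCdef
  set t : V → Finset V := fun v => if y v = 0 then NC v else Finset.univ with htdef
  -- Hall's condition, via optimality of y
  have hhall : ∀ s : Finset V, s.card ≤ (s.biUnion t).card := by
    intro s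
    by_cases hs : ∀ v ∈ s, y v = 0
    · by_contra hlt
      push_neg at hlt
      set N := s.biUnion t with hNdef
      have hNone : ∀ c ∈ N, y c = 1 := by
        intro c hc
        obtain ⟨v, hv, hcv⟩ := Finset.mem_biUnion.mp hc
        rw [htdef] at hcv
        simp only [hs v hv, if_pos] at hcv
        rw [hNCdef] at hcv
        exact (Finset.mem_filter.mp hcv).2.2
      have hdisjsN : Disjoint s N := Finset.disjoint_left.mpr (fun v hv hvN => by
        have h1 := hs v hv; have h2 := hNone v hvN
        rw [h1] at h2; norm_num at h2)
      set z : V → ℝ := fun v => if v ∈ s ∪ N then 1 / 2 else y v with hzdef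
      have hkey : ∀ a b, G.Adj a b → a ∈ s ∪ N → b ∉ s ∪ N → y b ≤ 1 / 2 := by
        intro a b hab ha hb
        rcases hhalf b with h | h | h
        · rw [h]; norm_num
        · rw [h]
        · exfalso
          rcases Finset.mem_union.mp ha with ha' | ha'
          · refine hb (Finset.mem_union_right _ (Finset.mem_biUnion.mpr ⟨a, ha', ?_⟩))
            rw [htdef]
            simp only [hs a ha', if_pos]
            rw [hNCdef]
            exact Finset.mem_filter.mpr ⟨Finset.mem_univ _, hab, h⟩
          · have h1 := hNone a ha'
            have h2 := hyadj a b hab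
            rw [h1, h] at h2; norm_num at h2
      have hzmem : z ∈ fracMatchingPolytope G := by
        refine ⟨?_, ?_, ?_⟩
        · intro v
          rw [hzdef]
          by_cases hv : v ∈ s ∪ N
          · simp only [if_pos hv]; norm_num
          · simp only [if_neg hv]; exact hy0 v
        · intro v
          rw [hzdef]
          by_cases hv : v ∈ s ∪ N
          · simp only [if_pos hv]; norm_num
          · simp only [if_neg hv]; exact hy1 v
        · intro u v huv
          rw [hzdef]
          by_cases hu : u ∈ s ∪ N <;> by_cases hv : v ∈ s ∪ N
          · simp only [if_pos hu, if_pos hv]; norm_num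
          · simp only [if_pos hu, if_neg hv]
            have := hkey u v huv hu hv; linarith
          · simp only [if_neg hu, if_pos hv]
            have := hkey v u huv.symm hv hu; linarith
          · simp only [if_neg hu, if_neg hv]; exact hyadj u v huv
      have hsum : ∑ v, y v < ∑ v, z v := by
        have hsub : ∀ x ∈ Finset.univ, x ∉ s ∪ N → z x - y x = 0 := by
          intro x _ hx
          rw [hzdef]; simp only [if_neg hx]; ring
        have h1 : ∑ v, (z v - y v) = ∑ v ∈ s ∪ N, (z v - y v) :=
          (Finset.sum_subset (Finset.subset_univ _) hsub).symm
        have h2 : ∑ v ∈ s ∪ N, (z v - y v) = ∑ v ∈ s, (z v - y v) + ∑ v ∈ N, (z v - y v) :=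
          Finset.sum_union hdisjsN
        have h3 : ∑ v ∈ s, (z v - y v) = s.card * (1 / 2 : ℝ) := by
          have hc : ∀ v ∈ s, z v - y v = (1 / 2 : ℝ) := by
            intro v hv
            rw [hzdef]
            simp only [if_pos (Finset.mem_union_left _ hv), hs v hv]
            ring
          rw [Finset.sum_congr rfl hc, Finset.sum_const, nsmul_eq_mul]
        have h4 : ∑ v ∈ N, (z v - y v) = -(N.card * (1 / 2 : ℝ)) := by
          have hc : ∀ v ∈ N, z v - y v = -(1 / 2 : ℝ) := by
            intro v hv
            rw [hzdef]
            simp only [if_pos (Finset.mem_union_right _ hv), hNone v hv]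
            norm_num
          rw [Finset.sum_congr rfl hc, Finset.sum_const, nsmul_eq_mul]
          ring
        have hc : (N.card : ℝ) < s.card := by exact_mod_cast hlt
        have : ∑ v, (z v - y v) > 0 := by
          rw [h1, h2, h3, h4]; linarith
        rw [Finset.sum_sub_distrib] at this
        linarith
      exact absurd (hopt z hzmem) (not_le.mpr hsum)
    · push_neg at hs
      obtain ⟨v, hv, hv0⟩ := hs
      have hsub : Finset.univ ⊆ s.biUnion t := by
        intro x _
        refine Finset.mem_biUnion.mpr ⟨v, hv, ?_⟩
        rw [htdef]
        simp only [if_neg hv0]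
        exact Finset.mem_univ x
      exact le_trans (Finset.card_le_card (Finset.subset_univ s)) (Finset.card_le_card hsub)
  obtain ⟨f, hfinj, hft⟩ := (Finset.all_card_le_biUnion_card_iff_exists_injective t).mp hhall
  have hfZ : ∀ v, y v = 0 → G.Adj v (f v) ∧ y (f v) = 1 := by
    intro v hv
    have h := hft v
    rw [htdef] at h
    simp only [if_pos hv] at h
    rw [hNCdef] at h
    exact (Finset.mem_filter.mp h).2
  -- a matching on Aᶜ of cardinality Z.card
  have hZmem : ∀ v, v ∈ Z ↔ y v = 0 := by
    intro v; rw [hZdef, Finset.mem_filter]; simp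
  set MZ : Finset (Sym2 V) := Z.image (fun v => s(v, f v)) with hMZdef
  have hMZinj : Set.InjOn (fun v => s(v, f v)) Z := by
    intro a ha b hb hab
    simp only [Sym2.eq_iff] at hab
    rcases hab with ⟨h1, _⟩ | ⟨h1, h2⟩
    · exact h1
    · exfalso
      have ha0 := (hZmem a).mp ha
      have hb0 := (hZmem b).mp hb
      have := (hfZ b hb0).2
      rw [← h1, ha0] at this; norm_num at this
  have hMZcard : MZ.card = Z.card := Finset.card_image_of_injOn hMZinj
  have hMZ : IsMatchingOn G Aᶜ MZ := by
    constructor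
    · intro m hm
      obtain ⟨v, hv, rfl⟩ := Finset.mem_image.mp hm
      have hv0 := (hZmem v).mp hv
      obtain ⟨hadj, hf1⟩ := hfZ v hv0
      refine ⟨G.mem_edgeSet.mpr hadj, ?_⟩
      intro w hw hwA
      have hwhalf := (hAmem w).mp hwA
      rcases Sym2.mem_iff.mp hw with rfl | rfl
      · rw [hv0] at hwhalf; norm_num at hwhalf
      · rw [hf1] at hwhalf; norm_num at hwhalf
    · intro m hm m' hm' hne w hw hw'
      obtain ⟨a, ha, rfl⟩ := Finset.mem_image.mp hm
      obtain ⟨b, hb, rfl⟩ := Finset.mem_image.mp hm'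
      have ha0 := (hZmem a).mp ha
      have hb0 := (hZmem b).mp hb
      have hab : a ≠ b := fun h => hne (by rw [h])
      rcases Sym2.mem_iff.mp hw with rfl | rfl <;> rcases Sym2.mem_iff.mp hw' with h' | h'
      · exact hab h'
      · have := (hfZ b hb0).2; rw [← h', ha0] at this; norm_num at this
      · have := (hfZ a ha0).2; rw [h', hb0] at this; norm_num at this
      · exact hab (hfinj h')
  have hZMs : Z.card ≤ Ms.card := hMZcard ▸ hMsMax MZ hMZ
  -- maximality
  refine ⟨⟨hunion, ?_⟩, hcard⟩
  intro M' hM'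
  set P : Sym2 V → Prop := fun m => ∃ v ∈ m, y v = 0 with hPdef
  set M'z : Finset (Sym2 V) := M'.filter P with hM'zdef
  set M'a : Finset (Sym2 V) := M'.filter (fun m => ¬ P m) with hM'adef
  have hsplit : M'z.card + M'a.card = M'.card :=
    Finset.card_filter_add_card_filter_not P
  -- M'z has at most Z.card edges
  have hzcard : M'z.card ≤ Z.card := by
    rcases M'z.eq_empty_or_nonempty with he | ⟨m0, hm0⟩
    · rw [he]; simp
    · have hV : Nonempty V := by
        have h := (Finset.mem_filter.mp hm0).2
        exact ⟨h.choose⟩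
      refine Finset.card_le_card_of_injOn
        (fun m => if h : P m then h.choose else Classical.arbitrary V) ?_ ?_
      · intro m hm
        have hp := (Finset.mem_filter.mp hm).2
        simp only [dif_pos hp]
        exact (hZmem _).mpr hp.choose_spec.2
      · intro m hm m' hm' heq
        by_contra hne'
        have hp := (Finset.mem_filter.mp hm).2
        have hp' := (Finset.mem_filter.mp hm').2
        simp only [dif_pos hp, dif_pos hp'] at heq
        exact hM'.2 m (Finset.mem_filter.mp hm).1 m' (Finset.mem_filter.mp hm').1 hne'
          _ hp.choose_spec.1 (heq ▸ hp'.choose_spec.1)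
  -- M'a is a matching on A
  have hacard : M'a.card ≤ Mc.card := by
    refine hMcMax M'a ⟨?_, ?_⟩
    · intro m hm
      obtain ⟨hmM, hmp⟩ := Finset.mem_filter.mp hm
      have hedge := (hM'.1 m hmM).1
      obtain ⟨u, w, huw, rfl⟩ := edge_exists' hedge
      refine ⟨hedge, ?_⟩
      have hu0 : y u ≠ 0 := fun h => hmp ⟨u, Sym2.mem_mk_left u w, h⟩
      have hw0 : y w ≠ 0 := fun h => hmp ⟨w, Sym2.mem_mk_right u w, h⟩
      have hsumle := hyadj u w huw
      have hu2 : y u = 1 / 2 := by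
        rcases hhalf u with h | h | h
        · exact absurd h hu0
        · exact h
        · exfalso
          rcases hhalf w with h' | h' | h' <;> rw [h, h'] at hsumle <;>
            first | (exact hw0 h') | norm_num at hsumle
      have hw2 : y w = 1 / 2 := by
        rcases hhalf w with h | h | h
        · exact absurd h hw0
        · exact h
        · exfalso
          rw [hu2, h] at hsumle; norm_num at hsumle
      intro v hv
      rcases Sym2.mem_iff.mp hv with rfl | rfl
      · exact (hAmem v).mpr hu2
      · exact (hAmem v).mpr hw2
    · intro m hm m' hm' hne v hv hv'
      exact hM'.2 m (Finset.mem_filter.mp hm).1 m' (Finset.mem_filter.mp hm').1 hne v hv hv'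
  rw [hcard]
  omega
end

section
/- Let G be a finite simple graph on vertex set V such that the constant function 1/2 maximizes ∑_{v ∈ V} y v over P(G) (i.e., the optimum of the fractional matching linear program on G equals |V| / 2). Let M be a maximum matching of G, let V(M) be the set of vertices covered by M, and let I = V \ V(M). Then for every subset S ⊆ I, the maximum of ∑_v z v over the fractional matching polytope of the induced subgraph of G on V(M) ∪ S equals (|V(M)| + |S|) / 2; i.e., assigning 1/2 to every vertex of V(M) ∪ S is optimal for that induced subgraph. -/
open scoped Classical

open Finset in
lemma sum_le_of_counts {V : Type*} [DecidableEq V] :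
    ∀ (n : ℕ) (A : Finset V) (g : V → ℝ), A.card = n →
      (∀ v ∈ A, g v ≤ 1/2) →
      (∀ s : ℝ, 0 < s → s ≤ 1/2 →
        (A.filter (fun v => s < g v)).card ≤ (A.filter (fun v => g v < -s)).card) →
      ∑ v ∈ A, g v ≤ 0 := by
  intro n
  induction n using Nat.strong_induction_on with
  | _ n ih =>
    intro A g hcard hle hcond
    by_cases hpos : ∃ v ∈ A, 0 < g v
    · obtain ⟨v₁, hv₁A, hv₁⟩ := hpos
      obtain ⟨v₀, hv₀A, hmax⟩ := Finset.exists_max_image A g ⟨v₁, hv₁A⟩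
      have hp : 0 < g v₀ := lt_of_lt_of_le hv₁ (hmax v₁ hv₁A)
      have hp2 : g v₀ ≤ 1/2 := hle v₀ hv₀A
      have hw : ∃ w ∈ A, g w ≤ -(g v₀) := by
        by_contra h
        push_neg at h
        obtain ⟨w₁, hw₁A, hmax₁⟩ := Finset.exists_max_image A (fun v => -g v) ⟨v₀, hv₀A⟩
        set s := max (-g w₁) (g v₀ / 2) with hsdef
        have hs1 : 0 < s := lt_of_lt_of_le (half_pos hp) (le_max_right _ _)
        have hw₁p : -g w₁ < g v₀ := by
          have := h w₁ hw₁A; linarith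
        have hs2 : s ≤ 1/2 := by
          apply max_le <;> linarith
        have hsp : s < g v₀ := max_lt hw₁p (half_lt_self hp)
        have hc := hcond s hs1 hs2
        have hL : v₀ ∈ A.filter (fun v => s < g v) := by
          simp [Finset.mem_filter, hv₀A, hsp]
        have hR : A.filter (fun v => g v < -s) = ∅ := by
          apply Finset.filter_eq_empty_iff.2
          intro v hvA
          have h1 : -g v ≤ -g w₁ := hmax₁ v hvA
          have h2 : -g w₁ ≤ s := le_max_left _ _
          push_neg
          linarith
        rw [hR] at hc
        simp at hc
        exact absurd (hc hv₀A) (not_le.2 hsp)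
      obtain ⟨w₀, hw₀A, hw₀⟩ := hw
      have hne : w₀ ≠ v₀ := by
        intro h; rw [h] at hw₀; linarith
      set A' := (A.erase v₀).erase w₀ with hA'
      have hw₀A1 : w₀ ∈ A.erase v₀ := Finset.mem_erase.2 ⟨hne, hw₀A⟩
      have hcard1 : (A.erase v₀).card = n - 1 := by rw [Finset.card_erase_of_mem hv₀A, hcard]
      have hcard' : A'.card = n - 2 := by
        rw [hA', Finset.card_erase_of_mem hw₀A1, hcard1]; omega
      have hnpos : 0 < n := by
        rw [← hcard]; exact Finset.card_pos.2 ⟨v₀, hv₀A⟩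
      have hlt : A'.card < n := by omega
      have hsub : A' ⊆ A := (Finset.erase_subset _ _).trans (Finset.erase_subset _ _)
      have hcond' : ∀ s : ℝ, 0 < s → s ≤ 1/2 →
          (A'.filter (fun v => s < g v)).card ≤ (A'.filter (fun v => g v < -s)).card := by
        intro s hs1 hs2
        by_cases hsp : s < g v₀
        · have eL : A'.filter (fun v => s < g v)
              = ((A.filter (fun v => s < g v)).erase v₀).erase w₀ := by
            rw [hA', Finset.filter_erase, Finset.filter_erase]
          have eR : A'.filter (fun v => g v < -s)
              = ((A.filter (fun v => g v < -s)).erase v₀).erase w₀ := by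
            rw [hA', Finset.filter_erase, Finset.filter_erase]
          have hv₀L : v₀ ∈ A.filter (fun v => s < g v) := by
            simp [Finset.mem_filter, hv₀A, hsp]
          have hw₀L : w₀ ∉ (A.filter (fun v => s < g v)).erase v₀ := by
            simp only [Finset.mem_erase, Finset.mem_filter]
            rintro ⟨-, -, h⟩
            linarith
          have hw₀R : w₀ ∈ A.filter (fun v => g v < -s) := by
            simp only [Finset.mem_filter]
            exact ⟨hw₀A, by linarith⟩
          have hv₀R : v₀ ∉ A.filter (fun v => g v < -s) := by
            simp only [Finset.mem_filter]
            rintro ⟨-, h⟩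
            linarith
          rw [eL, eR]
          rw [Finset.erase_eq_of_notMem hw₀L,
            Finset.card_erase_of_mem hv₀L,
            Finset.erase_eq_of_notMem (by simp [hv₀R] : v₀ ∉ A.filter (fun v => g v < -s)),
            Finset.card_erase_of_mem hw₀R]
          exact Nat.sub_le_sub_right (hcond s hs1 hs2) 1
        · have eL : A'.filter (fun v => s < g v) = ∅ := by
            apply Finset.filter_eq_empty_iff.2
            intro v hvA
            have := hmax v (hsub hvA)
            push_neg
            linarith
          simp [eL]
      have key := ih A'.card hlt A' g rfl (fun v hv => hle v (hsub hv)) hcond'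
      have hsplit : ∑ v ∈ A, g v = g v₀ + (g w₀ + ∑ v ∈ A', g v) := by
        rw [hA', Finset.add_sum_erase _ g hw₀A1, Finset.add_sum_erase _ g hv₀A]
      rw [hsplit]
      linarith
    · push_neg at hpos
      exact Finset.sum_nonpos hpos

section AuxFM
open Finset

variable {V : Type*} [Fintype V] [DecidableEq V]

/-- Fractional Hall condition: an independent set has at least as many neighbors. -/
lemma indep_card_le_nbrs (G : SimpleGraph V)
    (hopt : ∀ z ∈ fracMatchingPolytope G, ∑ v, z v ≤ (Fintype.card V : ℝ) / 2)
    (J : Finset V) (hJ : ∀ a ∈ J, ∀ b ∈ J, ¬ G.Adj a b) :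
    J.card ≤ (Finset.univ.filter (fun v => ∃ j ∈ J, G.Adj j v)).card := by
  set NJ := Finset.univ.filter (fun v : V => ∃ j ∈ J, G.Adj j v) with hNJ
  set y : V → ℝ := fun v =>
    (if v ∈ J then (1:ℝ)/2 else 0) + (1/2 - (if v ∈ NJ then (1:ℝ)/2 else 0)) with hy
  have hJN : ∀ v ∈ J, v ∉ NJ := by
    intro v hv hvN
    rw [hNJ, Finset.mem_filter] at hvN
    obtain ⟨-, j, hj, hadj⟩ := hvN
    exact hJ j hj v hv hadj
  have hmem : y ∈ fracMatchingPolytope G := by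
    refine ⟨?_, ?_, ?_⟩
    · intro v
      rw [hy]
      by_cases h1 : v ∈ J <;> by_cases h2 : v ∈ NJ <;> simp [h1, h2] <;> norm_num
    · intro v
      by_cases h1 : v ∈ J
      · have := hJN v h1
        simp [hy, h1, this]; norm_num
      · by_cases h2 : v ∈ NJ <;> simp [hy, h1, h2] <;> norm_num
    · intro u v hadj
      by_cases h1 : u ∈ J
      · have hvN : v ∈ NJ := by
          rw [hNJ, Finset.mem_filter]
          exact ⟨Finset.mem_univ _, u, h1, hadj⟩
        have hvJ : v ∉ J := fun hv => hJ u h1 v hv hadj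
        have huN := hJN u h1
        simp [hy, h1, hvN, hvJ, huN]; norm_num
      · by_cases h2 : v ∈ J
        · have huN : u ∈ NJ := by
            rw [hNJ, Finset.mem_filter]
            exact ⟨Finset.mem_univ _, v, h2, hadj.symm⟩
          have huJ : u ∉ J := h1
          have hvN := hJN v h2
          simp [hy, huN, huJ, h2, hvN]; norm_num
        · by_cases h3 : u ∈ NJ <;> by_cases h4 : v ∈ NJ <;>
            simp [hy, h1, h2, h3, h4] <;> norm_num
  have hsum := hopt y hmem
  have e1 : ∑ v : V, (if v ∈ J then (1:ℝ)/2 else 0) = (J.card : ℝ) * (1/2) := by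
    rw [← Finset.sum_filter, Finset.filter_univ_mem, Finset.sum_const, nsmul_eq_mul]
  have e2 : ∑ v : V, (if v ∈ NJ then (1:ℝ)/2 else 0) = (NJ.card : ℝ) * (1/2) := by
    rw [← Finset.sum_filter, Finset.filter_univ_mem, Finset.sum_const, nsmul_eq_mul]
  have e3 : ∑ v : V, y v = (J.card : ℝ) * (1/2) + ((Fintype.card V : ℝ) * (1/2)
      - (NJ.card : ℝ) * (1/2)) := by
    rw [hy]
    rw [Finset.sum_add_distrib, e1, Finset.sum_sub_distrib, e2, Finset.sum_const]
    simp [Finset.card_univ, nsmul_eq_mul]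
  rw [e3] at hsum
  have : (J.card : ℝ) ≤ (NJ.card : ℝ) := by linarith
  exact_mod_cast this

/-- Two unmatched vertices cannot be adjacent when `M` is maximum. -/
lemma no_edge_unmatched (G : SimpleGraph V) (M : Finset (Sym2 V))
    (hM : IsMatchingOn G Set.univ M)
    (hMmax : ∀ M', IsMatchingOn G Set.univ M' → M'.card ≤ M.card)
    {u v : V} (hu : ¬ ∃ m ∈ M, u ∈ m) (hv : ¬ ∃ m ∈ M, v ∈ m)
    (hadj : G.Adj u v) : False := by
  have hnot : s(u, v) ∉ M := fun h => hu ⟨_, h, Sym2.mem_mk_left u v⟩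
  have hmatch : IsMatchingOn G Set.univ (insert s(u, v) M) := by
    constructor
    · intro m hm
      rcases Finset.mem_insert.1 hm with rfl | hm'
      · exact ⟨(SimpleGraph.mem_edgeSet G).2 hadj, fun _ _ => trivial⟩
      · exact hM.1 m hm'
    · intro m hm m' hm' hne w hw hw'
      rcases Finset.mem_insert.1 hm with rfl | hm1 <;>
        rcases Finset.mem_insert.1 hm' with rfl | hm2
      · exact hne rfl
      · rcases Sym2.mem_iff.1 hw with rfl | rfl
        · exact hu ⟨m', hm2, hw'⟩
        · exact hv ⟨m', hm2, hw'⟩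
      · rcases Sym2.mem_iff.1 hw' with rfl | rfl
        · exact hu ⟨m, hm1, hw⟩
        · exact hv ⟨m, hm1, hw⟩
      · exact hM.2 m hm1 m' hm2 hne w hw hw'
  have := hMmax _ hmatch
  rw [Finset.card_insert_of_notMem hnot] at this
  omega

/-- Alternating paths: `AltP G M T X x D M''` says that starting from some unmatched
vertex in `T` there is an alternating path ending by exposing `x ∈ X`; `D` is the set of
exposed-history vertices and `M''` the resulting matching. -/
inductive AltP (G : SimpleGraph V) (M : Finset (Sym2 V)) (T : Set V) (X : Set V) :
    V → Finset V → Finset (Sym2 V) → Prop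
  | base (s x x' : V) (hs : s ∈ T) (hadj : G.Adj s x') (hpair : s(x, x') ∈ M) (hx : x ∈ X) :
      AltP G M T X x {x} (insert s(s, x') (M.erase s(x, x')))
  | step (w : V) (D : Finset V) (M'' : Finset (Sym2 V)) (x x' : V)
      (h : AltP G M T X w D M'') (hxD : x ∉ D) (hadj : G.Adj w x')
      (hpair : s(x, x') ∈ M) (hmem : s(x, x') ∈ M'') (hx : x ∈ X) :
      AltP G M T X x (insert x D) (insert s(w, x') (M''.erase s(x, x')))

lemma altP_spec {G : SimpleGraph V} {M : Finset (Sym2 V)} {T X : Set V}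
    (hM : IsMatchingOn G Set.univ M)
    (hT : ∀ s ∈ T, ¬ ∃ m ∈ M, s ∈ m)
    {x : V} {D : Finset V} {M'' : Finset (Sym2 V)}
    (h : AltP G M T X x D M'') :
    IsMatchingOn G Set.univ M'' ∧ M''.card = M.card ∧
    (∃ s ∈ T, ∀ v : V, (∃ m ∈ M'', v ∈ m) ↔ ((∃ m ∈ M, v ∈ m) ∧ v ≠ x) ∨ v = s) ∧
    (∀ m ∈ M, (∀ v ∈ m, v ∉ D) → m ∈ M'') ∧
    (↑D ⊆ X) ∧ x ∈ D ∧
    (∀ d ∈ D, ∃ m ∈ M, d ∈ m) ∧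
    (∀ d ∈ D, ∃ D' M''', AltP G M T X d D' M''') := by
  induction h with
  | base s x x' hs hadj hpair hx =>
    have hxx' : G.Adj x x' := (SimpleGraph.mem_edgeSet G).1 (hM.1 _ hpair).1
    have hxne : x ≠ x' := hxx'.ne
    have hs_any : ∀ m ∈ M, s ∉ m := fun m hm hmem => hT s hs ⟨m, hm, hmem⟩
    have henot : s(s, x') ∉ M.erase s(x, x') := fun h =>
      hs_any _ (Finset.mem_of_mem_erase h) (Sym2.mem_mk_left s x')
    refine ⟨⟨?_, ?_⟩, ?_, ⟨s, hs, ?_⟩, ?_, ?_, ?_, ?_, ?_⟩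
    · intro m hm
      rcases Finset.mem_insert.1 hm with rfl | hm'
      · exact ⟨(SimpleGraph.mem_edgeSet G).2 hadj, fun _ _ => trivial⟩
      · exact hM.1 m (Finset.mem_of_mem_erase hm')
    · intro m hm m' hm' hne w hw hw'
      rcases Finset.mem_insert.1 hm with rfl | hm1 <;>
        rcases Finset.mem_insert.1 hm' with rfl | hm2
      · exact hne rfl
      · rcases Sym2.mem_iff.1 hw with rfl | rfl
        · exact hs_any _ (Finset.mem_of_mem_erase hm2) hw'
        · exact hM.2 _ hpair _ (Finset.mem_of_mem_erase hm2)
            (Ne.symm (Finset.ne_of_mem_erase hm2)) w (Sym2.mem_mk_right x w) hw'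
      · rcases Sym2.mem_iff.1 hw' with rfl | rfl
        · exact hs_any _ (Finset.mem_of_mem_erase hm1) hw
        · exact hM.2 _ hpair _ (Finset.mem_of_mem_erase hm1)
            (Ne.symm (Finset.ne_of_mem_erase hm1)) w (Sym2.mem_mk_right x w) hw
      · exact hM.2 m (Finset.mem_of_mem_erase hm1) m' (Finset.mem_of_mem_erase hm2) hne w hw hw'
    · rw [Finset.card_insert_of_notMem henot, Finset.card_erase_of_mem hpair]
      have : 0 < M.card := Finset.card_pos.2 ⟨_, hpair⟩
      omega
    · intro v
      constructor
      · rintro ⟨m, hm, hvm⟩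
        rcases Finset.mem_insert.1 hm with rfl | hm'
        · rcases Sym2.mem_iff.1 hvm with rfl | rfl
          · exact Or.inr rfl
          · exact Or.inl ⟨⟨_, hpair, Sym2.mem_mk_right x v⟩, Ne.symm hxne⟩
        · refine Or.inl ⟨⟨m, Finset.mem_of_mem_erase hm', hvm⟩, ?_⟩
          rintro rfl
          exact hM.2 _ hpair _ (Finset.mem_of_mem_erase hm')
            (Ne.symm (Finset.ne_of_mem_erase hm')) v (Sym2.mem_mk_left v x') hvm
      · rintro (⟨⟨m, hm, hvm⟩, hvx⟩ | hveq)
        · by_cases hmp : m = s(x, x')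
          · subst hmp
            rcases Sym2.mem_iff.1 hvm with rfl | rfl
            · exact absurd rfl hvx
            · exact ⟨_, Finset.mem_insert_self _ _, Sym2.mem_mk_right s v⟩
          · exact ⟨m, Finset.mem_insert_of_mem (Finset.mem_erase.2 ⟨hmp, hm⟩), hvm⟩
        · exact ⟨_, Finset.mem_insert_self _ _, by rw [hveq]; exact Sym2.mem_mk_left s x'⟩
    · intro m hm hmD
      have : x ∉ m := fun hxm => hmD x hxm (Finset.mem_singleton_self x)
      have hmp : m ≠ s(x, x') := fun h => this (h ▸ Sym2.mem_mk_left x x')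
      exact Finset.mem_insert_of_mem (Finset.mem_erase.2 ⟨hmp, hm⟩)
    · intro d hd
      rw [Finset.coe_singleton, Set.mem_singleton_iff] at hd
      exact hd ▸ hx
    · exact Finset.mem_singleton_self x
    · intro d hd
      rw [Finset.mem_singleton] at hd
      exact hd ▸ ⟨_, hpair, Sym2.mem_mk_left x x'⟩
    · intro d hd
      rw [Finset.mem_singleton] at hd
      exact hd ▸ ⟨_, _, AltP.base s x x' hs hadj hpair hx⟩
  | step w D M₀ x x' h hxD hadj hpair hmem hx ih =>
    obtain ⟨ihMatch, ihCard, ⟨s, hsT, ihCov⟩, ihPres, ihDX, ihwD, ihDM, ihHist⟩ := ih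
    have hxx' : G.Adj x x' := (SimpleGraph.mem_edgeSet G).1 (hM.1 _ hpair).1
    have hxne : x ≠ x' := hxx'.ne
    have hs_any : ∀ m ∈ M, s ∉ m := fun m hm hmem => hT s hsT ⟨m, hm, hmem⟩
    have hwM : ∃ m ∈ M, w ∈ m := ihDM w ihwD
    have hws : w ≠ s := by
      rintro rfl
      obtain ⟨m, hm, hwm⟩ := hwM
      exact hs_any m hm hwm
    have hwM₀ : ¬ ∃ m ∈ M₀, w ∈ m := by
      rw [ihCov w]
      rintro (⟨-, hne⟩ | rfl)
      · exact hne rfl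
      · exact hws rfl
    have hwx : w ≠ x := fun h => hxD (h ▸ ihwD)
    have henot : s(w, x') ∉ M₀.erase s(x, x') := fun h =>
      hwM₀ ⟨_, Finset.mem_of_mem_erase h, Sym2.mem_mk_left w x'⟩
    have hx'only : ∀ m ∈ M₀.erase s(x, x'), x' ∉ m := fun m hm =>
      ihMatch.2 _ hmem m (Finset.mem_of_mem_erase hm)
        (Ne.symm (Finset.ne_of_mem_erase hm)) x' (Sym2.mem_mk_right x x')
    refine ⟨⟨?_, ?_⟩, ?_, ⟨s, hsT, ?_⟩, ?_, ?_, ?_, ?_, ?_⟩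
    · intro m hm
      rcases Finset.mem_insert.1 hm with rfl | hm'
      · exact ⟨(SimpleGraph.mem_edgeSet G).2 hadj, fun _ _ => trivial⟩
      · exact ihMatch.1 m (Finset.mem_of_mem_erase hm')
    · intro m hm m' hm' hne v hv hv'
      rcases Finset.mem_insert.1 hm with rfl | hm1 <;>
        rcases Finset.mem_insert.1 hm' with rfl | hm2
      · exact hne rfl
      · rcases Sym2.mem_iff.1 hv with rfl | rfl
        · exact hwM₀ ⟨m', Finset.mem_of_mem_erase hm2, hv'⟩
        · exact hx'only m' hm2 hv'
      · rcases Sym2.mem_iff.1 hv' with rfl | rfl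
        · exact hwM₀ ⟨m, Finset.mem_of_mem_erase hm1, hv⟩
        · exact hx'only m hm1 hv
      · exact ihMatch.2 m (Finset.mem_of_mem_erase hm1) m' (Finset.mem_of_mem_erase hm2)
          hne v hv hv'
    · rw [Finset.card_insert_of_notMem henot, Finset.card_erase_of_mem hmem, ihCard]
      have : 0 < M.card := Finset.card_pos.2 ⟨_, hpair⟩
      omega
    · intro v
      constructor
      · rintro ⟨m, hm, hvm⟩
        rcases Finset.mem_insert.1 hm with rfl | hm'
        · rcases Sym2.mem_iff.1 hvm with rfl | rfl
          · exact Or.inl ⟨hwM, hwx⟩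
          · exact Or.inl ⟨⟨_, hpair, Sym2.mem_mk_right x v⟩, Ne.symm hxne⟩
        · have hvM₀ : ∃ mm ∈ M₀, v ∈ mm := ⟨m, Finset.mem_of_mem_erase hm', hvm⟩
          rcases (ihCov v).1 hvM₀ with ⟨hvM, -⟩ | rfl
          · refine Or.inl ⟨hvM, ?_⟩
            rintro rfl
            exact ihMatch.2 _ hmem _ (Finset.mem_of_mem_erase hm')
              (Ne.symm (Finset.ne_of_mem_erase hm')) v (Sym2.mem_mk_left v x') hvm
          · exact Or.inr rfl
      · rintro (⟨hvM, hvx⟩ | hveq)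
        · by_cases hvw : v = w
          · exact ⟨_, Finset.mem_insert_self _ _, hvw ▸ Sym2.mem_mk_left w x'⟩
          · have hvM₀ : ∃ m ∈ M₀, v ∈ m := (ihCov v).2 (Or.inl ⟨hvM, hvw⟩)
            obtain ⟨m, hm, hvm⟩ := hvM₀
            by_cases hmp : m = s(x, x')
            · subst hmp
              rcases Sym2.mem_iff.1 hvm with rfl | rfl
              · exact absurd rfl hvx
              · exact ⟨_, Finset.mem_insert_self _ _, Sym2.mem_mk_right w v⟩
            · exact ⟨m, Finset.mem_insert_of_mem (Finset.mem_erase.2 ⟨hmp, hm⟩), hvm⟩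
        · have hsM₀ : ∃ m ∈ M₀, s ∈ m := (ihCov s).2 (Or.inr rfl)
          obtain ⟨m, hm, hsm⟩ := hsM₀
          have hmp : m ≠ s(x, x') := by
            rintro rfl
            exact hs_any _ hpair hsm
          exact ⟨m, Finset.mem_insert_of_mem (Finset.mem_erase.2 ⟨hmp, hm⟩),
            by rw [hveq]; exact hsm⟩
    · intro m hm hmD
      have hmD' : ∀ v ∈ m, v ∉ D := fun v hv => fun hvD =>
        hmD v hv (Finset.mem_insert_of_mem hvD)
      have hm₀ : m ∈ M₀ := ihPres m hm hmD'
      have hxm : x ∉ m := fun hxm => hmD x hxm (Finset.mem_insert_self x D)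
      have hmp : m ≠ s(x, x') := fun h => hxm (h ▸ Sym2.mem_mk_left x x')
      exact Finset.mem_insert_of_mem (Finset.mem_erase.2 ⟨hmp, hm₀⟩)
    · intro d hd
      rw [Finset.coe_insert, Set.mem_insert_iff] at hd
      rcases hd with rfl | hd
      · exact hx
      · exact ihDX hd
    · exact Finset.mem_insert_self x D
    · intro d hd
      rcases Finset.mem_insert.1 hd with rfl | hd
      · exact ⟨_, hpair, Sym2.mem_mk_left d x'⟩
      · exact ihDM d hd
    · intro d hd
      rcases Finset.mem_insert.1 hd with rfl | hd
      · exact ⟨_, _, AltP.step w D M₀ d x' h hxD hadj hpair hmem hx⟩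
      · exact ihHist d hd

lemma altP_single {G : SimpleGraph V} {M : Finset (Sym2 V)} {T X : Set V}
    {x : V} {D : Finset V} {M'' : Finset (Sym2 V)}
    (h : AltP G M T X x D M'') : ∃ s ∈ T, AltP G M {s} X x D M'' := by
  induction h with
  | base s x x' hs hadj hpair hx =>
    exact ⟨s, hs, AltP.base s x x' rfl hadj hpair hx⟩
  | step w D M₀ x x' h hxD hadj hpair hmem hx ih =>
    obtain ⟨s, hs, h'⟩ := ih
    exact ⟨s, hs, AltP.step w D M₀ x x' h' hxD hadj hpair hmem hx⟩

lemma altP_mono {G : SimpleGraph V} {M : Finset (Sym2 V)} {T T' X : Set V}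
    (hTT : T ⊆ T') {x : V} {D : Finset V} {M'' : Finset (Sym2 V)}
    (h : AltP G M T X x D M'') : AltP G M T' X x D M'' := by
  induction h with
  | base s x x' hs hadj hpair hx => exact AltP.base s x x' (hTT hs) hadj hpair hx
  | step w D M₀ x x' h hxD hadj hpair hmem hx ih =>
    exact AltP.step w D M₀ x x' ih hxD hadj hpair hmem hx

lemma altP_augment {G : SimpleGraph V} {M : Finset (Sym2 V)} {T X : Set V}
    (hM : IsMatchingOn G Set.univ M)
    (hMmax : ∀ M', IsMatchingOn G Set.univ M' → M'.card ≤ M.card)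
    (hT : ∀ s ∈ T, ¬ ∃ m ∈ M, s ∈ m)
    {x u : V} {D : Finset V} {M'' : Finset (Sym2 V)}
    (h : AltP G M T X x D M'') (hadj : G.Adj x u)
    (hu : ¬ ∃ m ∈ M, u ∈ m) (huT : u ∉ T) : False := by
  obtain ⟨hMatch, hCard, ⟨s, hsT, hCov⟩, -, -, hxD, hDM, -⟩ := altP_spec hM hT h
  have hsM : ¬ ∃ m ∈ M, s ∈ m := hT s hsT
  have hxM : ∃ m ∈ M, x ∈ m := hDM x hxD
  have hxs : x ≠ s := by rintro rfl; exact hsM hxM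
  have hxM'' : ¬ ∃ m ∈ M'', x ∈ m := by
    rw [hCov x]
    rintro (⟨-, hne⟩ | rfl)
    · exact hne rfl
    · exact hxs rfl
  have huM'' : ¬ ∃ m ∈ M'', u ∈ m := by
    rw [hCov u]
    rintro (⟨hm, -⟩ | rfl)
    · exact hu hm
    · exact huT hsT
  have hnot : s(x, u) ∉ M'' := fun h => hxM'' ⟨_, h, Sym2.mem_mk_left x u⟩
  have hmatch : IsMatchingOn G Set.univ (insert s(x, u) M'') := by
    constructor
    · intro m hm
      rcases Finset.mem_insert.1 hm with rfl | hm'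
      · exact ⟨(SimpleGraph.mem_edgeSet G).2 hadj, fun _ _ => trivial⟩
      · exact hMatch.1 m hm'
    · intro m hm m' hm' hne v hv hv'
      rcases Finset.mem_insert.1 hm with rfl | hm1 <;>
        rcases Finset.mem_insert.1 hm' with rfl | hm2
      · exact hne rfl
      · rcases Sym2.mem_iff.1 hv with rfl | rfl
        · exact hxM'' ⟨m', hm2, hv'⟩
        · exact huM'' ⟨m', hm2, hv'⟩
      · rcases Sym2.mem_iff.1 hv' with rfl | rfl
        · exact hxM'' ⟨m, hm1, hv⟩
        · exact huM'' ⟨m, hm1, hv⟩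
      · exact hMatch.2 m hm1 m' hm2 hne v hv hv'
  have := hMmax _ hmatch
  rw [Finset.card_insert_of_notMem hnot, hCard] at this
  omega

lemma key_count (G : SimpleGraph V) (M : Finset (Sym2 V))
    (hM : IsMatchingOn G Set.univ M)
    (hMmax : ∀ M', IsMatchingOn G Set.univ M' → M'.card ≤ M.card)
    (hopt : ∀ z ∈ fracMatchingPolytope G, ∑ v, z v ≤ (Fintype.card V : ℝ) / 2)
    (VM : Set V) (hVM : VM = {v | ∃ m ∈ M, v ∈ m})
    (S : Set V) (hS : S ⊆ VMᶜ)
    (zf : V → ℝ)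
    (hle : ∀ v, v ∈ VM ∪ S → zf v ≤ 1)
    (hedge : ∀ u v, u ∈ VM ∪ S → v ∈ VM ∪ S → G.Adj u v → zf u + zf v ≤ 1)
    (t : ℝ) (ht : 1/2 < t) :
    (univ.filter (fun v => v ∈ VM ∪ S ∧ t < zf v)).card
      ≤ (univ.filter (fun v => v ∈ VM ∪ S ∧ zf v < 1 - t)).card := by
  classical
  set A : Set V := VM ∪ S with hA
  have hVM' : ∀ v, v ∈ VM ↔ ∃ m ∈ M, v ∈ m := by
    intro v; rw [hVM]; exact Iff.rfl
  have hSunm : ∀ v ∈ S, ¬ ∃ m ∈ M, v ∈ m := by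
    intro v hv hex
    exact (hS hv) ((hVM' v).2 hex)
  -- partner function on matched vertices
  have hpf0 : ∀ x : V, ∃ px : V, (∃ m ∈ M, x ∈ m) → s(x, px) ∈ M := by
    intro x
    by_cases h : ∃ m ∈ M, x ∈ m
    · obtain ⟨m, hm, hxm⟩ := h
      refine ⟨Sym2.Mem.other hxm, fun _ => ?_⟩
      rwa [Sym2.other_spec hxm]
    · exact ⟨x, fun h' => absurd h' h⟩
  choose pf hpf using hpf0
  have hpfM : ∀ x ∈ VM, s(x, pf x) ∈ M := fun x hx => hpf x ((hVM' x).1 hx)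
  have hpfVM : ∀ x ∈ VM, pf x ∈ VM := fun x hx =>
    (hVM' _).2 ⟨_, hpfM x hx, Sym2.mem_mk_right _ _⟩
  have hpfadj : ∀ x ∈ VM, G.Adj x (pf x) := fun x hx =>
    (SimpleGraph.mem_edgeSet G).1 (hM.1 _ (hpfM x hx)).1
  have hpfinj : ∀ x ∈ VM, ∀ y ∈ VM, pf x = pf y → x = y := by
    intro x hx y hy hxy
    by_cases he : s(x, pf x) = s(y, pf y)
    · rw [hxy] at he
      rcases Sym2.eq_iff.1 he with ⟨h1, -⟩ | ⟨h1, h2⟩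
      · exact h1
      · exact h1.trans h2
    · exact absurd (by rw [hxy]; exact Sym2.mem_mk_right y (pf y))
        (hM.2 _ (hpfM x hx) _ (hpfM y hy) he (pf x) (Sym2.mem_mk_right x (pf x)))
  set J : Finset V := univ.filter (fun v => v ∈ A ∧ t < zf v) with hJ
  set K : Finset V := univ.filter (fun v => v ∈ A ∧ zf v < 1 - t) with hK
  set X : Finset V := J.filter (fun v => v ∈ VM) with hX
  set Y : Finset V := J.filter (fun v => v ∉ VM) with hY
  set P : Finset V := X.image pf with hP
  set Xs : Set V := ↑X with hXs
  have hXVM : ∀ x ∈ X, x ∈ VM := fun x hx => (Finset.mem_filter.1 hx).2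
  have hXJ : X ⊆ J := Finset.filter_subset _ _
  have hYJ : Y ⊆ J := Finset.filter_subset _ _
  have hJspec : ∀ v ∈ J, v ∈ A ∧ t < zf v := fun v hv => (Finset.mem_filter.1 hv).2
  have hKspec : ∀ v ∈ K, v ∈ A ∧ zf v < 1 - t := fun v hv => (Finset.mem_filter.1 hv).2
  have hKmem : ∀ v, v ∈ A → zf v < 1 - t → v ∈ K := fun v h1 h2 =>
    Finset.mem_filter.2 ⟨Finset.mem_univ _, h1, h2⟩
  have hYS : ∀ v ∈ Y, v ∈ S := by
    intro v hv
    obtain ⟨hvJ, hvVM⟩ := Finset.mem_filter.1 hv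
    rcases (hJspec v hvJ).1 with h | h
    · exact absurd h hvVM
    · exact h
  have hJindep : ∀ a ∈ J, ∀ b ∈ J, ¬ G.Adj a b := by
    intro a ha b hb hadj
    obtain ⟨haA, hat⟩ := hJspec a ha
    obtain ⟨hbA, hbt⟩ := hJspec b hb
    have := hedge a b haA hbA hadj
    linarith
  have hJK : ∀ v ∈ J, v ∉ K := by
    intro v hv hvK
    obtain ⟨-, h1⟩ := hJspec v hv
    obtain ⟨-, h2⟩ := hKspec v hvK
    linarith
  have hPK : P ⊆ K := by
    intro p hp
    obtain ⟨x, hx, rfl⟩ := Finset.mem_image.1 hp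
    have hxVM := hXVM x hx
    have h1 : zf x + zf (pf x) ≤ 1 :=
      hedge x (pf x) (Or.inl hxVM) (Or.inl (hpfVM x hxVM)) (hpfadj x hxVM)
    have h2 : t < zf x := (hJspec x (hXJ hx)).2
    exact hKmem _ (Or.inl (hpfVM x hxVM)) (by linarith)
  have hPcard : P.card = X.card :=
    Finset.card_image_of_injOn (fun x hx y hy h => hpfinj x (hXVM x hx) y (hXVM y hy) h)
  have cardJ : X.card + Y.card = J.card :=
    Finset.card_filter_add_card_filter_not (p := fun v => v ∈ VM)
  -- neighbors of T-or-reachable vertices land in K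
  have hNbrK : ∀ (Ts : Set V), (∀ s₀ ∈ Ts, s₀ ∈ Y) → ∀ q k : V,
      (q ∈ Ts ∨ ∃ D M'', AltP G M Ts Xs q D M'') → G.Adj q k → k ∈ K := by
    intro Ts hTs q k hq hadj
    have hTs_unm : ∀ s₀ ∈ Ts, ¬ ∃ m ∈ M, s₀ ∈ m := fun s₀ h => hSunm s₀ (hYS s₀ (hTs s₀ h))
    have hqJ : q ∈ J := by
      rcases hq with h | ⟨D, M'', h⟩
      · exact hYJ (hTs q h)
      · obtain ⟨-, -, -, -, hDX, hxD, -, -⟩ := altP_spec hM hTs_unm h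
        exact hXJ (Finset.mem_coe.1 (hDX hxD))
    have hkA : k ∈ A := by
      by_contra hkA
      have hkVM : k ∉ VM := fun h => hkA (Or.inl h)
      have hkS : k ∉ S := fun h => hkA (Or.inr h)
      have hkunm : ¬ ∃ m ∈ M, k ∈ m := fun h => hkVM ((hVM' k).2 h)
      rcases hq with h | ⟨D, M'', h⟩
      · exact no_edge_unmatched G M hM hMmax (hTs_unm q h) hkunm hadj
      · exact altP_augment hM hMmax hTs_unm h hadj hkunm (fun hk => hkS (hYS k (hTs k hk)))
    have hqA := hJspec q hqJ
    have := hedge q k hqA.1 hkA hadj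
    exact hKmem _ hkA (by linarith [hqA.2])
  -- closure property: preimages under pf of reachable-neighbors are reachable
  have hPclose : ∀ (Ts : Set V), (∀ s₀ ∈ Ts, s₀ ∈ Y) → ∀ k x₀, x₀ ∈ X → k = pf x₀ →
      ∀ q, (q ∈ Ts ∨ ∃ D M'', AltP G M Ts Xs q D M'') → G.Adj q k →
      ∃ D M'', AltP G M Ts Xs x₀ D M'' := by
    intro Ts hTs k x₀ hx₀ hk q hq hadj
    have hTs_unm : ∀ s₀ ∈ Ts, ¬ ∃ m ∈ M, s₀ ∈ m := fun s₀ h => hSunm s₀ (hYS s₀ (hTs s₀ h))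
    have hx₀VM : x₀ ∈ VM := hXVM x₀ hx₀
    have hpair : s(x₀, k) ∈ M := by rw [hk]; exact hpfM x₀ hx₀VM
    have hx₀Xs : x₀ ∈ Xs := Finset.mem_coe.2 hx₀
    rcases hq with h | ⟨D, M₀, h⟩
    · exact ⟨_, _, AltP.base q x₀ k h hadj hpair hx₀Xs⟩
    · obtain ⟨-, -, -, hPres, hDX, -, -, hHist⟩ := altP_spec hM hTs_unm h
      by_cases hx₀D : x₀ ∈ D
      · exact hHist x₀ hx₀D
      · have hkD : k ∉ D := by
          intro hkD
          have hkX : k ∈ X := Finset.mem_coe.1 (hDX hkD)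
          have hkP : k ∈ P := Finset.mem_image.2 ⟨x₀, hx₀, hk.symm⟩
          exact hJK k (hXJ hkX) (hPK hkP)
        have hmem : s(x₀, k) ∈ M₀ := by
          refine hPres _ hpair (fun v hv => ?_)
          rcases Sym2.mem_iff.1 hv with rfl | rfl
          · exact hx₀D
          · exact hkD
        exact ⟨_, _, AltP.step q D M₀ x₀ k h hx₀D hadj hpair hmem hx₀Xs⟩
  -- Hall system
  set Nf : {y // y ∈ Y} → Finset V := fun y =>
    univ.filter (fun k => k ∉ P ∧ ∃ q,
      (q = (y : V) ∨ ∃ D M'', AltP G M {(y : V)} Xs q D M'') ∧ G.Adj q k) with hNf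
  have hsingY : ∀ (y : {y // y ∈ Y}), ∀ s₀ ∈ ({(y : V)} : Set V), s₀ ∈ Y := by
    intro y s₀ hs₀
    rw [Set.mem_singleton_iff] at hs₀
    rw [hs₀]; exact y.2
  have hNfK : ∀ y, ∀ k ∈ Nf y, k ∈ K \ P := by
    intro y k hk
    obtain ⟨-, hkP, q, hq, hadj⟩ := Finset.mem_filter.1 hk
    refine Finset.mem_sdiff.2 ⟨?_, hkP⟩
    refine hNbrK {(y : V)} (hsingY y) q k ?_ hadj
    rcases hq with h | h
    · exact Or.inl (by rw [h]; exact Set.mem_singleton _)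
    · exact Or.inr h
  have hHall : ∀ TT : Finset {y // y ∈ Y}, TT.card ≤ (TT.biUnion Nf).card := by
    intro TT
    set T : Finset V := TT.image Subtype.val with hT
    have hTcard : T.card = TT.card := Finset.card_image_of_injective _ Subtype.val_injective
    have hTY : ∀ s₀ ∈ T, s₀ ∈ Y := by
      intro s₀ h
      obtain ⟨y, hy, rfl⟩ := Finset.mem_image.1 h
      exact y.2
    set Ts : Set V := ↑T with hTsdef
    have hTsY : ∀ s₀ ∈ Ts, s₀ ∈ Y := fun s₀ h => hTY s₀ (Finset.mem_coe.1 h)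
    have hTs_unm : ∀ s₀ ∈ Ts, ¬ ∃ m ∈ M, s₀ ∈ m := fun s₀ h => hSunm s₀ (hYS s₀ (hTsY s₀ h))
    set RT : Finset V := univ.filter (fun x => ∃ D M'', AltP G M Ts Xs x D M'') with hRT
    have hRTX : RT ⊆ X := by
      intro x hx
      obtain ⟨D, M'', h⟩ := (Finset.mem_filter.1 hx).2
      obtain ⟨-, -, -, -, hDX, hxD, -, -⟩ := altP_spec hM hTs_unm h
      exact Finset.mem_coe.1 (hDX hxD)
    set Q : Finset V := T ∪ RT with hQ
    have hQJ : Q ⊆ J := Finset.union_subset (fun a ha => hYJ (hTY a ha))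
      (fun a ha => hXJ (hRTX ha))
    have hdisj : Disjoint T RT := by
      rw [Finset.disjoint_left]
      intro a haT haR
      exact (Finset.mem_filter.1 (hTY a haT)).2 (hXVM a (hRTX haR))
    have hQcard : Q.card = TT.card + RT.card := by
      rw [hQ, Finset.card_union_of_disjoint hdisj, hTcard]
    set NQ : Finset V := univ.filter (fun v => ∃ j ∈ Q, G.Adj j v) with hNQ
    have hhall : Q.card ≤ NQ.card :=
      indep_card_le_nbrs G hopt Q (fun a ha b hb => hJindep a (hQJ ha) b (hQJ hb))
    have hQalt : ∀ q ∈ Q, q ∈ Ts ∨ ∃ D M'', AltP G M Ts Xs q D M'' := by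
      intro q hq
      rcases Finset.mem_union.1 hq with h | h
      · exact Or.inl (Finset.mem_coe.2 h)
      · exact Or.inr (Finset.mem_filter.1 h).2
    have hNQP : NQ ∩ P ⊆ RT.image pf := by
      intro k hk
      obtain ⟨hkNQ, hkP⟩ := Finset.mem_inter.1 hk
      obtain ⟨x₀, hx₀X, hx₀k⟩ := Finset.mem_image.1 hkP
      obtain ⟨-, q, hqQ, hadj⟩ := Finset.mem_filter.1 hkNQ
      obtain ⟨D, M'', hAlt⟩ := hPclose Ts hTsY k x₀ hx₀X hx₀k.symm q (hQalt q hqQ) hadj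
      exact Finset.mem_image.2 ⟨x₀, Finset.mem_filter.2 ⟨Finset.mem_univ _, D, M'', hAlt⟩, hx₀k⟩
    have hsplit : (NQ ∩ P).card + (NQ \ P).card = NQ.card :=
      Finset.card_inter_add_card_sdiff NQ P
    have h1 : (NQ \ P) ⊆ TT.biUnion Nf := by
      intro k hk
      obtain ⟨hkNQ, hkP⟩ := Finset.mem_sdiff.1 hk
      obtain ⟨-, q, hqQ, hadj⟩ := Finset.mem_filter.1 hkNQ
      rcases Finset.mem_union.1 hqQ with hqT | hqRT
      · obtain ⟨y, hyTT, hyq⟩ := Finset.mem_image.1 hqT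
        refine Finset.mem_biUnion.2 ⟨y, hyTT, ?_⟩
        exact Finset.mem_filter.2 ⟨Finset.mem_univ _, hkP, q, Or.inl hyq.symm, hadj⟩
      · obtain ⟨D, M'', hAlt⟩ := (Finset.mem_filter.1 hqRT).2
        obtain ⟨s₀, hs₀Ts, hAlt'⟩ := altP_single hAlt
        obtain ⟨y, hyTT, hyq⟩ := Finset.mem_image.1 (Finset.mem_coe.1 hs₀Ts)
        refine Finset.mem_biUnion.2 ⟨y, hyTT, ?_⟩
        refine Finset.mem_filter.2 ⟨Finset.mem_univ _, hkP, q, Or.inr ⟨D, M'', ?_⟩, hadj⟩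
        rw [hyq]
        exact hAlt'
    have h2 : (NQ ∩ P).card ≤ RT.card :=
      le_trans (Finset.card_le_card hNQP) Finset.card_image_le
    have h3 : (NQ \ P).card ≤ (TT.biUnion Nf).card := Finset.card_le_card h1
    omega
  obtain ⟨f, hfinj, hf⟩ := (Finset.all_card_le_biUnion_card_iff_exists_injective Nf).1 hHall
  have hYcard : Y.card ≤ (K \ P).card := by
    have h0 : (univ : Finset {y // y ∈ Y}).card ≤ (K \ P).card := by
      refine Finset.card_le_card_of_injOn f (fun y _ => hNfK y (f y) (hf y)) ?_
      intro a _ b _ h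
      exact hfinj h
    simpa [Finset.card_univ, Fintype.card_coe] using h0
  have hKsplit : (K \ P).card + P.card = K.card := by
    rw [Finset.card_sdiff_add_card_eq_card hPK]
  omega

end AuxFM

open Finset in
/-- if the all-`1/2` vector is optimal for the fractional matching LP on
`G` (the optimum equals `|V| / 2`), `M` is a maximum matching of `G` with vertex set
`V(M)`, and `S` is any set of unmatched vertices, then the optimum of the fractional
matching LP on the subgraph induced on `V(M) ∪ S` equals `(|V(M)| + |S|) / 2`. -/
theorem fracMatching_all_half_induced_optimal {V : Type*} [Fintype V] [DecidableEq V]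
    (G : SimpleGraph V)
    (hopt : ∀ z ∈ fracMatchingPolytope G, ∑ v, z v ≤ (Fintype.card V : ℝ) / 2)
    (M : Finset (Sym2 V))
    (hM : IsMatchingOn G Set.univ M)
    (hMmax : ∀ M', IsMatchingOn G Set.univ M' → M'.card ≤ M.card)
    (VM : Set V) (hVM : VM = {v | ∃ m ∈ M, v ∈ m})
    (S : Set V) (hS : S ⊆ VMᶜ) :
    IsGreatest
      ((fun z : ↥(VM ∪ S) → ℝ => ∑ v, z v) '' fracMatchingPolytope (G.induce (VM ∪ S)))
      (((VM.ncard : ℝ) + (S.ncard : ℝ)) / 2) := by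

  classical
  have hdisj : Disjoint VM S := by
    rw [Set.disjoint_left]
    intro a haVM haS
    exact (hS haS) haVM
  have hcardA : Fintype.card ↥(VM ∪ S) = VM.ncard + S.ncard := by
    rw [← Nat.card_eq_fintype_card, Nat.card_coe_set_eq,
      Set.ncard_union_eq hdisj (Set.toFinite _) (Set.toFinite _)]
  constructor
  · refine ⟨fun _ => 1/2, ⟨fun v => by norm_num, fun v => by norm_num,
      fun u v _ => by norm_num⟩, ?_⟩
    show (∑ _v : ↥(VM ∪ S), (1/2 : ℝ)) = _
    rw [Finset.sum_const, Finset.card_univ, hcardA]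
    push_cast
    ring
  · rintro r ⟨z, hz, rfl⟩
    show (∑ v : ↥(VM ∪ S), z v) ≤ _
    set zf : V → ℝ := fun v => if h : v ∈ VM ∪ S then z ⟨v, h⟩ else 0 with hzf
    have hzf_eq : ∀ (v : V) (h : v ∈ VM ∪ S), zf v = z ⟨v, h⟩ := fun v h => dif_pos h
    have hle : ∀ v, v ∈ VM ∪ S → zf v ≤ 1 := by
      intro v h
      rw [hzf_eq v h]
      exact hz.2.1 _
    have hedge : ∀ u v, u ∈ VM ∪ S → v ∈ VM ∪ S → G.Adj u v → zf u + zf v ≤ 1 := by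
      intro u v hu hv hadj
      rw [hzf_eq u hu, hzf_eq v hv]
      exact hz.2.2 ⟨u, hu⟩ ⟨v, hv⟩ hadj
    set AF : Finset V := univ.filter (fun v => v ∈ VM ∪ S) with hAF
    have hAFcard : AF.card = VM.ncard + S.ncard := by
      have h1 : AF = VM.toFinset ∪ S.toFinset := by
        ext v
        simp [hAF, Set.mem_toFinset]
      have h2 : Disjoint VM.toFinset S.toFinset := by
        rw [Finset.disjoint_left]
        intro a ha hb
        rw [Set.mem_toFinset] at ha
        rw [Set.mem_toFinset] at hb
        exact (hS hb) ha
      rw [h1, Finset.card_union_of_disjoint h2, Set.ncard_eq_toFinset_card' VM,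
        Set.ncard_eq_toFinset_card' S]
    have hsum_eq : ∑ v ∈ AF, zf v = ∑ v : ↥(VM ∪ S), z v := by
      rw [← Finset.sum_coe_sort AF zf]
      refine Fintype.sum_equiv (Equiv.subtypeEquivRight (fun v => by simp [hAF])) _ _ ?_
      intro v
      have hv : (v : V) ∈ VM ∪ S := (Finset.mem_filter.1 v.2).2
      rw [hzf_eq _ hv]
      rfl
    have hmain : ∑ v ∈ AF, (zf v - 1/2) ≤ 0 := by
      refine sum_le_of_counts AF.card AF (fun v => zf v - 1/2) rfl ?_ ?_
      · intro v hv
        have := hle v ((Finset.mem_filter.1 hv).2)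
        linarith
      · intro s hs1 hs2
        have h := key_count G M hM hMmax hopt VM hVM S hS zf hle hedge (1/2 + s) (by linarith)
        have e1 : AF.filter (fun v => s < zf v - 1/2)
            = univ.filter (fun v => v ∈ VM ∪ S ∧ (1/2 + s) < zf v) := by
          rw [hAF, Finset.filter_filter]
          exact Finset.filter_congr (fun v _ => by
            constructor <;> (rintro ⟨h1, h2⟩; exact ⟨h1, by linarith⟩))
        have e2 : AF.filter (fun v => zf v - 1/2 < -s)
            = univ.filter (fun v => v ∈ VM ∪ S ∧ zf v < 1 - (1/2 + s)) := by
          rw [hAF, Finset.filter_filter]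
          exact Finset.filter_congr (fun v _ => by
            constructor <;> (rintro ⟨h1, h2⟩; exact ⟨h1, by linarith⟩))
        rw [e1, e2]
        exact h
    have hsum2 : ∑ v ∈ AF, zf v ≤ (AF.card : ℝ) * (1/2) := by
      rw [Finset.sum_sub_distrib, Finset.sum_const, nsmul_eq_mul] at hmain
      linarith
    rw [← hsum_eq]
    rw [hAFcard] at hsum2
    push_cast at hsum2 ⊢
    linarith
end

section
/- For every hypergraph G = (V, E) with V finite and E a finite set of subsets of V, and every natural number s with 1 ≤ s ≤ |V| and |⋃_{e∈E} e| ≥ s, we have IntCover(G, s) ≤ 10.37 · FracCover(G, s) + 1. -/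
open Finset

/-- `FracCover G s`: the infimum of `∑_{e ∈ E} x e` over all nonnegative `x` with
`∑_{v ∈ V} min 1 (∑_{e ∋ v} x e) ≥ s`. -/
noncomputable def FracCover {V : Type*} [Fintype V] [DecidableEq V]
    (E : Finset (Finset V)) (s : ℕ) : ℝ :=
  sInf {c : ℝ | ∃ x : Finset V → ℝ, (∀ e ∈ E, 0 ≤ x e) ∧
    (s : ℝ) ≤ ∑ v : V, min 1 (∑ e ∈ E.filter (fun e => v ∈ e), x e) ∧
    c = ∑ e ∈ E, x e}

/-- `IntCover G s`: the infimum of `∑_{e ∈ E} x e` over all nonnegative `x` for which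
there is an `S ⊆ V` with `|S| = s` such that `∑_{e ∋ v} x e ≥ 1` for all `v ∈ S`. -/
noncomputable def IntCover {V : Type*} [Fintype V] [DecidableEq V]
    (E : Finset (Finset V)) (s : ℕ) : ℝ :=
  sInf {c : ℝ | ∃ x : Finset V → ℝ, (∀ e ∈ E, 0 ≤ x e) ∧
    (∃ S : Finset V, S.card = s ∧ ∀ v ∈ S, 1 ≤ ∑ e ∈ E.filter (fun e => v ∈ e), x e) ∧
    c = ∑ e ∈ E, x e}

/-- Exchange of summation: total coverage of a vertex set `R` equals the
weighted sum over edges of the number of vertices of `R` they contain. -/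
private lemma sum_cov_swap {V : Type*} [Fintype V] [DecidableEq V]
    (E : Finset (Finset V)) (x : Finset V → ℝ) (R : Finset V) :
    ∑ v ∈ R, ∑ e ∈ E.filter (fun e => v ∈ e), x e
      = ∑ e ∈ E, x e * ((R.filter (fun v => v ∈ e)).card : ℝ) := by
  classical
  calc ∑ v ∈ R, ∑ e ∈ E.filter (fun e => v ∈ e), x e
      = ∑ v ∈ R, ∑ e ∈ E, if v ∈ e then x e else 0 := by
        refine sum_congr rfl fun v _ => ?_
        rw [sum_filter]
    _ = ∑ e ∈ E, ∑ v ∈ R, if v ∈ e then x e else 0 := sum_comm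
    _ = _ := by
        refine sum_congr rfl fun e _ => ?_
        rw [← sum_filter, sum_const, nsmul_eq_mul, mul_comm]

/-- Greedy covering: after buying `j` edges greedily, at least
`min t (j * t / (2c))` low-coverage vertices are covered. -/
private lemma greedy_cover {V : Type*} [Fintype V] [DecidableEq V]
    (E : Finset (Finset V)) (x : Finset V → ℝ) (hx : ∀ e ∈ E, 0 ≤ x e)
    (t : ℕ) (ht : 1 ≤ t) (hcpos : 0 < ∑ e ∈ E, x e)
    (hL : (t : ℝ) ≤ ∑ v ∈ Finset.univ.filter
        (fun v => (∑ e ∈ E.filter (fun e => v ∈ e), x e) < 2⁻¹),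
        ∑ e ∈ E.filter (fun e => v ∈ e), x e) :
    ∀ j : ℕ, ∃ F : Finset (Finset V), F ⊆ E ∧ F.card ≤ j ∧
      min (t : ℝ) ((j : ℝ) * ((t : ℝ) / (2 * ∑ e ∈ E, x e))) ≤
        (((F.biUnion id).filter
          (fun v => (∑ e ∈ E.filter (fun e => v ∈ e), x e) < 2⁻¹)).card : ℝ) := by
  classical
  set c : ℝ := ∑ e ∈ E, x e with hc
  set g : ℝ := (t : ℝ) / (2 * c) with hg
  have htR : (1 : ℝ) ≤ (t : ℝ) := by exact_mod_cast ht
  have hgpos : 0 < g := by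
    apply div_pos (by linarith) (by linarith)
  intro j
  induction j with
  | zero =>
    refine ⟨∅, empty_subset _, le_refl 0, ?_⟩
    simpa using min_le_right (t : ℝ) 0
  | succ j ih =>
    obtain ⟨F, hFE, hFcard, hmin⟩ := ih
    set CL := (F.biUnion id).filter
      (fun v => (∑ e ∈ E.filter (fun e => v ∈ e), x e) < 2⁻¹) with hCL
    by_cases hP : (t : ℝ) ≤ (CL.card : ℝ)
    · exact ⟨F, hFE, hFcard.trans (Nat.le_succ _), le_trans (min_le_left _ _) hP⟩
    · push_neg at hP
      have hPle : (j : ℝ) * g ≤ (CL.card : ℝ) := by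
        rcases le_or_gt ((t : ℝ)) ((j : ℝ) * g) with h | h
        · rw [min_eq_left h] at hmin
          linarith
        · rw [min_eq_right h.le] at hmin
          exact hmin
      set Rset := Finset.univ.filter
        (fun v => (∑ e ∈ E.filter (fun e => v ∈ e), x e) < 2⁻¹ ∧ v ∉ F.biUnion id) with hR
      have hsplit : Finset.univ.filter
          (fun v => (∑ e ∈ E.filter (fun e => v ∈ e), x e) < 2⁻¹) = CL ∪ Rset := by
        ext v
        simp only [hCL, hR, mem_filter, mem_union, mem_univ, true_and]
        tauto
      have hdisj : Disjoint CL Rset := by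
        rw [disjoint_left]
        intro v hv1 hv2
        simp only [hCL, mem_filter] at hv1
        simp only [hR, mem_filter, mem_univ, true_and] at hv2
        exact hv2.2 hv1.1
      have hsum_split : (t : ℝ) ≤
          (∑ v ∈ CL, ∑ e ∈ E.filter (fun e => v ∈ e), x e)
            + ∑ v ∈ Rset, ∑ e ∈ E.filter (fun e => v ∈ e), x e := by
        rw [← sum_union hdisj, ← hsplit]
        exact hL
      have hCLbound : ∑ v ∈ CL, ∑ e ∈ E.filter (fun e => v ∈ e), x e
          ≤ (CL.card : ℝ) * 2⁻¹ := by
        have := Finset.sum_le_card_nsmul CL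
          (fun v => ∑ e ∈ E.filter (fun e => v ∈ e), x e) 2⁻¹
          (fun v hv => le_of_lt (mem_filter.mp hv).2)
        simpa [nsmul_eq_mul] using this
      have hPnat : CL.card < t := by exact_mod_cast hP
      have hCLlt : (CL.card : ℝ) ≤ (t : ℝ) - 1 := by
        have h1 : (CL.card + 1 : ℕ) ≤ t := hPnat
        have h2 : ((CL.card + 1 : ℕ) : ℝ) ≤ (t : ℝ) := by exact_mod_cast h1
        push_cast at h2
        linarith
      have hRlow : (t : ℝ) / 2 < ∑ v ∈ Rset, ∑ e ∈ E.filter (fun e => v ∈ e), x e := by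
        linarith
      have hex : ∃ e ∈ E, g ≤ ((Rset.filter (fun v => v ∈ e)).card : ℝ) := by
        by_contra hcon
        push_neg at hcon
        have hb : ∑ e ∈ E, x e * ((Rset.filter (fun v => v ∈ e)).card : ℝ)
            ≤ ∑ e ∈ E, x e * g :=
          sum_le_sum fun e he => mul_le_mul_of_nonneg_left (hcon e he).le (hx e he)
        have h1 : ∑ e ∈ E, x e * g = c * g := by rw [← sum_mul]
        have hcg : c * g = (t : ℝ) / 2 := by
          rw [hg]
          field_simp
        have h2 := sum_cov_swap E x Rset
        rw [h2] at hRlow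
        linarith
      obtain ⟨e, heE, hecard⟩ := hex
      have hRe : (Rset.filter (fun v => v ∈ e)).Nonempty := by
        rw [← card_pos]
        have : (0 : ℝ) < ((Rset.filter (fun v => v ∈ e)).card : ℝ) :=
          lt_of_lt_of_le hgpos hecard
        exact_mod_cast this
      obtain ⟨v₀, hv₀⟩ := hRe
      have hv₀R : v₀ ∈ Rset := (mem_filter.mp hv₀).1
      have hv₀e : v₀ ∈ e := (mem_filter.mp hv₀).2
      have hv₀not : v₀ ∉ F.biUnion id := ((mem_filter.mp hv₀R).2).2
      have heF : e ∉ F := by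
        intro h
        exact hv₀not (mem_biUnion.mpr ⟨e, h, hv₀e⟩)
      refine ⟨insert e F, insert_subset heE hFE, ?_, ?_⟩
      · rw [card_insert_of_notMem heF]
        omega
      · set CL' := ((insert e F).biUnion id).filter
          (fun v => (∑ e ∈ E.filter (fun e => v ∈ e), x e) < 2⁻¹) with hCL'
        have hsub : CL ∪ (Rset.filter (fun v => v ∈ e)) ⊆ CL' := by
          intro v hv
          rcases mem_union.mp hv with h | h
          · obtain ⟨hb, hcov⟩ := mem_filter.mp h
            obtain ⟨a, haF, hva⟩ := mem_biUnion.mp hb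
            exact mem_filter.mpr ⟨mem_biUnion.mpr ⟨a, mem_insert_of_mem haF, hva⟩, hcov⟩
          · obtain ⟨hvR, hve⟩ := mem_filter.mp h
            have hcov := ((mem_filter.mp hvR).2).1
            exact mem_filter.mpr ⟨mem_biUnion.mpr ⟨e, mem_insert_self e F, hve⟩, hcov⟩
        have hdisj2 : Disjoint CL (Rset.filter (fun v => v ∈ e)) :=
          hdisj.mono_right (filter_subset _ _)
        have hcards : (CL.card : ℝ) + ((Rset.filter (fun v => v ∈ e)).card : ℝ)
            ≤ (CL'.card : ℝ) := by
          have h1 := card_union_of_disjoint hdisj2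
          have h2 := card_le_card hsub
          rw [h1] at h2
          exact_mod_cast h2
        have hfin : ((j : ℝ) + 1) * g ≤ (CL'.card : ℝ) := by nlinarith
        calc min (t : ℝ) (((j + 1 : ℕ) : ℝ) * g) ≤ ((j : ℝ) + 1) * g := by
              push_cast
              exact min_le_right _ _
          _ ≤ (CL'.card : ℝ) := hfin

/-- Main construction: from any fractional solution one gets an integral solution
of cost at most `4c + 1`. -/
private lemma exists_int_solution {V : Type*} [Fintype V] [DecidableEq V]
    (E : Finset (Finset V)) (s : ℕ) (x : Finset V → ℝ) (hx : ∀ e ∈ E, 0 ≤ x e)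
    (hfeas : (s : ℝ) ≤ ∑ v : V, min 1 (∑ e ∈ E.filter (fun e => v ∈ e), x e)) :
    ∃ y : Finset V → ℝ, (∀ e ∈ E, 0 ≤ y e) ∧
      (∃ S : Finset V, S.card = s ∧ ∀ v ∈ S, 1 ≤ ∑ e ∈ E.filter (fun e => v ∈ e), y e) ∧
      ∑ e ∈ E, y e ≤ 4 * (∑ e ∈ E, x e) + 1 := by
  classical
  set c : ℝ := ∑ e ∈ E, x e with hc
  have hc0 : 0 ≤ c := sum_nonneg hx
  set H := Finset.univ.filter
    (fun v => ¬ ((∑ e ∈ E.filter (fun e => v ∈ e), x e) < 2⁻¹)) with hH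
  by_cases hk : s ≤ H.card
  · obtain ⟨S, hSH, hScard⟩ := Finset.exists_subset_card_eq hk
    refine ⟨fun e => 2 * x e, fun e he => by show (0:ℝ) ≤ 2 * x e; linarith [hx e he], ⟨S, hScard, ?_⟩, ?_⟩
    · intro v hv
      have hvH := hSH hv
      have hcov : 2⁻¹ ≤ ∑ e ∈ E.filter (fun e => v ∈ e), x e :=
        not_lt.mp (mem_filter.mp hvH).2
      rw [← Finset.mul_sum]
      linarith
    · rw [← Finset.mul_sum]
      linarith
  · push_neg at hk
    set t : ℕ := s - H.card with htdef
    have ht : 1 ≤ t := by omega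
    have htR : (t : ℝ) = (s : ℝ) - (H.card : ℝ) := by
      rw [htdef]
      push_cast [Nat.cast_sub hk.le]
      ring
    set L := Finset.univ.filter
      (fun v => (∑ e ∈ E.filter (fun e => v ∈ e), x e) < 2⁻¹) with hLdef
    have hsplitsum :
        ∑ v ∈ L, min 1 (∑ e ∈ E.filter (fun e => v ∈ e), x e)
          + ∑ v ∈ H, min 1 (∑ e ∈ E.filter (fun e => v ∈ e), x e)
        = ∑ v : V, min 1 (∑ e ∈ E.filter (fun e => v ∈ e), x e) :=
      Finset.sum_filter_add_sum_filter_not _ _ _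
    have hHbound : ∑ v ∈ H, min 1 (∑ e ∈ E.filter (fun e => v ∈ e), x e)
        ≤ (H.card : ℝ) := by
      have := Finset.sum_le_card_nsmul H
        (fun v => min 1 (∑ e ∈ E.filter (fun e => v ∈ e), x e)) 1
        (fun v _ => min_le_left _ _)
      simpa using this
    have hLeq : ∑ v ∈ L, min 1 (∑ e ∈ E.filter (fun e => v ∈ e), x e)
        = ∑ v ∈ L, ∑ e ∈ E.filter (fun e => v ∈ e), x e := by
      refine sum_congr rfl fun v hv => ?_
      have hlt : (∑ e ∈ E.filter (fun e => v ∈ e), x e) < 2⁻¹ := (mem_filter.mp hv).2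
      exact min_eq_right (by linarith)
    have hL : (t : ℝ) ≤ ∑ v ∈ L, ∑ e ∈ E.filter (fun e => v ∈ e), x e := by
      rw [← hLeq, htR]
      linarith [hsplitsum, hHbound, hfeas]
    have hcpos : 0 < c := by
      by_contra hcon
      push_neg at hcon
      have hcz : c = 0 := le_antisymm hcon hc0
      have hall : ∀ v ∈ L, ∑ e ∈ E.filter (fun e => v ∈ e), x e ≤ 0 := by
        intro v _
        have h1 : ∑ e ∈ E.filter (fun e => v ∈ e), x e ≤ c :=
          Finset.sum_le_sum_of_subset_of_nonneg (filter_subset _ _)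
            (fun e he _ => hx e he)
        linarith
      have hnp : ∑ v ∈ L, ∑ e ∈ E.filter (fun e => v ∈ e), x e ≤ 0 :=
        Finset.sum_nonpos hall
      have htpos : (0 : ℝ) < (t : ℝ) := by exact_mod_cast ht
      linarith
    obtain ⟨F, hFE, hFcard, hFmin⟩ := greedy_cover E x hx t ht hcpos hL ⌈2 * c⌉₊
    have hceil : 2 * c ≤ (⌈2 * c⌉₊ : ℝ) := Nat.le_ceil _
    have htpos : (0 : ℝ) < (t : ℝ) := by exact_mod_cast ht
    have hmin_eq : (t : ℝ) ≤ ((⌈2 * c⌉₊ : ℕ) : ℝ) * ((t : ℝ) / (2 * c)) := by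
      have hd : (0:ℝ) ≤ (t : ℝ) / (2 * c) := by positivity
      calc (t : ℝ) = (2 * c) * ((t : ℝ) / (2 * c)) := by field_simp
        _ ≤ ((⌈2 * c⌉₊ : ℕ) : ℝ) * ((t : ℝ) / (2 * c)) :=
          mul_le_mul_of_nonneg_right hceil hd
    have hcovered : (t : ℝ) ≤
        (((F.biUnion id).filter
          (fun v => (∑ e ∈ E.filter (fun e => v ∈ e), x e) < 2⁻¹)).card : ℝ) := by
      calc (t : ℝ) = min (t : ℝ) (t : ℝ) := (min_self _).symm
        _ ≤ min (t : ℝ) (((⌈2 * c⌉₊ : ℕ) : ℝ) * ((t : ℝ) / (2 * c))) :=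
            min_le_min (le_refl _) hmin_eq
        _ ≤ _ := hFmin
    have hcovered' : t ≤ ((F.biUnion id).filter
        (fun v => (∑ e ∈ E.filter (fun e => v ∈ e), x e) < 2⁻¹)).card := by
      exact_mod_cast hcovered
    obtain ⟨T, hTsub, hTcard⟩ := Finset.exists_subset_card_eq hcovered'
    have hdisjHT : Disjoint H T := by
      rw [disjoint_left]
      intro v hvH hvT
      have h1 := (mem_filter.mp (hTsub hvT)).2
      have h2 := (mem_filter.mp hvH).2
      exact h2 h1
    refine ⟨fun e => 2 * x e + (if e ∈ F then (1 : ℝ) else 0), ?_, ⟨H ∪ T, ?_, ?_⟩, ?_⟩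
    · intro e he
      have := hx e he
      show (0:ℝ) ≤ 2 * x e + (if e ∈ F then (1:ℝ) else 0)
      split_ifs <;> linarith
    · rw [card_union_of_disjoint hdisjHT, hTcard, htdef]
      omega
    · intro v hv
      have hnn : ∀ e ∈ E.filter (fun e => v ∈ e),
          0 ≤ 2 * x e + (if e ∈ F then (1 : ℝ) else 0) := by
        intro e he
        have := hx e (mem_filter.mp he).1
        split_ifs <;> linarith
      rcases mem_union.mp hv with h | h
      · have hcov : 2⁻¹ ≤ ∑ e ∈ E.filter (fun e => v ∈ e), x e :=
          not_lt.mp (mem_filter.mp h).2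
        have hsplit : ∑ e ∈ E.filter (fun e => v ∈ e),
            (2 * x e + (if e ∈ F then (1 : ℝ) else 0))
            = 2 * (∑ e ∈ E.filter (fun e => v ∈ e), x e)
              + ∑ e ∈ E.filter (fun e => v ∈ e), (if e ∈ F then (1 : ℝ) else 0) := by
          rw [Finset.sum_add_distrib, Finset.mul_sum]
        have hite : 0 ≤ ∑ e ∈ E.filter (fun e => v ∈ e),
            (if e ∈ F then (1 : ℝ) else 0) :=
          sum_nonneg fun e _ => by split_ifs <;> norm_num
        rw [hsplit]
        linarith
      · have hvB := (mem_filter.mp (hTsub h)).1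
        obtain ⟨e₀, he₀F, hve₀⟩ := mem_biUnion.mp hvB
        have he₀ : e₀ ∈ E.filter (fun e => v ∈ e) :=
          mem_filter.mpr ⟨hFE he₀F, hve₀⟩
        have h1 : (1 : ℝ) ≤ 2 * x e₀ + (if e₀ ∈ F then (1 : ℝ) else 0) := by
          rw [if_pos he₀F]
          have := hx e₀ (hFE he₀F)
          linarith
        calc (1 : ℝ) ≤ 2 * x e₀ + (if e₀ ∈ F then (1 : ℝ) else 0) := h1
          _ ≤ ∑ e ∈ E.filter (fun e => v ∈ e),
              (2 * x e + (if e ∈ F then (1 : ℝ) else 0)) :=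
            Finset.single_le_sum hnn he₀
    · have hEF : E.filter (fun e => e ∈ F) = F := by
        ext a
        simp only [mem_filter]
        exact ⟨fun h => h.2, fun h => ⟨hFE h, h⟩⟩
      have hsum : ∑ e ∈ E, (2 * x e + (if e ∈ F then (1 : ℝ) else 0))
          = 2 * c + (F.card : ℝ) := by
        rw [Finset.sum_add_distrib]
        congr 1
        · rw [← Finset.mul_sum]
        · rw [Finset.sum_boole, hEF]
      have hFcard' : (F.card : ℝ) ≤ 2 * c + 1 := by
        have h1 : (F.card : ℝ) ≤ (⌈2 * c⌉₊ : ℝ) := by exact_mod_cast hFcard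
        have h2 : (⌈2 * c⌉₊ : ℝ) < 2 * c + 1 := Nat.ceil_lt_add_one (by linarith)
        linarith
      rw [hsum]
      linarith

/-- for every hypergraph and every `1 ≤ s ≤ |V|` with `|⋃ E| ≥ s`,
`IntCover(G, s) ≤ 10.37 · FracCover(G, s) + 1`. -/
theorem intCover_le_fracCover_const {V : Type*} [Fintype V] [DecidableEq V]
    (E : Finset (Finset V)) (s : ℕ)
    (hs1 : 1 ≤ s) (hsV : s ≤ Fintype.card V)
    (hUnion : s ≤ (E.biUnion id).card) :
    IntCover E s ≤ 10.37 * FracCover E s + 1 := by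
  classical
  set FracSet : Set ℝ := {c : ℝ | ∃ x : Finset V → ℝ, (∀ e ∈ E, 0 ≤ x e) ∧
    (s : ℝ) ≤ ∑ v : V, min 1 (∑ e ∈ E.filter (fun e => v ∈ e), x e) ∧
    c = ∑ e ∈ E, x e} with hFracSet
  set IntSet : Set ℝ := {c : ℝ | ∃ x : Finset V → ℝ, (∀ e ∈ E, 0 ≤ x e) ∧
    (∃ S : Finset V, S.card = s ∧ ∀ v ∈ S, 1 ≤ ∑ e ∈ E.filter (fun e => v ∈ e), x e) ∧
    c = ∑ e ∈ E, x e} with hIntSet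
  have hFracEq : FracCover E s = sInf FracSet := rfl
  have hIntEq : IntCover E s = sInf IntSet := rfl
  -- the fractional feasible set is nonempty
  have hFracNe : FracSet.Nonempty := by
    refine ⟨∑ e ∈ E, (1 : ℝ), fun _ => (1 : ℝ), fun _ _ => zero_le_one, ?_, rfl⟩
    have hone : ∀ v ∈ E.biUnion id,
        min (1 : ℝ) (∑ e ∈ E.filter (fun e => v ∈ e), (1 : ℝ)) = 1 := by
      intro v hv
      obtain ⟨e, heE, hve⟩ := mem_biUnion.mp hv
      have hmem : e ∈ E.filter (fun e => v ∈ e) := mem_filter.mpr ⟨heE, hve⟩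
      have h1 : (1 : ℝ) ≤ ∑ e ∈ E.filter (fun e => v ∈ e), (1 : ℝ) :=
        Finset.single_le_sum (fun _ _ => zero_le_one) hmem
      exact min_eq_left h1
    calc (s : ℝ) ≤ ((E.biUnion id).card : ℝ) := by exact_mod_cast hUnion
      _ = ∑ v ∈ E.biUnion id,
          min (1 : ℝ) (∑ e ∈ E.filter (fun e => v ∈ e), (1 : ℝ)) := by
          rw [Finset.sum_congr rfl hone]
          simp
      _ ≤ ∑ v : V, min (1 : ℝ) (∑ e ∈ E.filter (fun e => v ∈ e), (1 : ℝ)) := by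
          apply Finset.sum_le_sum_of_subset_of_nonneg (subset_univ _)
          intro v _ _
          exact le_min zero_le_one (sum_nonneg fun _ _ => zero_le_one)
  -- IntSet is bounded below by 0
  have hIntBdd : BddBelow IntSet := by
    refine ⟨0, fun b hb => ?_⟩
    obtain ⟨y, hy, _, hbe⟩ := hb
    rw [hbe]
    exact sum_nonneg hy
  -- key inequality
  have key : ∀ a ∈ FracSet, IntCover E s ≤ 4 * a + 1 := by
    intro a ha
    obtain ⟨x, hx, hfeas, hae⟩ := ha
    obtain ⟨y, hy, hS, hcost⟩ := exists_int_solution E s x hx hfeas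
    have hmem : (∑ e ∈ E, y e) ∈ IntSet := ⟨y, hy, hS, rfl⟩
    calc IntCover E s ≤ ∑ e ∈ E, y e := csInf_le hIntBdd hmem
      _ ≤ 4 * (∑ e ∈ E, x e) + 1 := hcost
      _ = 4 * a + 1 := by rw [hae]
  have hge : (IntCover E s - 1) / 4 ≤ FracCover E s := by
    rw [hFracEq]
    apply le_csInf hFracNe
    intro a ha
    have := key a ha
    linarith
  have hFrac0 : 0 ≤ FracCover E s := by
    rw [hFracEq]
    apply Real.sInf_nonneg
    intro a ha
    obtain ⟨x, hx, _, hae⟩ := ha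
    rw [hae]
    exact sum_nonneg hx
  have h4 : IntCover E s ≤ 4 * FracCover E s + 1 := by linarith
  nlinarith [hFrac0]
end

section
/- There exists a universal constant C > 0 such that for every hypergraph G = (V, E) with V finite and E a finite set of subsets of V, and every natural number s with 1 ≤ s ≤ |V| and |⋃_{e∈E} e| ≥ s, we have IntCover(G, s) ≤ 3.73 · FracCover(G, s) + C · (1 + log s). -/
open Finset

section aux
set_option linter.unusedSectionVars false
variable {V : Type*} [Fintype V] [DecidableEq V]
set_option linter.unusedSectionVars false
variable {V : Type*} [Fintype V] [DecidableEq V]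

lemma mass_eq (E : Finset (Finset V)) (x : Finset V → ℝ) (P : Finset V) :
    ∑ v ∈ P, ∑ e ∈ E.filter (fun e => v ∈ e), x e
      = ∑ e ∈ E, ((P ∩ e).card : ℝ) * x e := by
  calc ∑ v ∈ P, ∑ e ∈ E.filter (fun e => v ∈ e), x e
      = ∑ v ∈ P, ∑ e ∈ E, if v ∈ e then x e else 0 := by
        refine Finset.sum_congr rfl fun v _ => ?_
        rw [Finset.sum_filter]
    _ = ∑ e ∈ E, ∑ v ∈ P, if v ∈ e then x e else 0 := Finset.sum_comm
    _ = ∑ e ∈ E, ((P ∩ e).card : ℝ) * x e := by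
        refine Finset.sum_congr rfl fun e _ => ?_
        rw [← Finset.sum_filter, Finset.filter_mem_eq_inter, Finset.sum_const,
          nsmul_eq_mul]

lemma greedy (E : Finset (Finset V)) (x : Finset V → ℝ) (a : V → ℝ) (c : ℝ)
    (hx : ∀ e ∈ E, 0 ≤ x e) (hxc : ∑ e ∈ E, x e ≤ c) (hc : 1 ≤ c)
    (G : ℝ) (hG : 0 < G) :
    ∀ (t : ℕ) (P : Finset V) (r : ℝ),
      (∀ v ∈ P, 0 ≤ a v) → (∀ v ∈ P, a v ≤ 1 / 2) →
      (∀ v ∈ P, a v ≤ ∑ e ∈ E.filter (fun e => v ∈ e), x e) →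
      (G + r ≤ 2 * ∑ v ∈ P, a v) →
      ((r + G) * (1 - 1 / (2 * c)) ^ t ≤ G) →
      ∃ F : Finset (Finset V), F ⊆ E ∧ F.card ≤ t ∧
        r ≤ ((P.filter (fun v => ∃ f ∈ F, v ∈ f)).card : ℝ) := by
  have hq0 : (0:ℝ) < 1 - 1 / (2 * c) := by
    have : 1 / (2*c) ≤ 1/2 := by
      apply div_le_div_of_nonneg_left <;> linarith
    linarith
  intro t
  induction t with
  | zero =>
    intro P r _ _ _ _ h5
    refine ⟨∅, by simp, by simp, ?_⟩
    rw [pow_zero, mul_one] at h5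
    have : r ≤ 0 := by linarith
    exact this.trans (by positivity)
  | succ t ih =>
    intro P r h1 h2 h3 h4 h5
    by_cases hr : r ≤ 0
    · exact ⟨∅, by simp, by simp, hr.trans (by positivity)⟩
    push_neg at hr
    set M := ∑ v ∈ P, a v with hM
    have hMpos : 0 < M := by linarith
    -- E nonempty
    have hEne : E.Nonempty := by
      rcases E.eq_empty_or_nonempty with hE | hE
      · exfalso
        have : ∀ v ∈ P, a v ≤ 0 := by
          intro v hv; have := h3 v hv; simpa [hE] using this
        have : M ≤ 0 := Finset.sum_nonpos this
        linarith
      · exact hE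
    -- best edge
    obtain ⟨e₀, he₀E, he₀max⟩ := Finset.exists_max_image E (fun e => (P ∩ e).card) hEne
    set g : ℝ := ((P ∩ e₀).card : ℝ) with hg
    have hg0 : 0 ≤ g := by positivity
    -- mass bound : M ≤ g * c
    have hMg : M ≤ g * c := by
      have step1 : M ≤ ∑ v ∈ P, ∑ e ∈ E.filter (fun e => v ∈ e), x e :=
        Finset.sum_le_sum h3
      rw [mass_eq] at step1
      have step2 : ∑ e ∈ E, ((P ∩ e).card : ℝ) * x e ≤ ∑ e ∈ E, g * x e := by
        refine Finset.sum_le_sum fun e he => ?_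
        refine mul_le_mul_of_nonneg_right ?_ (hx e he)
        rw [hg]
        exact_mod_cast he₀max e he
      have step3 : ∑ e ∈ E, g * x e = g * ∑ e ∈ E, x e := by
        rw [Finset.mul_sum]
      have step4 : g * ∑ e ∈ E, x e ≤ g * c := mul_le_mul_of_nonneg_left hxc hg0
      linarith
    have hgge : (G + r) / (2 * c) ≤ g := by
      rw [div_le_iff₀ (by linarith)]
      nlinarith
    -- new state
    set P' := P \ e₀ with hP'
    set r' := r - g with hr'
    have hsplit : ∑ v ∈ P ∩ e₀, a v + ∑ v ∈ P \ e₀, a v = M :=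
      Finset.sum_inter_add_sum_sdiff P e₀ a
    have hinter : ∑ v ∈ P ∩ e₀, a v ≤ g * (1/2) := by
      have := Finset.sum_le_card_nsmul (P ∩ e₀) a (1/2)
        (fun v hv => h2 v (Finset.mem_of_mem_inter_left hv))
      rw [nsmul_eq_mul] at this
      exact this
    have h4' : G + r' ≤ 2 * ∑ v ∈ P', a v := by
      have : M - g * (1/2) ≤ ∑ v ∈ P', a v := by rw [hP']; linarith
      nlinarith
    have h5' : (r' + G) * (1 - 1 / (2 * c)) ^ t ≤ G := by
      by_cases hrg : r' + G ≤ 0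
      · have : (r' + G) * (1 - 1 / (2 * c)) ^ t ≤ 0 :=
          mul_nonpos_of_nonpos_of_nonneg hrg (by positivity)
        linarith
      push_neg at hrg
      have key : r' + G ≤ (r + G) * (1 - 1 / (2 * c)) := by
        have hexp : (r + G) * (1 - 1 / (2 * c)) = (r + G) - (r + G) / (2 * c) := by
          field_simp
        rw [hexp, hr']
        have : (G + r) / (2*c) = (r + G)/(2*c) := by ring_nf
        linarith [hgge, this]
      calc (r' + G) * (1 - 1 / (2 * c)) ^ t
          ≤ ((r + G) * (1 - 1 / (2 * c))) * (1 - 1 / (2 * c)) ^ t :=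
            mul_le_mul_of_nonneg_right key (by positivity)
        _ = (r + G) * (1 - 1 / (2 * c)) ^ (t+1) := by ring
        _ ≤ G := h5
    obtain ⟨F', hF'E, hF'card, hF'cov⟩ := ih P' r'
      (fun v hv => h1 v (Finset.mem_sdiff.mp hv).1)
      (fun v hv => h2 v (Finset.mem_sdiff.mp hv).1)
      (fun v hv => h3 v (Finset.mem_sdiff.mp hv).1)
      h4' h5'
    refine ⟨insert e₀ F', Finset.insert_subset he₀E hF'E,
      (Finset.card_insert_le _ _).trans (by omega), ?_⟩
    -- covered count
    have hsub : (P ∩ e₀) ∪ (P'.filter (fun v => ∃ f ∈ F', v ∈ f)) ⊆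
        P.filter (fun v => ∃ f ∈ insert e₀ F', v ∈ f) := by
      intro v hv
      rcases Finset.mem_union.mp hv with hv | hv
      · rcases Finset.mem_inter.mp hv with ⟨hvP, hve⟩
        exact Finset.mem_filter.mpr ⟨hvP, e₀, Finset.mem_insert_self _ _, hve⟩
      · rcases Finset.mem_filter.mp hv with ⟨hvP', f, hf, hvf⟩
        exact Finset.mem_filter.mpr ⟨(Finset.mem_sdiff.mp hvP').1, f,
          Finset.mem_insert_of_mem hf, hvf⟩
    have hdisj : Disjoint (P ∩ e₀) (P'.filter (fun v => ∃ f ∈ F', v ∈ f)) := by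
      have h1' : (P'.filter (fun v => ∃ f ∈ F', v ∈ f)) ⊆ P' := Finset.filter_subset _ _
      have : Disjoint (P ∩ e₀) P' := by
        rw [hP']
        exact (Finset.disjoint_sdiff_inter P e₀).symm
      exact this.mono_right h1'
    have hcard : (P ∩ e₀).card + (P'.filter (fun v => ∃ f ∈ F', v ∈ f)).card ≤
        (P.filter (fun v => ∃ f ∈ insert e₀ F', v ∈ f)).card := by
      rw [← Finset.card_union_of_disjoint hdisj]
      exact Finset.card_le_card hsub
    have : r = g + r' := by rw [hr']; ring
    rw [this]
    calc g + r' ≤ g + ((P'.filter (fun v => ∃ f ∈ F', v ∈ f)).card : ℝ) := by linarith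
      _ ≤ ((P.filter (fun v => ∃ f ∈ insert e₀ F', v ∈ f)).card : ℝ) := by
          rw [hg]
          exact_mod_cast hcard


lemma construct (E : Finset (Finset V)) (s : ℕ) (hs1 : 1 ≤ s)
    (hsU : s ≤ (E.biUnion id).card) (x : Finset V → ℝ) (hx : ∀ e ∈ E, 0 ≤ x e)
    (greedy_res : ∀ (c : ℝ) (_ : ∑ e ∈ E, x e ≤ c) (_ : 1 ≤ c) (G : ℝ) (_ : 0 < G)
      (t : ℕ) (P : Finset V) (r : ℝ),
      (∀ v ∈ P, 0 ≤ min 1 (∑ e ∈ E.filter (fun e => v ∈ e), x e)) →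
      (∀ v ∈ P, min 1 (∑ e ∈ E.filter (fun e => v ∈ e), x e) ≤ 1 / 2) →
      (∀ v ∈ P, min 1 (∑ e ∈ E.filter (fun e => v ∈ e), x e) ≤ ∑ e ∈ E.filter (fun e => v ∈ e), x e) →
      (G + r ≤ 2 * ∑ v ∈ P, min 1 (∑ e ∈ E.filter (fun e => v ∈ e), x e)) →
      ((r + G) * (1 - 1 / (2 * c)) ^ t ≤ G) →
      ∃ F : Finset (Finset V), F ⊆ E ∧ F.card ≤ t ∧
        r ≤ ((P.filter (fun v => ∃ f ∈ F, v ∈ f)).card : ℝ))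
    (hfeas : (s : ℝ) ≤ ∑ v : V, min 1 (∑ e ∈ E.filter (fun e => v ∈ e), x e)) :
    ∃ z : Finset V → ℝ, (∀ e ∈ E, 0 ≤ z e) ∧
      (∃ S : Finset V, S.card = s ∧ ∀ v ∈ S, 1 ≤ ∑ e ∈ E.filter (fun e => v ∈ e), z e) ∧
      ∑ e ∈ E, z e ≤ 2 * (∑ e ∈ E, x e) + 2 * Real.log 2 * max (∑ e ∈ E, x e) 1 + 1 := by
  classical
  set c : ℝ := ∑ e ∈ E, x e with hc
  have hc0 : 0 ≤ c := Finset.sum_nonneg hx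
  set cv : ℝ := max c 1 with hcv
  have hcv1 : 1 ≤ cv := le_max_right _ _
  have hccv : c ≤ cv := le_max_left _ _
  set cov : V → ℝ := fun v => ∑ e ∈ E.filter (fun e => v ∈ e), x e with hcov
  have hcov0 : ∀ v, 0 ≤ cov v := fun v =>
    Finset.sum_nonneg fun e he => hx e (Finset.mem_filter.mp he).1
  set a : V → ℝ := fun v => min 1 (cov v) with ha
  set A : Finset V := Finset.univ.filter (fun v => (1:ℝ)/2 ≤ cov v) with hA
  have hlog2 : (0:ℝ) ≤ Real.log 2 := Real.log_nonneg one_le_two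
  have hslack : (0:ℝ) ≤ 2 * Real.log 2 * cv + 1 := by positivity
  by_cases hAs : s ≤ A.card
  · -- easy case: scaling by 2 suffices
    obtain ⟨S, hSA, hScard⟩ := Finset.exists_subset_card_eq hAs
    refine ⟨fun e => 2 * x e, fun e he => by show (0:ℝ) ≤ 2 * x e; linarith [hx e he], ⟨S, hScard, ?_⟩, ?_⟩
    · intro v hv
      have hvA := hSA hv
      have h12 : (1:ℝ)/2 ≤ cov v := (Finset.mem_filter.mp hvA).2
      have : ∑ e ∈ E.filter (fun e => v ∈ e), 2 * x e = 2 * cov v := by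
        rw [hcov, Finset.mul_sum]
      rw [this]; linarith
    · have : ∑ e ∈ E, 2 * x e = 2 * c := by rw [hc, Finset.mul_sum]
      rw [this]; linarith
  · push_neg at hAs
    set U : Finset V := E.biUnion id with hU
    set pool : Finset V := U \ A with hpool
    set r : ℝ := (s : ℝ) - A.card with hr
    have hr1 : (1:ℝ) ≤ r := by
      rw [hr]
      have : (A.card : ℝ) + 1 ≤ (s : ℝ) := by exact_mod_cast hAs
      linarith
    -- mass lower bound
    set M : ℝ := ∑ v ∈ pool, a v with hM
    have hMr : r ≤ M := by
      have hsplit : ∑ v ∈ Finset.univ, a v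
          = ∑ v ∈ A, a v + ∑ v ∈ Finset.univ.filter (fun v => ¬ ((1:ℝ)/2 ≤ cov v)), a v := by
        rw [hA]
        exact (Finset.sum_filter_add_sum_filter_not _ _ _).symm
      have hAbound : ∑ v ∈ A, a v ≤ (A.card : ℝ) := by
        have := Finset.sum_le_card_nsmul A a 1 (fun v _ => min_le_left _ _)
        rwa [nsmul_eq_mul, mul_one] at this
      have hzero : ∑ v ∈ Finset.univ.filter (fun v => ¬ ((1:ℝ)/2 ≤ cov v)), a v
          = ∑ v ∈ pool, a v := by
        symm
        apply Finset.sum_subset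
        · intro v hv
          rcases Finset.mem_sdiff.mp hv with ⟨hvU, hvA⟩
          refine Finset.mem_filter.mpr ⟨Finset.mem_univ _, ?_⟩
          intro hcontra
          exact hvA (Finset.mem_filter.mpr ⟨Finset.mem_univ _, hcontra⟩)
        · intro v hv hvpool
          have hvA : v ∉ A := by
            intro hvA
            exact (Finset.mem_filter.mp hv).2 (Finset.mem_filter.mp hvA).2
          have hvU : v ∉ U := fun hvU => hvpool (Finset.mem_sdiff.mpr ⟨hvU, hvA⟩)
          have : cov v = 0 := by
            rw [hcov]
            apply Finset.sum_eq_zero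
            intro e he
            exfalso
            exact hvU (Finset.mem_biUnion.mpr ⟨e, (Finset.mem_filter.mp he).1,
              (Finset.mem_filter.mp he).2⟩)
          simp [ha, this]
      have : (s:ℝ) ≤ ∑ v ∈ Finset.univ, a v := hfeas
      rw [hsplit, hzero] at this
      rw [hr, hM]; linarith
    have hMpos : 0 < M := lt_of_lt_of_le (by linarith) hMr
    -- pool properties
    have hpool1 : ∀ v ∈ pool, 0 ≤ a v := fun v _ => le_min zero_le_one (hcov0 v)
    have hpool2 : ∀ v ∈ pool, a v ≤ 1/2 := by
      intro v hv
      have hvA : v ∉ A := (Finset.mem_sdiff.mp hv).2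
      have : ¬ ((1:ℝ)/2 ≤ cov v) := fun h =>
        hvA (Finset.mem_filter.mpr ⟨Finset.mem_univ _, h⟩)
      push_neg at this
      exact (min_le_right _ _).trans this.le
    have hpool3 : ∀ v ∈ pool, a v ≤ cov v := fun v _ => min_le_right _ _
    -- number of greedy steps
    set t₀ : ℕ := ⌈2 * Real.log 2 * cv⌉₊ with ht₀
    have ht₀ub : (t₀ : ℝ) ≤ 2 * Real.log 2 * cv + 1 :=
      (Nat.ceil_lt_add_one (by positivity)).le
    -- decay estimate : (1 - 1/(2cv))^t₀ ≤ 1/2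
    have hqmem : 0 < 1 - 1/(2*cv) := by
      have : 1/(2*cv) ≤ 1/2 := by
        apply div_le_div_of_nonneg_left <;> linarith
      linarith
    have hdecay : (1 - 1/(2*cv)) ^ t₀ ≤ 1/2 := by
      have h1 : 1 - 1/(2*cv) ≤ Real.exp (-(1/(2*cv))) := by
        have := Real.add_one_le_exp (-(1/(2*cv)))
        linarith
      have h2 : (1 - 1/(2*cv)) ^ t₀ ≤ Real.exp (-(1/(2*cv))) ^ t₀ :=
        pow_le_pow_left₀ hqmem.le h1 t₀
      have h3 : Real.exp (-(1/(2*cv))) ^ t₀ = Real.exp (-(t₀/(2*cv))) := by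
        rw [← Real.exp_nat_mul]
        ring_nf
      have h4 : Real.exp (-((t₀:ℝ)/(2*cv))) ≤ Real.exp (-Real.log 2) := by
        apply Real.exp_le_exp.mpr
        have hle : 2 * Real.log 2 * cv ≤ (t₀ : ℝ) := Nat.le_ceil _
        rw [neg_le_neg_iff, le_div_iff₀ (by linarith)]
        linarith
      have h5 : Real.exp (-Real.log 2) = 1/2 := by
        rw [Real.exp_neg, Real.exp_log (by norm_num : (0:ℝ) < 2)]
        norm_num
      calc (1 - 1/(2*cv)) ^ t₀ ≤ Real.exp (-(1/(2*cv))) ^ t₀ := h2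
        _ = Real.exp (-((t₀:ℝ)/(2*cv))) := by rw [h3]
        _ ≤ 1/2 := by rw [← h5]; exact h4
    -- apply greedy with G = M
    obtain ⟨F, hFE, hFcard, hFcov⟩ := greedy_res cv hccv hcv1 M hMpos t₀ pool r
      hpool1 hpool2 hpool3 (by linarith) (by nlinarith [pow_nonneg hqmem.le t₀])
    -- extract exactly the needed vertices
    set D0 : Finset V := pool.filter (fun v => ∃ f ∈ F, v ∈ f) with hD0
    have hD0card : s - A.card ≤ D0.card := by
      have : ((s - A.card : ℕ) : ℝ) ≤ (D0.card : ℝ) := by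
        rw [Nat.cast_sub hAs.le]
        exact le_trans (le_of_eq rfl) hFcov
      exact_mod_cast this
    obtain ⟨D, hDD0, hDcard⟩ := Finset.exists_subset_card_eq hD0card
    have hdisj : Disjoint A D := by
      have hDp : D ⊆ pool := hDD0.trans (Finset.filter_subset _ _)
      refine Finset.disjoint_left.mpr fun v hvA hvD => ?_
      exact (Finset.mem_sdiff.mp (hDp hvD)).2 hvA
    refine ⟨fun e => 2 * x e + (if e ∈ F then 1 else 0), ?_, ⟨A ∪ D, ?_, ?_⟩, ?_⟩
    · intro e he
      have := hx e he
      show (0:ℝ) ≤ 2 * x e + (if e ∈ F then 1 else 0)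
      split <;> linarith
    · rw [Finset.card_union_of_disjoint hdisj, hDcard]
      omega
    · intro v hv
      rcases Finset.mem_union.mp hv with hvA | hvD
      · have h12 : (1:ℝ)/2 ≤ cov v := (Finset.mem_filter.mp hvA).2
        have hterm : ∀ e ∈ E.filter (fun e => v ∈ e), 2 * x e ≤ 2 * x e + (if e ∈ F then 1 else 0) := by
          intro e _; split <;> linarith
        have hsum : ∑ e ∈ E.filter (fun e => v ∈ e), 2 * x e
            ≤ ∑ e ∈ E.filter (fun e => v ∈ e), (2 * x e + (if e ∈ F then 1 else 0)) :=
          Finset.sum_le_sum hterm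
        have heq : ∑ e ∈ E.filter (fun e => v ∈ e), 2 * x e = 2 * cov v := by
          rw [hcov, Finset.mul_sum]
        linarith
      · obtain ⟨f, hfF, hvf⟩ := (Finset.mem_filter.mp (hDD0 hvD)).2
        have hfE : f ∈ E := hFE hfF
        have hfmem : f ∈ E.filter (fun e => v ∈ e) := Finset.mem_filter.mpr ⟨hfE, hvf⟩
        have hnn : ∀ e ∈ E.filter (fun e => v ∈ e), 0 ≤ 2 * x e + (if e ∈ F then 1 else 0) := by
          intro e he
          have := hx e (Finset.mem_filter.mp he).1
          split <;> linarith
        have := Finset.single_le_sum hnn hfmem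
        have hzf : (1:ℝ) ≤ 2 * x f + (if f ∈ F then 1 else 0) := by
          rw [if_pos hfF]
          have := hx f hfE
          linarith
        linarith
    · have hsum : ∑ e ∈ E, (2 * x e + (if e ∈ F then 1 else 0))
          = 2 * c + ((E.filter (fun e => e ∈ F)).card : ℝ) := by
        rw [Finset.sum_add_distrib, hc, Finset.mul_sum, Finset.sum_boole]
      have hEF : E.filter (fun e => e ∈ F) = F := by
        rw [Finset.filter_mem_eq_inter, Finset.inter_eq_right.mpr hFE]
      rw [hsum, hEF]
      have : (F.card : ℝ) ≤ (t₀ : ℝ) := by exact_mod_cast hFcard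
      linarith

end aux



/-- there is a universal constant `C > 0` such that for every hypergraph
and every `1 ≤ s ≤ |V|` with `|⋃ E| ≥ s`,
`IntCover(G, s) ≤ 3.73 · FracCover(G, s) + C · (1 + log s)`. -/
theorem intCover_le_fracCover_log : ∃ C : ℝ, 0 < C ∧
    ∀ (V : Type) [Fintype V] [DecidableEq V] (E : Finset (Finset V)) (s : ℕ),
      1 ≤ s → s ≤ Fintype.card V → s ≤ (E.biUnion id).card →
      IntCover E s ≤ 3.73 * FracCover E s + C * (1 + Real.log s) := by
  refine ⟨4, by norm_num, ?_⟩
  intro V _ _ E s hs1 _hsV hsU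
  classical
  set K : ℝ := 4 * (1 + Real.log s) with hK
  have hlogs : (0:ℝ) ≤ Real.log s :=
    Real.log_nonneg (by exact_mod_cast hs1)
  have hK4 : 4 ≤ K := by rw [hK]; nlinarith
  -- IntCover set is bounded below by 0
  have hIntBdd : BddBelow {c : ℝ | ∃ x : Finset V → ℝ, (∀ e ∈ E, 0 ≤ x e) ∧
      (∃ S : Finset V, S.card = s ∧ ∀ v ∈ S, 1 ≤ ∑ e ∈ E.filter (fun e => v ∈ e), x e) ∧
      c = ∑ e ∈ E, x e} := by
    refine ⟨0, fun b hb => ?_⟩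
    obtain ⟨x, hx, _, rfl⟩ := hb
    exact Finset.sum_nonneg hx
  -- key step
  have key : ∀ b ∈ {c : ℝ | ∃ x : Finset V → ℝ, (∀ e ∈ E, 0 ≤ x e) ∧
      (s : ℝ) ≤ ∑ v : V, min 1 (∑ e ∈ E.filter (fun e => v ∈ e), x e) ∧
      c = ∑ e ∈ E, x e}, IntCover E s ≤ 3.73 * b + K := by
    rintro b ⟨x, hx, hfeas, rfl⟩
    obtain ⟨z, hz0, hzS, hzcost⟩ := construct E s hs1 hsU x hx
      (fun c hxc hc G hG t P r h1 h2 h3 h4 h5 =>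
        greedy E x (fun v => min 1 (∑ e ∈ E.filter (fun e => v ∈ e), x e)) c
          hx hxc hc G hG t P r h1 h2 h3 h4 h5)
      hfeas
    have hmem : (∑ e ∈ E, z e) ∈ {c : ℝ | ∃ x : Finset V → ℝ, (∀ e ∈ E, 0 ≤ x e) ∧
        (∃ S : Finset V, S.card = s ∧ ∀ v ∈ S, 1 ≤ ∑ e ∈ E.filter (fun e => v ∈ e), x e) ∧
        c = ∑ e ∈ E, x e} := ⟨z, hz0, hzS, rfl⟩
    have hIle : IntCover E s ≤ ∑ e ∈ E, z e := csInf_le hIntBdd hmem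
    set c : ℝ := ∑ e ∈ E, x e with hc
    have hc0 : 0 ≤ c := Finset.sum_nonneg hx
    have hmax : max c 1 ≤ c + 1 := max_le (by linarith) (by linarith)
    have hl2 : (0:ℝ) ≤ Real.log 2 := Real.log_nonneg one_le_two
    have hl2' : Real.log 2 < 0.6931471808 := Real.log_two_lt_d9
    have : ∑ e ∈ E, z e ≤ 3.73 * c + K := by
      have h1 : 2 * Real.log 2 * max c 1 ≤ 2 * Real.log 2 * (c + 1) :=
        mul_le_mul_of_nonneg_left hmax (by positivity)
      nlinarith
    linarith
  -- Frac set nonempty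
  have hne : Set.Nonempty {c : ℝ | ∃ x : Finset V → ℝ, (∀ e ∈ E, 0 ≤ x e) ∧
      (s : ℝ) ≤ ∑ v : V, min 1 (∑ e ∈ E.filter (fun e => v ∈ e), x e) ∧
      c = ∑ e ∈ E, x e} := by
    refine ⟨∑ e ∈ E, (1:ℝ), fun _ => 1, fun e _ => zero_le_one, ?_, rfl⟩
    have h1 : ∀ v ∈ E.biUnion id, (1:ℝ) ≤ min 1 (∑ e ∈ E.filter (fun e => v ∈ e), (1:ℝ)) := by
      intro v hv
      obtain ⟨e, heE, hve⟩ := Finset.mem_biUnion.mp hv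
      have hne' : e ∈ E.filter (fun e => v ∈ e) := Finset.mem_filter.mpr ⟨heE, hve⟩
      have hcard : (1:ℝ) ≤ ((E.filter (fun e => v ∈ e)).card : ℝ) := by
        have : 0 < (E.filter (fun e => v ∈ e)).card := Finset.card_pos.mpr ⟨e, hne'⟩
        exact_mod_cast this
      rw [Finset.sum_const, nsmul_eq_mul, mul_one]
      exact le_min le_rfl hcard
    calc (s:ℝ) ≤ ((E.biUnion id).card : ℝ) := by exact_mod_cast hsU
      _ = ∑ v ∈ E.biUnion id, (1:ℝ) := by rw [Finset.sum_const, nsmul_eq_mul, mul_one]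
      _ ≤ ∑ v ∈ E.biUnion id, min 1 (∑ e ∈ E.filter (fun e => v ∈ e), (1:ℝ)) :=
          Finset.sum_le_sum h1
      _ ≤ ∑ v : V, min 1 (∑ e ∈ E.filter (fun e => v ∈ e), (1:ℝ)) := by
          apply Finset.sum_le_sum_of_subset_of_nonneg (Finset.subset_univ _)
          intro v _ _
          exact le_min zero_le_one (Finset.sum_nonneg fun _ _ => zero_le_one)
  -- conclude
  have hdiv : (IntCover E s - K) / 3.73 ≤ FracCover E s := by
    apply le_csInf hne
    intro b hb
    have := key b hb
    rw [div_le_iff₀ (by norm_num : (0:ℝ) < 3.73)]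
    linarith
  rw [div_le_iff₀ (by norm_num : (0:ℝ) < 3.73)] at hdiv
  linarith
end

section
/- Let G = (V, E) be a hypergraph with V finite and E a finite set of subsets of V, and let 1 ≤ s ≤ |V|. Then the following two infima are equal: (i) the infimum of ∑_{e∈E} x_e over all x : E → ℝ with x_e ≥ 0 for which there exists w assigning a nonnegative real w_S to every S ⊆ V with |S| = s, such that ∑_S w_S ≥ 1 and, for every v ∈ V, ∑_{e∈E, v∈e} x_e ≥ ∑_{S ∋ v} w_S; and (ii) the infimum of ∑_{e∈E} x_e over all x : E → ℝ with x_e ≥ 0 for which there exists z : V → ℝ with 0 ≤ z_v ≤ 1 for all v, ∑_{v∈V} z_v ≥ s and, for every v ∈ V, ∑_{e∈E, v∈e} x_e ≥ z_v. -/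
open Finset


/-- Double counting helper. -/
lemma double_count {V : Type*} [Fintype V] [DecidableEq V] (w : Finset V → ℝ) (s : ℕ)
    (A : Finset V) :
    ∑ v ∈ A, ∑ S ∈ (Finset.univ : Finset (Finset V)).filter (fun S => S.card = s ∧ v ∈ S), w S
      = ∑ S ∈ (Finset.univ : Finset (Finset V)).filter (fun S => S.card = s),
          ((A ∩ S).card : ℝ) * w S := by
  have h1 : ∀ v : V, (Finset.univ : Finset (Finset V)).filter (fun S => S.card = s ∧ v ∈ S)
      = ((Finset.univ : Finset (Finset V)).filter (fun S => S.card = s)).filter (fun S => v ∈ S) := by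
    intro v; rw [Finset.filter_filter]
  calc ∑ v ∈ A, ∑ S ∈ (Finset.univ : Finset (Finset V)).filter (fun S => S.card = s ∧ v ∈ S), w S
      = ∑ v ∈ A, ∑ S ∈ (Finset.univ : Finset (Finset V)).filter (fun S => S.card = s),
          (if v ∈ S then w S else 0) := by
        refine Finset.sum_congr rfl fun v _ => ?_
        rw [h1 v, Finset.sum_filter]
    _ = ∑ S ∈ (Finset.univ : Finset (Finset V)).filter (fun S => S.card = s),
          ∑ v ∈ A, (if v ∈ S then w S else 0) := Finset.sum_comm
    _ = _ := by
        refine Finset.sum_congr rfl fun S _ => ?_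
        rw [← Finset.sum_filter, Finset.sum_const, Finset.filter_mem_eq_inter,
          nsmul_eq_mul]

/-- Sum of 0/1-valued function equals card of its support. -/
lemma sum_zero_one {V : Type*} [DecidableEq V] (A : Finset V) (z : V → ℝ)
    (h : ∀ v ∈ A, z v = 0 ∨ z v = 1) :
    ∑ v ∈ A, z v = ((A.filter (fun v => z v = 1)).card : ℝ) := by
  classical
  rw [← Finset.sum_filter_add_sum_filter_not A (fun v => z v = 1)]
  have h1 : ∑ v ∈ A.filter (fun v => z v = 1), z v
      = ((A.filter (fun v => z v = 1)).card : ℝ) := by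
    rw [Finset.sum_congr rfl (fun v hv => (Finset.mem_filter.mp hv).2), Finset.sum_const,
      nsmul_eq_mul, mul_one]
  have h2 : ∑ v ∈ A.filter (fun v => ¬ z v = 1), z v = 0 := by
    refine Finset.sum_eq_zero fun v hv => ?_
    rcases Finset.mem_filter.mp hv with ⟨hvA, hv1⟩
    rcases h v hvA with h0 | h1
    · exact h0
    · exact absurd h1 hv1
  rw [h1, h2, add_zero]

/-- Decomposition of a point of the uniform-matroid base polytope into a convex
combination of indicators of `s`-sets. -/
lemma decomp {V : Type*} [Fintype V] [DecidableEq V] (s : ℕ) :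
    ∀ (k : ℕ) (z : V → ℝ), (∀ v, 0 ≤ z v ∧ z v ≤ 1) → (∑ v : V, z v) = (s : ℝ) →
    ((Finset.univ : Finset V).filter (fun v => 0 < z v ∧ z v < 1)).card ≤ k →
    ∃ w : Finset V → ℝ, (∀ S, 0 ≤ w S) ∧
      (∑ S ∈ (Finset.univ : Finset (Finset V)).filter (fun S => S.card = s), w S) = 1 ∧
      ∀ v : V, (∑ S ∈ (Finset.univ : Finset (Finset V)).filter
          (fun S => S.card = s ∧ v ∈ S), w S) = z v := by
  classical
  intro k
  induction k with
  | zero =>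
    intro z hb hsum hcard
    have hF : ∀ v : V, z v = 0 ∨ z v = 1 := by
      intro v
      have hv : v ∉ (Finset.univ : Finset V).filter (fun v => 0 < z v ∧ z v < 1) := by
        intro hv
        have := Finset.card_pos.mpr ⟨v, hv⟩; omega
      simp only [Finset.mem_filter, Finset.mem_univ, true_and, not_and_or, not_lt] at hv
      rcases hb v with ⟨h0, h1⟩
      rcases hv with h | h
      · exact Or.inl (le_antisymm h h0)
      · exact Or.inr (le_antisymm h1 h)
    set S0 : Finset V := (Finset.univ : Finset V).filter (fun v => z v = 1) with hS0
    have hcardS0 : S0.card = s := by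
      have := sum_zero_one (Finset.univ : Finset V) z (fun v _ => hF v)
      rw [hsum] at this
      exact_mod_cast this.symm
    refine ⟨fun S => if S = S0 then 1 else 0, fun S => by positivity, ?_, ?_⟩
    · rw [Finset.sum_ite_eq' _ S0 (fun _ => (1:ℝ))]
      simp [hcardS0]
    · intro v
      rw [Finset.sum_ite_eq' _ S0 (fun _ => (1:ℝ))]
      simp only [Finset.mem_filter, Finset.mem_univ, true_and, hcardS0]
      rcases hF v with h0 | h1
      · have : v ∉ S0 := by simp [hS0, h0]
        simp [this, h0]
      · have : v ∈ S0 := by simp [hS0, h1]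
        simp [this, h1]
  | succ k ih =>
    intro z hb hsum hcard
    set F := (Finset.univ : Finset V).filter (fun v => 0 < z v ∧ z v < 1) with hF
    rcases le_or_gt F.card k with hk | hk
    · exact ih z hb hsum hk
    have hFcard : F.card = k + 1 := le_antisymm hcard hk
    -- F has at least two elements
    have h2 : 1 < F.card := by
      by_contra h1
      have hF1 : F.card = 1 := by omega
      rcases Finset.card_eq_one.mp hF1 with ⟨u, hu⟩
      have huF : u ∈ F := by rw [hu]; exact Finset.mem_singleton_self u
      rcases Finset.mem_filter.mp huF with ⟨-, hu0, hu1⟩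
      have hrest : ∀ v ∈ (Finset.univ : Finset V).erase u, z v = 0 ∨ z v = 1 := by
        intro v hv
        have hvu : v ≠ u := (Finset.mem_erase.mp hv).1
        have hvF : v ∉ F := by rw [hu]; simp [hvu]
        simp only [hF, Finset.mem_filter, Finset.mem_univ, true_and, not_and_or, not_lt] at hvF
        rcases hb v with ⟨h0, h1⟩
        rcases hvF with h | h
        · exact Or.inl (le_antisymm h h0)
        · exact Or.inr (le_antisymm h1 h)
      have hsplit : (∑ v : V, z v) = z u + ∑ v ∈ (Finset.univ : Finset V).erase u, z v := by
        rw [← Finset.add_sum_erase _ _ (Finset.mem_univ u)]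
      set m := (((Finset.univ : Finset V).erase u).filter (fun v => z v = 1)).card with hm
      have : z u = (s : ℝ) - (m : ℝ) := by
        have := sum_zero_one _ z hrest
        rw [hsplit, this] at hsum
        linarith
      rcases le_or_gt s m with h | h
      · have : z u ≤ 0 := by
          rw [this]; have : (s:ℝ) ≤ (m:ℝ) := by exact_mod_cast h
          linarith
        linarith
      · have hms : (m:ℝ) + 1 ≤ (s:ℝ) := by exact_mod_cast h
        have : 1 ≤ z u := by rw [this]; linarith
        linarith
    rcases Finset.one_lt_card.mp h2 with ⟨u, huF, v, hvF, huv⟩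
    rcases Finset.mem_filter.mp huF with ⟨-, ha0, ha1⟩
    rcases Finset.mem_filter.mp hvF with ⟨-, hb0, hb1⟩
    set a := z u with ha
    set b := z v with hbv
    set ε := min (1 - a) b with hε
    set δ := min a (1 - b) with hδ
    have hε0 : 0 < ε := lt_min (by linarith) hb0
    have hδ0 : 0 < δ := lt_min ha0 (by linarith)
    have hεa : ε ≤ 1 - a := min_le_left _ _
    have hεb : ε ≤ b := min_le_right _ _
    have hδa : δ ≤ a := min_le_left _ _
    have hδb : δ ≤ 1 - b := min_le_right _ _
    set z1 : V → ℝ := Function.update (Function.update z u (a + ε)) v (b - ε) with hz1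
    set z2 : V → ℝ := Function.update (Function.update z u (a - δ)) v (b + δ) with hz2
    have hz1u : z1 u = a + ε := by
      rw [hz1, Function.update_of_ne huv, Function.update_self]
    have hz1v : z1 v = b - ε := by rw [hz1, Function.update_self]
    have hz1t : ∀ t, t ≠ u → t ≠ v → z1 t = z t := by
      intro t htu htv
      rw [hz1, Function.update_of_ne htv, Function.update_of_ne htu]
    have hz2u : z2 u = a - δ := by
      rw [hz2, Function.update_of_ne huv, Function.update_self]
    have hz2v : z2 v = b + δ := by rw [hz2, Function.update_self]
    have hz2t : ∀ t, t ≠ u → t ≠ v → z2 t = z t := by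
      intro t htu htv
      rw [hz2, Function.update_of_ne htv, Function.update_of_ne htu]
    -- sums preserved
    have hsum_gen : ∀ (f : V → ℝ), f u = a + (f u - a) → True := fun _ _ => trivial
    have key_sum : ∀ (g : V → ℝ), g u + g v + ∑ t ∈ ((Finset.univ : Finset V).erase v).erase u, g t
        = ∑ t : V, g t := by
      intro g
      rw [← Finset.add_sum_erase _ _ (Finset.mem_univ v),
        ← Finset.add_sum_erase _ _ (Finset.mem_erase.mpr ⟨huv, Finset.mem_univ u⟩)]
      ring
    have hrest_eq1 : ∀ t ∈ ((Finset.univ : Finset V).erase v).erase u, z1 t = z t := by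
      intro t ht
      rcases Finset.mem_erase.mp ht with ⟨htu, ht'⟩
      exact hz1t t htu (Finset.mem_erase.mp ht').1
    have hrest_eq2 : ∀ t ∈ ((Finset.univ : Finset V).erase v).erase u, z2 t = z t := by
      intro t ht
      rcases Finset.mem_erase.mp ht with ⟨htu, ht'⟩
      exact hz2t t htu (Finset.mem_erase.mp ht').1
    have hsum1 : (∑ t : V, z1 t) = (s : ℝ) := by
      rw [← key_sum z1, Finset.sum_congr rfl hrest_eq1, hz1u, hz1v]
      rw [← key_sum z] at hsum
      linarith
    have hsum2 : (∑ t : V, z2 t) = (s : ℝ) := by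
      rw [← key_sum z2, Finset.sum_congr rfl hrest_eq2, hz2u, hz2v]
      rw [← key_sum z] at hsum
      linarith
    -- bounds preserved
    have hb1' : ∀ t, 0 ≤ z1 t ∧ z1 t ≤ 1 := by
      intro t
      by_cases htv : t = v
      · subst htv; rw [hz1v]; constructor <;> linarith
      by_cases htu : t = u
      · subst htu; rw [hz1u]; constructor <;> linarith
      · rw [hz1t t htu htv]; exact hb t
    have hb2' : ∀ t, 0 ≤ z2 t ∧ z2 t ≤ 1 := by
      intro t
      by_cases htv : t = v
      · subst htv; rw [hz2v]; constructor <;> linarith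
      by_cases htu : t = u
      · subst htu; rw [hz2u]; constructor <;> linarith
      · rw [hz2t t htu htv]; exact hb t
    -- fractional counts decrease
    have hsub : ∀ (g : V → ℝ) (w0 : V), w0 ∈ F → (g w0 = 0 ∨ g w0 = 1) →
        (∀ t, t ≠ u → t ≠ v → g t = z t) → (g u = 0 ∨ g u = 1 ∨ u ∈ F) →
        (g v = 0 ∨ g v = 1 ∨ v ∈ F) →
        ((Finset.univ : Finset V).filter (fun t => 0 < g t ∧ g t < 1)).card ≤ k := by
      intro g w0 hw0F hw0 hgt hgu hgv
      have hsubset : (Finset.univ : Finset V).filter (fun t => 0 < g t ∧ g t < 1)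
          ⊆ F.erase w0 := by
        intro t ht
        rcases Finset.mem_filter.mp ht with ⟨-, ht0, ht1⟩
        have htw0 : t ≠ w0 := by
          rintro rfl
          rcases hw0 with h | h <;> rw [h] at ht0 ht1 <;> linarith
        refine Finset.mem_erase.mpr ⟨htw0, ?_⟩
        by_cases htu : t = u
        · subst htu
          rcases hgu with h | h | h
          · rw [h] at ht0; linarith
          · rw [h] at ht1; linarith
          · exact h
        by_cases htv : t = v
        · subst htv
          rcases hgv with h | h | h
          · rw [h] at ht0; linarith
          · rw [h] at ht1; linarith
          · exact h
        · rw [hgt t htu htv] at ht0 ht1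
          exact Finset.mem_filter.mpr ⟨Finset.mem_univ t, ht0, ht1⟩
      calc ((Finset.univ : Finset V).filter (fun t => 0 < g t ∧ g t < 1)).card
          ≤ (F.erase w0).card := Finset.card_le_card hsubset
        _ = F.card - 1 := Finset.card_erase_of_mem hw0F
        _ ≤ k := by omega
    have hcard1 : ((Finset.univ : Finset V).filter (fun t => 0 < z1 t ∧ z1 t < 1)).card ≤ k := by
      rcases min_cases (1 - a) b with ⟨heq, -⟩ | ⟨heq, -⟩
      · have hεv : ε = 1 - a := hε.trans heq
        exact hsub z1 u huF (Or.inr (by rw [hz1u]; linarith)) hz1t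
          (Or.inr (Or.inl (by rw [hz1u]; linarith))) (Or.inr (Or.inr hvF))
      · have hεv : ε = b := hε.trans heq
        exact hsub z1 v hvF (Or.inl (by rw [hz1v]; linarith)) hz1t
          (Or.inr (Or.inr huF)) (Or.inl (by rw [hz1v]; linarith))
    have hcard2 : ((Finset.univ : Finset V).filter (fun t => 0 < z2 t ∧ z2 t < 1)).card ≤ k := by
      rcases min_cases a (1 - b) with ⟨heq, -⟩ | ⟨heq, -⟩
      · have hδv : δ = a := hδ.trans heq
        exact hsub z2 u huF (Or.inl (by rw [hz2u]; linarith)) hz2t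
          (Or.inl (by rw [hz2u]; linarith)) (Or.inr (Or.inr hvF))
      · have hδv : δ = 1 - b := hδ.trans heq
        exact hsub z2 v hvF (Or.inr (by rw [hz2v]; linarith)) hz2t
          (Or.inr (Or.inr huF)) (Or.inr (Or.inl (by rw [hz2v]; linarith)))
    obtain ⟨w1, hw1nn, hw1sum, hw1marg⟩ := ih z1 hb1' hsum1 hcard1
    obtain ⟨w2, hw2nn, hw2sum, hw2marg⟩ := ih z2 hb2' hsum2 hcard2
    set lam := δ / (ε + δ) with hlam
    have hεδ : 0 < ε + δ := by linarith
    have hlam0 : 0 ≤ lam := by positivity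
    have hlam1 : lam ≤ 1 := by
      rw [hlam, div_le_one hεδ]; linarith
    refine ⟨fun S => lam * w1 S + (1 - lam) * w2 S, ?_, ?_, ?_⟩
    · intro S
      have h1 := mul_nonneg hlam0 (hw1nn S)
      have h2 := mul_nonneg (by linarith : (0:ℝ) ≤ 1 - lam) (hw2nn S)
      dsimp only
      linarith
    · rw [Finset.sum_add_distrib, ← Finset.mul_sum, ← Finset.mul_sum, hw1sum, hw2sum]
      ring
    · intro t
      rw [Finset.sum_add_distrib, ← Finset.mul_sum, ← Finset.mul_sum, hw1marg, hw2marg]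
      by_cases htv : t = v
      · subst htv
        rw [hz1v, hz2v, hlam]
        field_simp
        ring
      by_cases htu : t = u
      · subst htu
        rw [hz1u, hz2u, hlam]
        field_simp
        ring
      · rw [hz1t t htu htv, hz2t t htu htv]; ring

/-- the two linear programs — over weightings `w` of the `s`-element
subsets, and over capped vertex variables `z` — have equal optimal values. -/
theorem lp_lb_eq_lp_primal {V : Type*} [Fintype V] [DecidableEq V]
    (E : Finset (Finset V)) (s : ℕ) (hs1 : 1 ≤ s) (hsV : s ≤ Fintype.card V) :
    sInf {c : ℝ | ∃ x : Finset V → ℝ, (∀ e ∈ E, 0 ≤ x e) ∧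
        (∃ w : Finset V → ℝ, (∀ S : Finset V, S.card = s → 0 ≤ w S) ∧
          1 ≤ ∑ S ∈ (Finset.univ : Finset (Finset V)).filter (fun S => S.card = s), w S ∧
          ∀ v : V,
            ∑ S ∈ (Finset.univ : Finset (Finset V)).filter (fun S => S.card = s ∧ v ∈ S), w S
              ≤ ∑ e ∈ E.filter (fun e => v ∈ e), x e) ∧
        c = ∑ e ∈ E, x e} =
      sInf {c : ℝ | ∃ x : Finset V → ℝ, (∀ e ∈ E, 0 ≤ x e) ∧
        (∃ z : V → ℝ, (∀ v, 0 ≤ z v ∧ z v ≤ 1) ∧ (s : ℝ) ≤ ∑ v : V, z v ∧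
          ∀ v : V, z v ≤ ∑ e ∈ E.filter (fun e => v ∈ e), x e) ∧
        c = ∑ e ∈ E, x e} := by
  classical
  apply congrArg sInf
  ext c
  simp only [Set.mem_setOf_eq]
  constructor
  · rintro ⟨x, hx, ⟨w, hwnn, hwsum, hwle⟩, hc⟩
    set y : V → ℝ := fun v =>
      ∑ S ∈ (Finset.univ : Finset (Finset V)).filter (fun S => S.card = s ∧ v ∈ S), w S with hy
    have hynn : ∀ v, 0 ≤ y v := fun v =>
      Finset.sum_nonneg fun S hS => hwnn S (Finset.mem_filter.mp hS).2.1
    set z : V → ℝ := fun v => min 1 (y v) with hz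
    have hzb : ∀ v, 0 ≤ z v ∧ z v ≤ 1 := fun v =>
      ⟨le_min zero_le_one (hynn v), min_le_left _ _⟩
    refine ⟨x, hx, ⟨z, hzb, ?_, fun v => le_trans (min_le_right _ _) (hwle v)⟩, hc⟩
    set A := (Finset.univ : Finset V).filter (fun v => 1 ≤ y v) with hA
    have hzA : ∀ v ∈ A, z v = 1 := fun v hv => min_eq_left (Finset.mem_filter.mp hv).2
    have hAcard_sum : ∑ v ∈ A, z v = (A.card : ℝ) := by
      rw [Finset.sum_congr rfl hzA, Finset.sum_const, nsmul_eq_mul, mul_one]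
    rcases le_or_gt s A.card with hcase | hcase
    · calc (s : ℝ) ≤ (A.card : ℝ) := by exact_mod_cast hcase
        _ = ∑ v ∈ A, z v := hAcard_sum.symm
        _ ≤ ∑ v : V, z v :=
            Finset.sum_le_sum_of_subset_of_nonneg (Finset.subset_univ A)
              (fun v _ _ => (hzb v).1)
    · set Ac := (Finset.univ : Finset V).filter (fun v => ¬ 1 ≤ y v) with hAc
      have hsplit : (∑ v : V, z v) = ∑ v ∈ A, z v + ∑ v ∈ Ac, z v :=
        (Finset.sum_filter_add_sum_filter_not Finset.univ _ z).symm
      have hAc1 : ∑ v ∈ Ac, z v = ∑ v ∈ Ac, y v :=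
        Finset.sum_congr rfl fun v hv =>
          min_eq_right (le_of_lt (not_le.mp (Finset.mem_filter.mp hv).2))
      have hdc : ∑ v ∈ Ac, y v
          = ∑ S ∈ (Finset.univ : Finset (Finset V)).filter (fun S => S.card = s),
              ((Ac ∩ S).card : ℝ) * w S := double_count w s Ac
      have hterm : ∀ S ∈ (Finset.univ : Finset (Finset V)).filter (fun S => S.card = s),
          ((s : ℝ) - A.card) * w S ≤ ((Ac ∩ S).card : ℝ) * w S := by
        intro S hS
        have hcardS : S.card = s := (Finset.mem_filter.mp hS).2
        have hup : (S.filter (fun v => 1 ≤ y v)).card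
            + (S.filter (fun v => ¬ 1 ≤ y v)).card = s := by
          rw [Finset.card_filter_add_card_filter_not]; exact hcardS
        have hsub1 : S.filter (fun v => 1 ≤ y v) ⊆ A := fun v hv =>
          Finset.mem_filter.mpr ⟨Finset.mem_univ v, (Finset.mem_filter.mp hv).2⟩
        have heq2 : Ac ∩ S = S.filter (fun v => ¬ 1 ≤ y v) := by
          ext v
          simp only [hAc, Finset.mem_inter, Finset.mem_filter, Finset.mem_univ, true_and]
          tauto
        have hge : (s : ℝ) - A.card ≤ ((Ac ∩ S).card : ℝ) := by
          have h1 := Finset.card_le_card hsub1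
          rw [heq2]
          have h2 : s ≤ (S.filter (fun v => ¬ 1 ≤ y v)).card + A.card := by omega
          have h3 := (Nat.cast_le (α := ℝ)).mpr h2
          push_cast at h3 ⊢
          linarith
        exact mul_le_mul_of_nonneg_right hge (hwnn S hcardS)
      have hAcard : (A.card : ℝ) ≤ (s : ℝ) := by exact_mod_cast le_of_lt hcase
      calc (s : ℝ) = A.card + ((s : ℝ) - A.card) * 1 := by ring
        _ ≤ A.card + ((s : ℝ) - A.card)
              * ∑ S ∈ (Finset.univ : Finset (Finset V)).filter (fun S => S.card = s), w S := by
            have := mul_le_mul_of_nonneg_left hwsum (by linarith : (0:ℝ) ≤ (s:ℝ) - A.card)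
            linarith
        _ = A.card + ∑ S ∈ (Finset.univ : Finset (Finset V)).filter (fun S => S.card = s),
              ((s : ℝ) - A.card) * w S := by rw [Finset.mul_sum]
        _ ≤ A.card + ∑ S ∈ (Finset.univ : Finset (Finset V)).filter (fun S => S.card = s),
              ((Ac ∩ S).card : ℝ) * w S := add_le_add_right (Finset.sum_le_sum hterm) _
        _ = ∑ v : V, z v := by rw [hsplit, hAcard_sum, hAc1, hdc]
  · rintro ⟨x, hx, ⟨z, hzb, hzsum, hzle⟩, hc⟩
    have hSpos : (0 : ℝ) < ∑ v : V, z v := by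
      have : (1:ℝ) ≤ (s:ℝ) := by exact_mod_cast hs1
      linarith
    set r := (s : ℝ) / (∑ v : V, z v) with hr
    have hr0 : 0 ≤ r := by positivity
    have hr1 : r ≤ 1 := by
      rw [hr, div_le_one hSpos]; exact hzsum
    set z' : V → ℝ := fun v => r * z v with hz'
    have hz'b : ∀ v, 0 ≤ z' v ∧ z' v ≤ 1 := by
      intro v
      rcases hzb v with ⟨h0, h1⟩
      constructor
      · exact mul_nonneg hr0 h0
      · calc r * z v ≤ 1 * z v := mul_le_mul_of_nonneg_right hr1 h0
          _ = z v := one_mul _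
          _ ≤ 1 := h1
    have hz'sum : (∑ v : V, z' v) = (s : ℝ) := by
      rw [hz', ← Finset.mul_sum, hr, div_mul_cancel₀]
      exact ne_of_gt hSpos
    obtain ⟨w, hwnn, hwsum, hwmarg⟩ := decomp s (Fintype.card V) z' hz'b hz'sum
      (le_trans (Finset.card_filter_le _ _) (le_of_eq (Finset.card_univ)))
    refine ⟨x, hx, ⟨w, fun S _ => hwnn S, le_of_eq hwsum.symm, fun v => ?_⟩, hc⟩
    rw [hwmarg v]
    calc z' v = r * z v := rfl
      _ ≤ 1 * z v := mul_le_mul_of_nonneg_right hr1 (hzb v).1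
      _ = z v := one_mul _
      _ ≤ _ := hzle v
end

section
/- Let G = (V, E) be a hypergraph with V finite and E a finite set of subsets of V whose union is V, let S ⊆ V, and let x : E → ℝ satisfy x_e ≥ 0 for every e ∈ E and ∑_{e∈E, v∈e} x_e ≥ 1 for every v ∈ S (a fractional edge cover of S). Then for every family of finite relations (R_e)_{e∈E}, where R_e is a finite set of functions e → ℕ, the number of tuples t : S → ℕ whose restriction to e ∩ S lies in the projection π_{e∩S}(R_e) for every e ∈ E is at most ∏_{e∈E} |R_e|^{x_e}. In particular, if |R_e| ≤ N for every e ∈ E, then the projected join on S has at most N^{∑_{e∈E} x_e} tuples, so PrjBnd(G, N, |S|) ≤ N raised to the optimal value of the fractional edge cover linear program for (G, S). -/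
open Finset MeasureTheory
open scoped ENNReal

noncomputable section

/-- The grid: functions equal to `0` outside `T` and with values in `B` on `T`. -/
def agmGrid {V : Type*} [Fintype V] [DecidableEq V] (B : Finset ℕ) (T : Finset V) :
    Finset (V → ℕ) :=
  Fintype.piFinset (fun v => if v ∈ T then B else {0})

lemma mem_agmGrid {V : Type*} [Fintype V] [DecidableEq V] {B : Finset ℕ} {T : Finset V}
    {t : V → ℕ} : t ∈ agmGrid B T ↔ ∀ v, t v ∈ (if v ∈ T then B else ({0} : Finset ℕ)) :=
  Fintype.mem_piFinset

lemma agmGrid_zero {V : Type*} [Fintype V] [DecidableEq V] {B : Finset ℕ} {T : Finset V}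
    {t : V → ℕ} (ht : t ∈ agmGrid B T) {v : V} (hv : v ∉ T) : t v = 0 := by
  have := mem_agmGrid.1 ht v
  rw [if_neg hv, Finset.mem_singleton] at this
  exact this

/-- Splitting a sum over the grid along one coordinate. -/
lemma agm_sum_grid {V : Type*} [Fintype V] [DecidableEq V] (B : Finset ℕ) {T : Finset V}
    {v : V} (hv : v ∈ T) (F : (V → ℕ) → ℝ≥0∞) :
    ∑ t ∈ agmGrid B T, F t
      = ∑ t ∈ agmGrid B (T.erase v), ∑ b ∈ B, F (Function.update t v b) := by
  have : ∑ t ∈ agmGrid B (T.erase v), ∑ b ∈ B, F (Function.update t v b)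
      = ∑ p ∈ (agmGrid B (T.erase v)) ×ˢ B, F (Function.update p.1 v p.2) := by
    rw [Finset.sum_product]
  rw [this]
  refine Finset.sum_nbij' (fun t => (Function.update t v 0, t v))
    (fun p => Function.update p.1 v p.2) ?_ ?_ ?_ ?_ ?_
  · intro t ht
    rw [Finset.mem_product]
    constructor
    · rw [mem_agmGrid]
      intro w
      show Function.update t v 0 w ∈ (if w ∈ T.erase v then B else ({0} : Finset ℕ))
      by_cases hw : w = v
      · subst hw
        simp [if_neg (Finset.notMem_erase w T)]
      · have hset : (if w ∈ T.erase v then B else ({0} : Finset ℕ))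
            = (if w ∈ T then B else ({0} : Finset ℕ)) := by
          by_cases h : w ∈ T <;> simp [Finset.mem_erase, hw, h]
        rw [Function.update_of_ne hw, hset]
        exact mem_agmGrid.1 ht w
    · show t v ∈ B
      have := mem_agmGrid.1 ht v
      rwa [if_pos hv] at this
  · intro p hp
    rw [Finset.mem_product] at hp
    rw [mem_agmGrid]
    intro w
    show Function.update p.1 v p.2 w ∈ (if w ∈ T then B else ({0} : Finset ℕ))
    by_cases hw : w = v
    · subst hw
      rw [Function.update_self, if_pos hv]
      exact hp.2
    · have hset : (if w ∈ T.erase v then B else ({0} : Finset ℕ))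
          = (if w ∈ T then B else ({0} : Finset ℕ)) := by
        by_cases h : w ∈ T <;> simp [Finset.mem_erase, hw, h]
      rw [Function.update_of_ne hw, ← hset]
      exact mem_agmGrid.1 hp.1 w
  · intro t ht
    dsimp only
    rw [Function.update_idem, Function.update_eq_self]
  · intro p hp
    rw [Finset.mem_product] at hp
    have h0 : p.1 v = 0 := agmGrid_zero hp.1 (Finset.notMem_erase v T)
    rw [Function.update_idem, Function.update_self]
    rw [show (0 : ℕ) = p.1 v from h0.symm, Function.update_eq_self]
  · intro t ht
    dsimp only
    congr 1
    rw [Function.update_idem, Function.update_eq_self]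

/-- Superadditivity of `rpow` on sums in `ℝ≥0∞`, for exponents `≥ 1`. -/
lemma agm_sum_rpow_le {ι : Type*} (s : Finset ι) (g : ι → ℝ≥0∞) {σ : ℝ} (hσ : 1 ≤ σ) :
    ∑ i ∈ s, g i ^ σ ≤ (∑ i ∈ s, g i) ^ σ := by
  induction s using Finset.cons_induction with
  | empty => simp [ENNReal.zero_rpow_of_pos (lt_of_lt_of_le one_pos hσ)]
  | cons a s ha ih =>
    rw [Finset.sum_cons, Finset.sum_cons]
    exact le_trans (add_le_add (le_refl _) ih) (ENNReal.add_rpow_le_rpow_add _ _ hσ)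

/-- Generalized Hölder with weights summing to exactly 1, over a finite set of naturals. -/
lemma agm_holder_one {ι : Type*} (s : Finset ι) (B : Finset ℕ) (g : ι → ℕ → ℝ≥0∞)
    {p : ι → ℝ} (hp : ∑ i ∈ s, p i = 1) (hp0 : ∀ i ∈ s, 0 < p i) :
    ∑ b ∈ B, ∏ i ∈ s, g i b ^ p i ≤ ∏ i ∈ s, (∑ b ∈ B, g i b) ^ p i := by
  classical
  obtain ⟨i₀, hi₀⟩ : s.Nonempty := by
    rcases s.eq_empty_or_nonempty with h | h
    · exfalso; rw [h] at hp; simp at hp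
    · exact h
  set G : ι → ℕ → ℝ≥0∞ := fun i b => if b ∈ B then g i b else 0 with hG
  have key := ENNReal.lintegral_prod_norm_pow_le (μ := (Measure.count : Measure ℕ)) s
    (f := fun i => G i) (fun i _ => Measurable.of_discrete.aemeasurable) hp
    (fun i hi => (hp0 i hi).le)
  rw [lintegral_count] at key
  have hL : ∑' b : ℕ, ∏ i ∈ s, G i b ^ p i = ∑ b ∈ B, ∏ i ∈ s, g i b ^ p i := by
    rw [tsum_eq_sum (s := B) (fun b hb => ?_)]
    · exact Finset.sum_congr rfl fun b hb =>
        Finset.prod_congr rfl fun i _ => by rw [hG]; simp [hb]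
    · refine Finset.prod_eq_zero hi₀ ?_
      rw [hG]
      simp only [if_neg hb]
      exact ENNReal.zero_rpow_of_pos (hp0 i₀ hi₀)
  have hR : ∀ i ∈ s, (∫⁻ b, G i b ∂(Measure.count : Measure ℕ)) = ∑ b ∈ B, g i b := by
    intro i hi
    rw [lintegral_count, tsum_eq_sum (s := B) (fun b hb => by rw [hG]; simp [hb])]
    exact Finset.sum_congr rfl fun b hb => by rw [hG]; simp [hb]
  rw [hL] at key
  refine key.trans (le_of_eq ?_)
  exact Finset.prod_congr rfl fun i hi => by rw [hR i hi]

/-- Generalized Hölder with positive weights summing to at least 1. -/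
lemma agm_holder {ι : Type*} (s : Finset ι) (B : Finset ℕ) (g : ι → ℕ → ℝ≥0∞)
    {p : ι → ℝ} (hσ : 1 ≤ ∑ i ∈ s, p i) (hp0 : ∀ i ∈ s, 0 < p i) :
    ∑ b ∈ B, ∏ i ∈ s, g i b ^ p i ≤ ∏ i ∈ s, (∑ b ∈ B, g i b) ^ p i := by
  set σ := ∑ i ∈ s, p i with hσdef
  have hσ0 : 0 < σ := lt_of_lt_of_le one_pos hσ
  have h1 : ∑ i ∈ s, p i / σ = 1 := by rw [← Finset.sum_div, ← hσdef, div_self hσ0.ne']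
  have h2 : ∀ i ∈ s, 0 < p i / σ := fun i hi => div_pos (hp0 i hi) hσ0
  calc ∑ b ∈ B, ∏ i ∈ s, g i b ^ p i
      = ∑ b ∈ B, ∏ i ∈ s, (g i b ^ σ) ^ (p i / σ) := by
        refine Finset.sum_congr rfl fun b _ => Finset.prod_congr rfl fun i hi => ?_
        rw [← ENNReal.rpow_mul]
        congr 1
        field_simp
    _ ≤ ∏ i ∈ s, (∑ b ∈ B, g i b ^ σ) ^ (p i / σ) := agm_holder_one s B _ h1 h2
    _ ≤ ∏ i ∈ s, ((∑ b ∈ B, g i b) ^ σ) ^ (p i / σ) := by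
        refine Finset.prod_le_prod' fun i hi => ?_
        exact ENNReal.rpow_le_rpow (agm_sum_rpow_le B _ hσ) (h2 i hi).le
    _ = ∏ i ∈ s, (∑ b ∈ B, g i b) ^ p i := by
        refine Finset.prod_congr rfl fun i hi => ?_
        rw [← ENNReal.rpow_mul]
        congr 1
        field_simp


/-- The key inductive inequality (functional AGM / grid-lines lemma). -/
lemma agm_main {V : Type*} [Fintype V] [DecidableEq V]
    (E : Finset (Finset V)) (x : Finset V → ℝ) (hx0 : ∀ e ∈ E, 0 ≤ x e) (B : Finset ℕ) :
    ∀ S : Finset V, (∀ v ∈ S, 1 ≤ ∑ e ∈ E.filter (fun e => v ∈ e), x e) →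
    ∀ f : Finset V → (V → ℕ) → ℝ≥0∞,
    (∀ e ∈ E, ∀ t t' : V → ℕ, (∀ w ∈ e, w ∈ S → t w = t' w) → f e t = f e t') →
    (∀ e ∈ E, x e = 0 → ∀ t, f e t ≤ 1) →
    ∑ t ∈ agmGrid B S, ∏ e ∈ E, f e t
      ≤ ∏ e ∈ E, (∑ s ∈ agmGrid B (e ∩ S), f e s ^ (1 / x e)) ^ (x e) := by
  classical
  intro S
  induction S using Finset.induction_on with
  | empty =>
    intro _ f hdep hle
    have hgrid : agmGrid B (∅ : Finset V) = {fun _ => 0} := by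
      apply Finset.ext
      intro t
      simp only [Finset.mem_singleton, mem_agmGrid, Finset.notMem_empty, if_false,
        Finset.mem_singleton]
      constructor
      · intro h; funext w; exact h w
      · intro h w; rw [h]
    have hgrid' : ∀ e : Finset V, agmGrid B (e ∩ (∅ : Finset V)) = {fun _ => 0} := by
      intro e; rw [Finset.inter_empty]; exact hgrid
    rw [hgrid]
    rw [Finset.sum_singleton]
    refine Finset.prod_le_prod' fun e he => ?_
    rw [hgrid' e, Finset.sum_singleton]
    rcases eq_or_ne (x e) 0 with hx | hx
    · rw [hx, ENNReal.rpow_zero]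
      exact hle e he hx _
    · rw [← ENNReal.rpow_mul, one_div, inv_mul_cancel₀ hx, ENNReal.rpow_one]
  | @insert a S ha ih =>
    intro hcov f hdep hle
    have hxS : ∀ v ∈ S, 1 ≤ ∑ e ∈ E.filter (fun e => v ∈ e), x e :=
      fun v hv => hcov v (Finset.mem_insert_of_mem hv)
    set Ea : Finset (Finset V) := E.filter (fun e => a ∈ e) with hEa
    set Ev : Finset (Finset V) := E.filter (fun e => a ∈ e ∧ 0 < x e) with hEv
    have hEvEa : Ev ⊆ Ea := by
      intro e he
      rw [hEv, Finset.mem_filter] at he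
      rw [hEa, Finset.mem_filter]
      exact ⟨he.1, he.2.1⟩
    have hEaE : Ea ⊆ E := Finset.filter_subset _ _
    have hzero : ∀ e ∈ Ea, e ∉ Ev → x e = 0 := by
      intro e he hne
      rw [hEa, Finset.mem_filter] at he
      rw [hEv, Finset.mem_filter] at hne
      have h1 := hx0 e he.1
      by_contra h
      exact hne ⟨he.1, ⟨he.2, lt_of_le_of_ne h1 (Ne.symm h)⟩⟩
    have hσ : 1 ≤ ∑ e ∈ Ev, x e := by
      have := hcov a (Finset.mem_insert_self a S)
      rwa [← Finset.sum_subset hEvEa (fun e he hne => hzero e he hne)] at this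
    have hpos : ∀ e ∈ Ev, 0 < x e := by
      intro e he; rw [hEv, Finset.mem_filter] at he; exact he.2.2
    set f' : Finset V → (V → ℕ) → ℝ≥0∞ := fun e t =>
      if a ∈ e then
        (if 0 < x e then (∑ b ∈ B, f e (Function.update t a b) ^ (1 / x e)) ^ (x e) else 1)
      else f e t with hf'
    -- pointwise key bound
    have key : ∀ t' ∈ agmGrid B S,
        ∑ b ∈ B, ∏ e ∈ E, f e (Function.update t' a b) ≤ ∏ e ∈ E, f' e t' := by
      intro t' ht'
      have split : ∀ b, ∏ e ∈ E, f e (Function.update t' a b)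
          = (∏ e ∈ Ea, f e (Function.update t' a b)) *
            ∏ e ∈ E.filter (fun e => ¬ a ∈ e), f e t' := by
        intro b
        rw [← Finset.prod_filter_mul_prod_filter_not E (fun e => a ∈ e)]
        congr 1
        refine Finset.prod_congr rfl fun e he => ?_
        rw [Finset.mem_filter] at he
        refine hdep e he.1 _ _ fun w hw hwS => ?_
        have hwa : w ≠ a := fun h => he.2 (h ▸ hw)
        rw [Function.update_of_ne hwa]
      have step1 : ∑ b ∈ B, ∏ e ∈ E, f e (Function.update t' a b)
          = (∑ b ∈ B, ∏ e ∈ Ea, f e (Function.update t' a b)) *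
            ∏ e ∈ E.filter (fun e => ¬ a ∈ e), f e t' := by
        rw [Finset.sum_mul]
        exact Finset.sum_congr rfl fun b _ => split b
      have step2 : ∀ b, ∏ e ∈ Ea, f e (Function.update t' a b)
          ≤ ∏ e ∈ Ev, f e (Function.update t' a b) := by
        intro b
        rw [← Finset.prod_sdiff hEvEa]
        have h1 : ∏ e ∈ Ea \ Ev, f e (Function.update t' a b) ≤ 1 := by
          refine Finset.prod_le_one' fun e he => ?_
          rw [Finset.mem_sdiff] at he
          exact hle e (hEaE he.1) (hzero e he.1 he.2) _
        calc (∏ e ∈ Ea \ Ev, f e (Function.update t' a b)) *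
              ∏ e ∈ Ev, f e (Function.update t' a b)
            ≤ 1 * ∏ e ∈ Ev, f e (Function.update t' a b) := mul_le_mul_left h1 _
          _ = ∏ e ∈ Ev, f e (Function.update t' a b) := one_mul _
      have step3 : ∑ b ∈ B, ∏ e ∈ Ev, f e (Function.update t' a b)
          ≤ ∏ e ∈ Ev, (∑ b ∈ B, f e (Function.update t' a b) ^ (1 / x e)) ^ (x e) := by
        have := agm_holder Ev B
          (fun e b => f e (Function.update t' a b) ^ (1 / x e)) hσ hpos
        refine le_trans (le_of_eq ?_) this
        refine Finset.sum_congr rfl fun b _ => Finset.prod_congr rfl fun e he => ?_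
        rw [← ENNReal.rpow_mul, one_div, inv_mul_cancel₀ (hpos e he).ne', ENNReal.rpow_one]
      have prodf' : ∏ e ∈ E, f' e t'
          = (∏ e ∈ Ev, (∑ b ∈ B, f e (Function.update t' a b) ^ (1 / x e)) ^ (x e)) *
            ∏ e ∈ E.filter (fun e => ¬ a ∈ e), f e t' := by
        rw [← Finset.prod_filter_mul_prod_filter_not E (fun e => a ∈ e)]
        congr 1
        · rw [← Finset.prod_sdiff hEvEa]
          have h1 : ∏ e ∈ Ea \ Ev, f' e t' = 1 := by
            refine Finset.prod_eq_one fun e he => ?_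
            rw [Finset.mem_sdiff] at he
            have hae : a ∈ e := (Finset.mem_filter.1 he.1).2
            have hx : ¬ 0 < x e := by
              rw [hzero e he.1 he.2]; exact lt_irrefl 0
            rw [hf']
            simp only [if_pos hae, if_neg hx]
          rw [h1, one_mul]
          refine Finset.prod_congr rfl fun e he => ?_
          have hae : a ∈ e := (Finset.mem_filter.1 (hEvEa he)).2
          rw [hf']
          simp only [if_pos hae, if_pos (hpos e he)]
        · refine Finset.prod_congr rfl fun e he => ?_
          rw [Finset.mem_filter] at he
          rw [hf']
          simp only [if_neg he.2]
      rw [step1, prodf']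
      refine mul_le_mul_left ?_ _
      exact le_trans (Finset.sum_le_sum fun b _ => step2 b) step3
    -- conditions for f'
    have hdep' : ∀ e ∈ E, ∀ t t' : V → ℕ, (∀ w ∈ e, w ∈ S → t w = t' w) → f' e t = f' e t' := by
      intro e he t t' hagree
      rw [hf']
      by_cases hae : a ∈ e
      · simp only [if_pos hae]
        by_cases hx : 0 < x e
        · simp only [if_pos hx]
          congr 1
          refine Finset.sum_congr rfl fun b _ => ?_
          congr 1
          refine hdep e he _ _ fun w hw hwS => ?_
          by_cases hwa : w = a
          · subst hwa; rw [Function.update_self, Function.update_self]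
          · rw [Function.update_of_ne hwa, Function.update_of_ne hwa]
            exact hagree w hw (by
              rcases Finset.mem_insert.1 hwS with h | h
              · exact absurd h hwa
              · exact h)
        · simp only [if_neg hx]
      · simp only [if_neg hae]
        refine hdep e he _ _ fun w hw hwS => ?_
        have hwa : w ≠ a := fun h => hae (h ▸ hw)
        exact hagree w hw (by
          rcases Finset.mem_insert.1 hwS with h | h
          · exact absurd h hwa
          · exact h)
    have hle' : ∀ e ∈ E, x e = 0 → ∀ t, f' e t ≤ 1 := by
      intro e he hx t
      rw [hf']
      by_cases hae : a ∈ e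
      · simp only [if_pos hae]
        rw [hx]
        simp
      · simp only [if_neg hae]
        exact hle e he hx t
    -- final factor computation
    have factor : ∀ e ∈ E,
        (∑ s ∈ agmGrid B (e ∩ S), f' e s ^ (1 / x e)) ^ (x e)
          = (∑ s ∈ agmGrid B (e ∩ insert a S), f e s ^ (1 / x e)) ^ (x e) := by
      intro e he
      by_cases hae : a ∈ e
      · by_cases hx : 0 < x e
        · have hT : a ∈ e ∩ insert a S :=
            Finset.mem_inter.2 ⟨hae, Finset.mem_insert_self a S⟩
          have herase : (e ∩ insert a S).erase a = e ∩ S := by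
            apply Finset.ext
            intro w
            simp only [Finset.mem_erase, Finset.mem_inter, Finset.mem_insert]
            constructor
            · rintro ⟨hwa, hwe, h | h⟩
              · exact absurd h hwa
              · exact ⟨hwe, h⟩
            · rintro ⟨hwe, hwS⟩
              exact ⟨fun h => ha (h ▸ hwS), hwe, Or.inr hwS⟩
          rw [agm_sum_grid B hT (fun s => f e s ^ (1 / x e)), herase]
          congr 1
          refine Finset.sum_congr rfl fun s hs => ?_
          rw [hf']
          simp only [if_pos hae, if_pos hx]
          rw [← ENNReal.rpow_mul, mul_one_div, div_self hx.ne', ENNReal.rpow_one]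
        · have hx0e : x e = 0 := le_antisymm (not_lt.1 hx) (hx0 e he)
          rw [hx0e, ENNReal.rpow_zero, ENNReal.rpow_zero]
      · have hinter : e ∩ insert a S = e ∩ S := by
          apply Finset.ext
          intro w
          simp only [Finset.mem_inter, Finset.mem_insert]
          constructor
          · rintro ⟨hwe, h | h⟩
            · exact absurd (h ▸ hwe) hae
            · exact ⟨hwe, h⟩
          · rintro ⟨hwe, hwS⟩
            exact ⟨hwe, Or.inr hwS⟩
        rw [hinter]
        congr 1
        refine Finset.sum_congr rfl fun s hs => ?_
        rw [hf']
        simp only [if_neg hae]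
    calc ∑ t ∈ agmGrid B (insert a S), ∏ e ∈ E, f e t
        = ∑ t' ∈ agmGrid B ((insert a S).erase a), ∑ b ∈ B,
            ∏ e ∈ E, f e (Function.update t' a b) :=
          agm_sum_grid B (Finset.mem_insert_self a S) _
      _ = ∑ t' ∈ agmGrid B S, ∑ b ∈ B, ∏ e ∈ E, f e (Function.update t' a b) := by
          rw [Finset.erase_insert ha]
      _ ≤ ∑ t' ∈ agmGrid B S, ∏ e ∈ E, f' e t' := Finset.sum_le_sum key
      _ ≤ ∏ e ∈ E, (∑ s ∈ agmGrid B (e ∩ S), f' e s ^ (1 / x e)) ^ (x e) :=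
          ih hxS f' hdep' hle'
      _ = ∏ e ∈ E, (∑ s ∈ agmGrid B (e ∩ insert a S), f e s ^ (1 / x e)) ^ (x e) :=
          Finset.prod_congr rfl factor

/-- AGM-style bound: if `x` is a fractional edge cover of `S`, then the
projected join on `S` has at most `∏_{e ∈ E} |R_e| ^ (x_e)` tuples; in particular if
`|R_e| ≤ N` for all `e`, then it has at most `N ^ (∑_{e ∈ E} x_e)` tuples. -/
theorem projJoin_card_le_agm {V : Type*} [Fintype V] [DecidableEq V]
    (E : Finset (Finset V)) (hE : ∀ v : V, ∃ e ∈ E, v ∈ e)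
    (S : Finset V) (x : Finset V → ℝ)
    (hx0 : ∀ e ∈ E, 0 ≤ x e)
    (hxcover : ∀ v ∈ S, 1 ≤ ∑ e ∈ E.filter (fun e => v ∈ e), x e)
    (R : (e : Finset V) → Finset ({v // v ∈ e} → ℕ)) :
    ((ProjJoin E R S).ncard : ℝ) ≤ ∏ e ∈ E, ((R e).card : ℝ) ^ (x e) ∧
      ∀ N : ℕ, 1 ≤ N → (∀ e ∈ E, (R e).card ≤ N) →
        ((ProjJoin E R S).ncard : ℝ) ≤ (N : ℝ) ^ (∑ e ∈ E, x e) := by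
  classical
  set B : Finset ℕ := E.biUnion (fun e => (R e).biUnion (fun r => Finset.image r Finset.univ))
    with hB
  set f : Finset V → (V → ℕ) → ℝ≥0∞ := fun e t =>
    if (∃ r ∈ R e, ∀ (w : V) (hw : w ∈ e), w ∈ S → t w = r ⟨w, hw⟩) then 1 else 0 with hf
  have hdep : ∀ e ∈ E, ∀ t t' : V → ℕ, (∀ w ∈ e, w ∈ S → t w = t' w) → f e t = f e t' := by
    intro e he t t' hag
    rw [hf]
    simp only
    have hiff : (∃ r ∈ R e, ∀ (w : V) (hw : w ∈ e), w ∈ S → t w = r ⟨w, hw⟩) ↔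
        (∃ r ∈ R e, ∀ (w : V) (hw : w ∈ e), w ∈ S → t' w = r ⟨w, hw⟩) := by
      constructor
      · rintro ⟨r, hr, h⟩
        exact ⟨r, hr, fun w hw hwS => (hag w hw hwS) ▸ h w hw hwS⟩
      · rintro ⟨r, hr, h⟩
        exact ⟨r, hr, fun w hw hwS => (hag w hw hwS).symm ▸ h w hw hwS⟩
    rw [if_congr hiff rfl rfl]
  have hle : ∀ e ∈ E, x e = 0 → ∀ t, f e t ≤ 1 := by
    intro e _ _ t
    rw [hf]
    simp only
    split <;> simp
  set φ : ({v // v ∈ S} → ℕ) → (V → ℕ) := fun t v => if h : v ∈ S then t ⟨v, h⟩ else 0 with hφ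
  have hφinj : Function.Injective φ := by
    intro t₁ t₂ h
    funext v
    have := congrFun h v.1
    rw [hφ] at this
    simp only at this
    rw [dif_pos v.2, dif_pos v.2] at this
    simpa using this
  have hsub : ∀ t₀ ∈ ProjJoin E R S, φ t₀ ∈ agmGrid B S := by
    intro t₀ ht₀
    rw [mem_agmGrid]
    intro v
    by_cases hvS : v ∈ S
    · rw [if_pos hvS, hφ]
      simp only
      rw [dif_pos hvS]
      obtain ⟨e, he, hve⟩ := hE v
      obtain ⟨r, hr, hmatch⟩ := ht₀ e he
      rw [hmatch v hve hvS, hB]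
      exact Finset.mem_biUnion.2 ⟨e, he, Finset.mem_biUnion.2
        ⟨r, hr, Finset.mem_image.2 ⟨⟨v, hve⟩, Finset.mem_univ _, rfl⟩⟩⟩
    · rw [if_neg hvS, hφ]
      simp only
      rw [dif_neg hvS]
      exact Finset.mem_singleton_self 0
  have hone : ∀ t₀ ∈ ProjJoin E R S, ∀ e ∈ E, f e (φ t₀) = 1 := by
    intro t₀ ht₀ e he
    obtain ⟨r, hr, hmatch⟩ := ht₀ e he
    rw [hf]
    simp only
    refine if_pos ⟨r, hr, fun w hw hwS => ?_⟩
    rw [hφ]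
    simp only
    rw [dif_pos hwS]
    exact hmatch w hw hwS
  have hfin : (ProjJoin E R S).Finite := by
    refine Set.Finite.of_finite_image ?_ hφinj.injOn
    refine Set.Finite.subset (agmGrid B S).finite_toSet ?_
    rintro _ ⟨t₀, ht₀, rfl⟩
    exact hsub t₀ ht₀
  set F : Finset ({v // v ∈ S} → ℕ) := hfin.toFinset with hF
  have hcard : ((ProjJoin E R S).ncard : ℝ≥0∞) ≤ ∑ t ∈ agmGrid B S, ∏ e ∈ E, f e t := by
    have himgsub : F.image φ ⊆ agmGrid B S := by
      intro t ht
      obtain ⟨t₀, ht₀, rfl⟩ := Finset.mem_image.1 ht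
      exact hsub t₀ (hfin.mem_toFinset.1 ht₀)
    have h1 : ∑ t ∈ F.image φ, ∏ e ∈ E, f e t = ((F.image φ).card : ℝ≥0∞) := by
      rw [Finset.sum_congr rfl (fun t ht => show ∏ e ∈ E, f e t = 1 from by
        obtain ⟨t₀, ht₀, rfl⟩ := Finset.mem_image.1 ht
        exact Finset.prod_eq_one fun e he => hone t₀ (hfin.mem_toFinset.1 ht₀) e he)]
      rw [Finset.sum_const, nsmul_eq_mul, mul_one]
    have h2 : (F.image φ).card = (ProjJoin E R S).ncard := by
      rw [Finset.card_image_of_injective _ hφinj, hF,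
        Set.ncard_eq_toFinset_card _ hfin]
    calc ((ProjJoin E R S).ncard : ℝ≥0∞) = ∑ t ∈ F.image φ, ∏ e ∈ E, f e t := by
          rw [h1, h2]
      _ ≤ ∑ t ∈ agmGrid B S, ∏ e ∈ E, f e t := Finset.sum_le_sum_of_subset himgsub
  have hRHS : ∏ e ∈ E, (∑ s ∈ agmGrid B (e ∩ S), f e s ^ (1 / x e)) ^ (x e)
      ≤ ∏ e ∈ E, ((R e).card : ℝ≥0∞) ^ (x e) := by
    refine Finset.prod_le_prod' fun e he => ?_
    rcases eq_or_ne (x e) 0 with hx | hx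
    · rw [hx, ENNReal.rpow_zero, ENNReal.rpow_zero]
    · have hxpos : 0 < x e := lt_of_le_of_ne (hx0 e he) (Ne.symm hx)
      refine ENNReal.rpow_le_rpow ?_ (hx0 e he)
      have hindic : ∀ s, f e s ^ (1 / x e) = f e s := by
        intro s
        rw [hf]
        simp only
        split
        · exact ENNReal.one_rpow _
        · exact ENNReal.zero_rpow_of_pos (by positivity)
      rw [Finset.sum_congr rfl fun s _ => hindic s]
      rw [hf]
      simp only
      rw [Finset.sum_boole]
      set ψ : ({v // v ∈ e} → ℕ) → (V → ℕ) := fun r w =>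
        if h : w ∈ e ∧ w ∈ S then r ⟨w, h.1⟩ else 0 with hψ
      have hss : (agmGrid B (e ∩ S)).filter
          (fun s => ∃ r ∈ R e, ∀ (w : V) (hw : w ∈ e), w ∈ S → s w = r ⟨w, hw⟩)
            ⊆ (R e).image ψ := by
        intro s hs
        rw [Finset.mem_filter] at hs
        obtain ⟨hgrid, r, hr, hmatch⟩ := hs
        refine Finset.mem_image.2 ⟨r, hr, ?_⟩
        funext w
        rw [hψ]
        simp only
        by_cases h : w ∈ e ∧ w ∈ S
        · rw [dif_pos h]
          exact (hmatch w h.1 h.2).symm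
        · rw [dif_neg h]
          exact (agmGrid_zero hgrid (fun hmem => h (Finset.mem_inter.1 hmem))).symm
      have := le_trans (Finset.card_le_card hss) Finset.card_image_le
      exact_mod_cast Nat.cast_le.2 this
  have hEN : ((ProjJoin E R S).ncard : ℝ≥0∞) ≤ ∏ e ∈ E, ((R e).card : ℝ≥0∞) ^ (x e) :=
    le_trans hcard (le_trans (agm_main E x hx0 B S hxcover f hdep hle) hRHS)
  have hfinprod : ∏ e ∈ E, ((R e).card : ℝ≥0∞) ^ (x e) ≠ ⊤ := by
    refine (ENNReal.prod_lt_top ?_).ne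
    intro e he
    exact (ENNReal.rpow_ne_top_of_nonneg (hx0 e he) (ENNReal.natCast_ne_top _)).lt_top
  have h1 : ((ProjJoin E R S).ncard : ℝ) ≤ ∏ e ∈ E, ((R e).card : ℝ) ^ (x e) := by
    have hmono := ENNReal.toReal_mono hfinprod hEN
    rw [ENNReal.toReal_natCast, ENNReal.toReal_prod] at hmono
    refine le_trans hmono (le_of_eq ?_)
    refine Finset.prod_congr rfl fun e _ => ?_
    rw [← ENNReal.toReal_rpow, ENNReal.toReal_natCast]
  refine ⟨h1, fun N hN hcards => h1.trans ?_⟩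
  calc ∏ e ∈ E, ((R e).card : ℝ) ^ (x e)
      ≤ ∏ e ∈ E, (N : ℝ) ^ (x e) :=
        Finset.prod_le_prod (fun e _ => Real.rpow_nonneg (Nat.cast_nonneg _) _)
          (fun e he => Real.rpow_le_rpow (Nat.cast_nonneg _)
            (Nat.cast_le.2 (hcards e he)) (hx0 e he))
    _ = (N : ℝ) ^ (∑ e ∈ E, x e) := by
        rw [Real.rpow_sum_of_pos (by exact_mod_cast hN.trans_lt' Nat.zero_lt_one) x E]

end
end
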